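/- arXiv:0812.1542 — 6 statements merged into one kernel-verified Lean document; each statement's English description precedes it below -/
import Mathlib

section
/- For positive integers k ≥ 3 and m < ⌊k/2⌋, the chromatic number of the m-th power of the cycle C_k equals ⌈k / ⌊k/(m+1)⌋⌉. -/
open SimpleGraph

/-- The `m`-th power of a graph `G`: two distinct vertices are adjacent iff
their distance in `G` is at most `m` (and they are connected). -/
def SimpleGraph.power {V : Type*} (G : SimpleGraph V) (m : ℕ) : SimpleGraph V where
  Adj x y := x ≠ y ∧ G.Reachable x y ∧ G.dist x y ≤ m
  symm := ⟨fun x y => by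
    rintro ⟨h1, h2, h3⟩
    exact ⟨h1.symm, h2.symm, by rwa [SimpleGraph.dist_comm]⟩⟩
  loopless := ⟨fun x => by simp⟩

/-- The `n`-subdivision of a graph `G`: every edge is replaced by a path of
length `n`.  Terminal vertices are `Sum.inl` vertices; each edge `e` carries
`n - 1` internal vertices `Sum.inr (e, i)`, `i : Fin (n-1)`, ordered along a
fixed orientation of `e`. -/
def SimpleGraph.subdivision {V : Type*} (G : SimpleGraph V) (n : ℕ) :
    SimpleGraph (V ⊕ (G.edgeSet × Fin (n - 1))) where
  Adj x y :=
    match x, y with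
    | Sum.inl u, Sum.inl v => n = 1 ∧ G.Adj u v
    | Sum.inl u, Sum.inr (e, i) =>
        (u = (Quot.out e.1).1 ∧ (i : ℕ) = 0) ∨
        (u = (Quot.out e.1).2 ∧ (i : ℕ) = n - 2)
    | Sum.inr (e, i), Sum.inl v =>
        (v = (Quot.out e.1).1 ∧ (i : ℕ) = 0) ∨
        (v = (Quot.out e.1).2 ∧ (i : ℕ) = n - 2)
    | Sum.inr (e, i), Sum.inr (f, j) =>
        e = f ∧ ((i : ℕ) + 1 = (j : ℕ) ∨ (j : ℕ) + 1 = (i : ℕ))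
  symm := ⟨fun x y => by
    rcases x with u | ⟨e, i⟩ <;> rcases y with v | ⟨f, j⟩ <;>
      simp only [] <;> intro h
    · exact ⟨h.1, h.2.symm⟩
    · exact h
    · exact h
    · obtain ⟨rfl, h2⟩ := h; exact ⟨rfl, h2.symm⟩⟩
  loopless := ⟨fun x => by
    rcases x with u | ⟨e, i⟩ <;> simp only []
    · rintro ⟨-, h⟩; exact G.loopless.irrefl u h
    · rintro ⟨-, h | h⟩ <;> omega⟩

section CycleDist
variable {n : ℕ}

lemma sub_val_cases {k : ℕ} (x y : Fin k) :
    ((y - x).val = y.val - x.val ∧ x.val ≤ y.val) ∨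
    ((y - x).val = y.val + k - x.val ∧ y.val < x.val) := by
  rcases le_or_gt x.val y.val with h | h
  · left
    refine ⟨?_, h⟩
    rw [Fin.sub_def]
    have hy := y.isLt
    have hx := x.isLt
    have : k - x.val + y.val = k + (y.val - x.val) := by omega
    simp only []
    rw [this, Nat.add_mod_left]
    exact Nat.mod_eq_of_lt (by omega)
  · right
    refine ⟨?_, h⟩
    rw [Fin.sub_def]
    have hy := y.isLt
    have : k - x.val + y.val = y.val + k - x.val := by omega
    simp only []
    rw [this]
    exact Nat.mod_eq_of_lt (by omega)

/-- Circular distance on `Fin k`. -/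
def circDist {k : ℕ} (x y : Fin k) : ℕ := min (y - x).val (x - y).val

lemma circDist_step {a b v : Fin (n + 3)} (hab : (cycleGraph (n + 3)).Adj a b) :
    circDist a v ≤ circDist b v + 1 := by
  rw [cycleGraph_adj'] at hab
  have h1 := sub_val_cases a b
  have h2 := sub_val_cases b a
  have h3 := sub_val_cases a v
  have h4 := sub_val_cases v a
  have h5 := sub_val_cases b v
  have h6 := sub_val_cases v b
  have := a.isLt; have := b.isLt; have := v.isLt
  unfold circDist
  omega

lemma cycle_connected : (cycleGraph (n + 3)).Connected := cycleGraph_connected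

lemma circDist_le_dist (u v : Fin (n + 3)) :
    circDist u v ≤ (cycleGraph (n + 3)).dist u v := by
  obtain ⟨p, hp⟩ := (cycle_connected u v).exists_walk_length_eq_dist
  rw [← hp]
  clear hp
  induction p with
  | nil => simp [circDist, Fin.sub_def]
  | @cons a b c h p ih =>
      calc circDist a c ≤ circDist b c + 1 := circDist_step h
      _ ≤ p.length + 1 := by omega
      _ = (SimpleGraph.Walk.cons h p).length := by simp [SimpleGraph.Walk.length_cons]

lemma dist_le_sub (u v : Fin (n + 3)) :
    (cycleGraph (n + 3)).dist u v ≤ (v - u).val := by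
  set j := (v - u).val with hj
  clear_value j
  induction j generalizing v with
  | zero =>
      have : v = u := by
        rcases sub_val_cases u v with ⟨h1, h2⟩ | ⟨h1, h2⟩ <;>
          (have := v.isLt; have := u.isLt; exact Fin.ext (by omega))
      rw [this, SimpleGraph.dist_self]
  | succ j ih =>
      have hv1 : ((v - 1 : Fin (n+3)) - u).val = j := by
        have h1 : (v - 1 - u) = (v - u) - 1 := sub_right_comm _ _ _
        have hval1 : (1 : Fin (n + 3)).val = 1 := rfl
        rcases sub_val_cases (1 : Fin (n+3)) (v - u) with ⟨h2, h3⟩ | ⟨h2, h3⟩ <;>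
          rw [h1] <;> omega
      have hadj : (cycleGraph (n + 3)).Adj (v - 1) v := by
        rw [cycleGraph_adj']
        right
        have : v - (v - 1) = 1 := sub_sub_cancel _ _
        rw [this]
        rfl
      have htri := (cycle_connected (n := n)).dist_triangle (u := u) (v := v - 1) (w := v)
      have hle : (cycleGraph (n + 3)).dist (v - 1) v ≤ 1 :=
        SimpleGraph.dist_le (SimpleGraph.Walk.cons hadj SimpleGraph.Walk.nil)
      have := ih (v - 1) hv1.symm
      omega

lemma power_adj_iff (m : ℕ) (x y : Fin (n + 3)) :
    ((cycleGraph (n + 3)).power m).Adj x y ↔ x ≠ y ∧ circDist x y ≤ m := by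
  constructor
  · rintro ⟨h1, h2, h3⟩
    exact ⟨h1, le_trans (circDist_le_dist x y) h3⟩
  · rintro ⟨h1, h2⟩
    refine ⟨h1, (cycle_connected x y), ?_⟩
    have ha := dist_le_sub x y
    have hb := dist_le_sub y x
    have hc : (cycleGraph (n+3)).dist y x = (cycleGraph (n+3)).dist x y :=
      SimpleGraph.dist_comm
    unfold circDist at h2
    omega

end CycleDist

-- step lemmas
lemma step1 {e a b : ℕ} (he : 0 < e) (hab : a < b) (h : a % e = b % e) : a + e ≤ b := by
  have hmod : Nat.ModEq e a b := h
  obtain ⟨c, hc⟩ := (Nat.modEq_iff_dvd' hab.le).mp hmod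
  have hc0 : 0 < c := by
    rcases Nat.eq_zero_or_pos c with rfl | h'
    · simp at hc; omega
    · exact h'
  have h5 : e ≤ e * c := Nat.le_mul_of_pos_right _ hc0
  have h6 : e ≤ b - a := hc ▸ h5
  omega

lemma step2 {e a S : ℕ} (he : 0 < e) (hdvd : e ∣ S) (ha : a < S) : a + e ≤ S + a % e := by
  obtain ⟨c, rfl⟩ := hdvd
  have h1 : e * (a / e) + a % e = a := Nat.div_add_mod a e
  have h2 : a / e < c := Nat.div_lt_of_lt_mul ha
  have h3 : e * (a / e + 1) ≤ e * c := Nat.mul_le_mul_left e h2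
  calc a + e = e * (a / e + 1) + a % e := by nth_rewrite 1 [← h1]; ring
  _ ≤ e * c + a % e := by omega

lemma step4 {e X T : ℕ} (hX : e ∣ X) (hT : e ∣ T) (hlt : X < T) : X + e ≤ T := by
  have hd : e ∣ T - X := Nat.dvd_sub hT hX
  have := Nat.le_of_dvd (by omega) hd
  omega

/-- block coloring function -/
def colorFun (d S i : ℕ) : ℕ := if i < S then i % (d + 1) else (i - S) % d

lemma colorFun_gap {d S T k a b : ℕ} (hd : 0 < d) (hS : (d + 1) ∣ S) (hT : d ≤ T)
    (hdT : d ∣ T) (hk : k = S + T) (hab : a < b) (hbk : b < k)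
    (hf : colorFun d S a = colorFun d S b) : a + d ≤ b ∧ b + d ≤ k + a := by
  unfold colorFun at hf
  rcases lt_or_ge b S with hbS | hbS
  · -- both below S
    have haS : a < S := lt_trans hab hbS
    rw [if_pos haS, if_pos hbS] at hf
    have h1 := step1 (e := d + 1) (by omega) hab hf
    constructor
    · omega
    · omega
  · rcases lt_or_ge a S with haS | haS
    · -- a below, b above
      rw [if_pos haS, if_neg (by omega)] at hf
      have hp : (b - S) % d < d := Nat.mod_lt _ hd
      have hpa : a % (d+1) ≤ a := Nat.mod_le _ _
      have h2 := step2 (e := d + 1) (by omega) hS haS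
      have h3 : (b - S) % d ≤ b - S := Nat.mod_le _ _
      have h4 := step2 (e := d) hd hdT (show b - S < T by omega)
      omega
    · -- both above S
      rw [if_neg (by omega), if_neg (by omega)] at hf
      have h1 := step1 (e := d) hd (show a - S < b - S by omega) hf
      have hmod : (b - S) % d = (a - S) % d := hf.symm
      have hd1 : d ∣ (b - S) - (a - S) := (Nat.modEq_iff_dvd' (by omega)).mp hmod.symm
      have h4 := step4 (e := d) hd1 hdT (show (b - S) - (a - S) < T by omega)
      omega

lemma colorable_upper (n m : ℕ) (hm : 0 < m) (hmk : m < (n + 3) / 2) :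
    ((cycleGraph (n + 3)).power m).Colorable ((n + 3) ⌈/⌉ ((n + 3) / (m + 1))) := by
  set k := n + 3 with hk
  set q := k / (m + 1) with hq
  set c := k ⌈/⌉ q with hc
  set d := k / q with hd
  set s := k % q with hs
  have hq2 : 2 ≤ q := by
    rw [hq, Nat.le_div_iff_mul_le (by omega)]
    omega
  have hq0 : 0 < q := by omega
  have hsq : s < q := Nat.mod_lt _ hq0
  have hdm : m + 1 ≤ d := by
    rw [hd, Nat.le_div_iff_mul_le hq0]
    calc (m + 1) * q = q * (m+1) := by ring
    _ ≤ k := Nat.div_mul_le_self k (m + 1)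
  have hd0 : 0 < d := by omega
  have hdk : q * d + s = k := Nat.div_add_mod k q
  have hdc : d ≤ c := by
    rw [hc, Nat.ceilDiv_eq_add_pred_div, hd]
    exact Nat.div_le_div_right (by omega)
  have hdc1 : 0 < s → d + 1 ≤ c := by
    intro hs0
    rw [hc, Nat.ceilDiv_eq_add_pred_div]
    have h1 : q * d / q = d := Nat.mul_div_cancel_left d hq0
    have h2 : (q * d + q) / q = d + 1 := by
      rw [Nat.add_div_right _ hq0, h1]
    calc d + 1 = (q * d + q) / q := h2.symm
    _ ≤ (k + q - 1) / q := Nat.div_le_div_right (by omega)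
  -- k = S + T decomposition
  obtain ⟨t, ht⟩ : ∃ t, q = s + t := ⟨q - s, by omega⟩
  have ht1 : 1 ≤ t := by omega
  have hkST : k = s * (d + 1) + (q - s) * d := by
    rw [ht, Nat.add_sub_cancel_left, ← hdk, ht]; ring
  have hTd : d ≤ (q - s) * d := by
    calc d = 1 * d := (one_mul d).symm
    _ ≤ (q - s) * d := Nat.mul_le_mul_right d (by omega)
  -- the coloring
  have hbound : ∀ i : Fin k, colorFun d (s * (d + 1)) i.val < c := by
    intro i
    unfold colorFun
    split_ifs with h
    · have hs0 : 0 < s := by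
        rcases Nat.eq_zero_or_pos s with h' | h'
        · rw [h'] at h; simp at h
        · exact h'
      have := Nat.mod_lt i.val (show 0 < d + 1 by omega)
      have := hdc1 hs0
      omega
    · have := Nat.mod_lt (i.val - s * (d+1)) hd0
      omega
  refine ⟨Coloring.mk (fun x => ⟨colorFun d (s * (d + 1)) x.val, hbound x⟩) ?_⟩
  intro x y hadj hEq
  rw [power_adj_iff] at hadj
  obtain ⟨hne, hcd⟩ := hadj
  have hfeq : colorFun d (s * (d + 1)) x.val = colorFun d (s * (d + 1)) y.val :=
    congrArg Fin.val hEq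
  have hvne : x.val ≠ y.val := fun h => hne (Fin.ext h)
  have key : ∀ a b : Fin k, a.val < b.val →
      colorFun d (s * (d + 1)) a.val = colorFun d (s * (d + 1)) b.val →
      circDist a b ≤ m → False := by
    intro a b hab hfab hcdab
    have hgap := colorFun_gap hd0 (Dvd.intro_left s rfl) hTd
      (Dvd.intro_left _ rfl) hkST hab b.isLt hfab
    rcases sub_val_cases a b with ⟨e1, e2⟩ | ⟨e1, e2⟩
    · rcases sub_val_cases b a with ⟨e3, e4⟩ | ⟨e3, e4⟩
      · omega
      · unfold circDist at hcdab; omega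
    · omega
  rcases lt_trichotomy x.val y.val with h | h | h
  · exact key x y h hfeq hcd
  · exact hvne h
  · have : circDist y x ≤ m := by unfold circDist at *; omega
    exact key y x h hfeq.symm this

lemma indep_card_le (n m : ℕ) (hmk : m < (n + 3) / 2) (S : Finset (Fin (n + 3)))
    (hind : ∀ x ∈ S, ∀ y ∈ S, x ≠ y → ¬ ((cycleGraph (n + 3)).power m).Adj x y) :
    S.card ≤ (n + 3) / (m + 1) := by
  have hq1 : 1 ≤ (n + 3) / (m + 1) := by
    rw [Nat.le_div_iff_mul_le (by omega)]
    omega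
  -- pairwise circular separation
  have hsep : ∀ x ∈ S, ∀ y ∈ S, x.val < y.val →
      m + 1 ≤ y.val - x.val ∧ m + 1 ≤ x.val + (n + 3) - y.val := by
    intro x hx y hy hxy
    have hne : x ≠ y := fun h => by rw [h] at hxy; omega
    have hnadj := hind x hx y hy hne
    rw [power_adj_iff] at hnadj
    have hcd : m + 1 ≤ circDist x y := by
      by_contra h
      exact hnadj ⟨hne, by omega⟩
    rcases sub_val_cases x y with ⟨e1, e2⟩ | ⟨e1, e2⟩
    · rcases sub_val_cases y x with ⟨e3, e4⟩ | ⟨e3, e4⟩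
      · omega
      · unfold circDist at hcd; omega
    · omega
  rcases Nat.lt_or_ge S.card 2 with hp2 | hp2
  · omega
  -- monotone enumeration
  let f := S.orderIsoOfFin rfl
  have hmono : ∀ i j : Fin S.card, i < j → (f i : Fin (n + 3)).val < (f j : Fin (n + 3)).val := by
    intro i j hij
    exact f.strictMono hij
  have hstep : ∀ i j : Fin S.card, i < j →
      (f i : Fin (n + 3)).val + (m + 1) ≤ (f j : Fin (n + 3)).val := by
    intro i j hij
    have h1 := hmono i j hij
    have h2 := (hsep (f i) (f i).2 (f j) (f j).2 h1).1
    omega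
  have hchain : ∀ j : ℕ, (hj : j < S.card) →
      (f ⟨0, by omega⟩ : Fin (n + 3)).val + j * (m + 1) ≤ (f ⟨j, hj⟩ : Fin (n + 3)).val := by
    intro j
    induction j with
    | zero => intro hj; simp
    | succ i ih =>
        intro hj
        have h1 := ih (by omega)
        have h2 := hstep ⟨i, by omega⟩ ⟨i + 1, hj⟩ (by simp [Fin.lt_def])
        have : (i + 1) * (m + 1) = i * (m + 1) + (m + 1) := by ring
        omega
  have hlast := hchain (S.card - 1) (by omega)
  have hfirstlast := hsep (f ⟨0, by omega⟩) (f ⟨0, by omega⟩).2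
    (f ⟨S.card - 1, by omega⟩) (f ⟨S.card - 1, by omega⟩).2
    (hmono ⟨0, by omega⟩ ⟨S.card - 1, by omega⟩ (by simp [Fin.lt_def]; omega))
  have hlt := (f ⟨S.card - 1, by omega⟩ : Fin (n + 3)).isLt
  have hmul : S.card * (m + 1) = (S.card - 1) * (m + 1) + (m + 1) := by
    have h : S.card = (S.card - 1) + 1 := by omega
    nth_rewrite 1 [h]
    ring
  rw [Nat.le_div_iff_mul_le (by omega)]
  omega

theorem cycle_power_chromatic_small (k m : ℕ) (hk : 3 ≤ k) (hm : 0 < m)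
    (hmk : m < k / 2) :
    ((cycleGraph k).power m).chromaticNumber = ((k ⌈/⌉ (k / (m + 1)) : ℕ) : ℕ∞) := by
  obtain ⟨n, rfl⟩ : ∃ n, k = n + 3 := ⟨k - 3, by omega⟩
  set K := n + 3 with hK
  set q := K / (m + 1) with hq
  set c := K ⌈/⌉ q with hc
  have hq1 : 1 ≤ q := by
    rw [hq, Nat.le_div_iff_mul_le (by omega)]
    omega
  have hcol : ((cycleGraph K).power m).Colorable c := colorable_upper n m hm hmk
  have hlower : ∀ N : ℕ, ((cycleGraph K).power m).Colorable N → c ≤ N := by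
    intro N hN
    obtain ⟨C⟩ := hN
    have hcard : (Finset.univ : Finset (Fin K)).card =
        ∑ j : Fin N, (Finset.univ.filter fun x => C x = j).card := by
      exact Finset.card_eq_sum_card_fiberwise (fun x _ => Finset.mem_univ (C x))
    have hfiber : ∀ j : Fin N, (Finset.univ.filter fun x => C x = j).card ≤ q := by
      intro j
      apply indep_card_le n m hmk
      intro x hx y hy hxy hadj
      simp only [Finset.mem_filter] at hx hy
      exact C.valid hadj (hx.2.trans hy.2.symm)
    have hsum : ∑ j : Fin N, (Finset.univ.filter fun x => C x = j).card ≤ N * q := by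
      calc ∑ j : Fin N, (Finset.univ.filter fun x => C x = j).card
          ≤ (Finset.univ : Finset (Fin N)).card • q :=
            Finset.sum_le_card_nsmul _ _ q (fun j _ => hfiber j)
      _ = N * q := by simp [smul_eq_mul]
    have hKle : K ≤ N * q := by
      have : (Finset.univ : Finset (Fin K)).card = K := by simp
      omega
    rw [hc, Nat.ceilDiv_eq_add_pred_div]
    rw [Nat.div_le_iff_le_mul_add_pred (by omega)]
    calc K + q - 1 ≤ N * q + q - 1 := by omega
    _ ≤ q * N + (q - 1) := by have : N * q = q * N := by ring
                              omega
  rw [hcol.chromaticNumber_eq_sInf]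
  norm_cast
  refine le_antisymm (Nat.sInf_le hcol) (le_csInf ⟨c, hcol⟩ ?_)
  intro N hN
  exact hlower N hN
end

section
/- For positive integers k and m, the chromatic number of the m-th power of the path P_k on k vertices equals min{m+1, k}. -/
open SimpleGraph

open SimpleGraph

lemma walk_length_ge {k : ℕ} {i j : Fin k} (w : (pathGraph k).Walk i j) :
    Nat.dist i.val j.val ≤ w.length := by
  induction w with
  | nil => simp [Nat.dist_self]
  | @cons a b c h p ih =>
    have hd : Nat.dist a.val b.val = 1 := by
      rw [pathGraph_adj] at h
      rcases h with h | h <;> simp [Nat.dist] <;> omega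
    calc Nat.dist a.val c.val ≤ Nat.dist a.val b.val + Nat.dist b.val c.val :=
          Nat.dist.triangle_inequality _ _ _
      _ ≤ 1 + p.length := by rw [hd]; exact Nat.add_le_add_left ih 1
      _ = (SimpleGraph.Walk.cons h p).length := by simp [Nat.add_comm]

lemma exists_walk_of_le {k : ℕ} (d : ℕ) : ∀ (i j : Fin k), i.val + d = j.val →
    ∃ w : (pathGraph k).Walk i j, w.length = d := by
  induction d with
  | zero => intro i j h; have : i = j := Fin.ext (by omega); subst this; exact ⟨.nil, rfl⟩
  | succ n ih =>
    intro i j h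
    have hlt : i.val + 1 < k := by omega
    set i' : Fin k := ⟨i.val + 1, by omega⟩ with hi'
    have hadj : (pathGraph k).Adj i i' := by rw [pathGraph_adj]; left; rfl
    obtain ⟨w, hw⟩ := ih i' j (by simp [hi']; omega)
    exact ⟨.cons hadj w, by simp [hw]⟩

lemma path_dist_le {k : ℕ} (i j : Fin k) : (pathGraph k).dist i j ≤ Nat.dist i.val j.val := by
  rcases le_total i.val j.val with h | h
  · obtain ⟨w, hw⟩ := exists_walk_of_le (j.val - i.val) i j (by omega)
    calc (pathGraph k).dist i j ≤ w.length := dist_le w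
      _ = Nat.dist i.val j.val := by rw [hw, Nat.dist]; omega
  · obtain ⟨w, hw⟩ := exists_walk_of_le (i.val - j.val) j i (by omega)
    rw [SimpleGraph.dist_comm]
    calc (pathGraph k).dist j i ≤ w.length := dist_le w
      _ = Nat.dist i.val j.val := by rw [hw, Nat.dist]; omega

lemma path_reachable {k : ℕ} (i j : Fin k) : (pathGraph k).Reachable i j := by
  rcases le_total i.val j.val with h | h
  · obtain ⟨w, _⟩ := exists_walk_of_le (j.val - i.val) i j (by omega)
    exact ⟨w⟩
  · obtain ⟨w, _⟩ := exists_walk_of_le (i.val - j.val) j i (by omega)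
    exact Reachable.symm ⟨w⟩

lemma path_dist_ge {k : ℕ} (i j : Fin k) : Nat.dist i.val j.val ≤ (pathGraph k).dist i j := by
  obtain ⟨w, hw⟩ := (path_reachable i j).exists_walk_length_eq_dist
  rw [← hw]; exact walk_length_ge w
theorem path_power_chromatic (k m : ℕ) (hk : 0 < k) (hm : 0 < m) :
    ((pathGraph k).power m).chromaticNumber = ((min (m + 1) k : ℕ) : ℕ∞) := by
  set G := (pathGraph k).power m with hG
  set n := min (m + 1) k with hn
  have hn0 : 0 < n := by omega
  have hnk : n ≤ k := min_le_right _ _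
  have hadj : ∀ i j : Fin k, G.Adj i j ↔ i ≠ j ∧ Nat.dist i.val j.val ≤ m := by
    intro i j
    constructor
    · rintro ⟨h1, h2, h3⟩
      exact ⟨h1, le_trans (path_dist_ge i j) h3⟩
    · rintro ⟨h1, h2⟩
      exact ⟨h1, path_reachable i j, le_trans (path_dist_le i j) h2⟩
  have key : ∀ a b : ℕ, a < b → a % n = b % n → Nat.dist a b < n → False := by
    intro a b hab hmod hd
    have hdvd : n ∣ b - a := (Nat.modEq_iff_dvd' hab.le).mp hmod
    have := Nat.le_of_dvd (by omega) hdvd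
    simp only [Nat.dist] at hd; omega
  have hcol : G.Colorable n := by
    refine ⟨⟨fun i => ⟨i.val % n, Nat.mod_lt _ hn0⟩, ?_⟩⟩
    intro i j hij heq
    rw [hadj] at hij
    obtain ⟨h1, h2⟩ := hij
    have hmod : i.val % n = j.val % n := by
      simpa using congrArg Fin.val heq
    have hdlt : Nat.dist i.val j.val < n := by
      have hik := i.isLt; have hjk := j.isLt
      simp only [Nat.dist] at h2 ⊢
      omega
    rcases Nat.lt_trichotomy i.val j.val with h | h | h
    · exact key _ _ h hmod hdlt
    · exact h1 (Fin.ext h)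
    · exact key _ _ h hmod.symm (by rwa [Nat.dist_comm])
  refine le_antisymm (hcol.chromaticNumber_le) ?_
  have hclique : G.IsClique (Finset.univ.map (Fin.castLEEmb hnk) : Finset (Fin k)) := by
    intro a ha b hb hne
    simp only [Finset.coe_map, Finset.coe_univ, Set.image_univ, Set.mem_range] at ha hb
    obtain ⟨x, rfl⟩ := ha
    obtain ⟨y, rfl⟩ := hb
    rw [hadj]
    refine ⟨hne, ?_⟩
    have hx := x.isLt; have hy := y.isLt
    simp only [Fin.castLEEmb, Function.Embedding.coeFn_mk, Fin.coe_castLE, Nat.dist]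
    omega
  have := hclique.card_le_chromaticNumber
  simpa using this
end

section
/- Let G be a graph with maximum degree Δ ≥ 2 and let m < n be positive integers with m even. Then the clique number of G^{m/n} equals (m/2)·Δ + 1. -/
open SimpleGraph

namespace FracPow

variable {V : Type*} {G : SimpleGraph V} {n : ℕ}

open Classical in
/-- potential centered at original vertex `w`. -/
noncomputable def phi (G : SimpleGraph V) (n : ℕ) (w : V) :
    (V ⊕ (G.edgeSet × Fin (n - 1))) → ℕ
  | Sum.inl u => if u = w then 0 else n
  | Sum.inr (e, i) =>
      if w = (Quot.out e.1).1 then (i : ℕ) + 1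
      else if w = (Quot.out e.1).2 then n - 1 - (i : ℕ)
      else n

lemma edge_ne {e : G.edgeSet} : (Quot.out e.1).1 ≠ (Quot.out e.1).2 := by
  intro h
  have he : e.1 ∈ G.edgeSet := e.2
  have : Quot.mk _ (Quot.out e.1) = e.1 := Quot.out_eq e.1
  rw [← this] at he
  have : G.Adj (Quot.out e.1).1 (Quot.out e.1).2 := he
  exact G.loopless.irrefl _ (h ▸ this)

lemma mem_iff_out {e : G.edgeSet} {w : V} :
    w ∈ e.1 ↔ w = (Quot.out e.1).1 ∨ w = (Quot.out e.1).2 := by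
  conv_lhs => rw [← Quot.out_eq e.1]
  exact Sym2.mem_iff

open Classical in
lemma phi_inl (w u : V) : phi G n w (Sum.inl u) = if u = w then 0 else n := rfl

open Classical in
lemma phi_inr (w : V) (e : G.edgeSet) (i : Fin (n-1)) :
    phi G n w (Sum.inr (e, i)) =
      if w = (Quot.out e.1).1 then (i : ℕ) + 1
      else if w = (Quot.out e.1).2 then n - 1 - (i : ℕ)
      else n := rfl

lemma phi_lip (hn : 3 ≤ n) {w : V} {x y : V ⊕ (G.edgeSet × Fin (n - 1))}
    (h : (G.subdivision n).Adj x y) : phi G n w x ≤ phi G n w y + 1 := by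
  rcases x with u | ⟨e, i⟩ <;> rcases y with v | ⟨f, j⟩
  · exact absurd h.1 (by omega)
  · have hne : (Quot.out f.1).1 ≠ (Quot.out f.1).2 := edge_ne (e := f)
    have hj2 : (j : ℕ) < n - 1 := j.2
    rw [phi_inl, phi_inr]
    rcases h with ⟨rfl, hj⟩ | ⟨rfl, hj⟩
    · rcases eq_or_ne w (Quot.out f.1).1 with hw | hw
      · rw [if_pos hw.symm]; exact Nat.zero_le _
      · rw [if_neg (fun h => hw h.symm), if_neg hw]
        split_ifs <;> omega
    · rcases eq_or_ne w (Quot.out f.1).2 with hw | hw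
      · rw [if_pos hw.symm]; exact Nat.zero_le _
      · rw [if_neg (fun h => hw h.symm)]
        rcases eq_or_ne w (Quot.out f.1).1 with h1 | h1
        · rw [if_pos h1]; omega
        · rw [if_neg h1, if_neg hw]; omega
  · have hne : (Quot.out e.1).1 ≠ (Quot.out e.1).2 := edge_ne (e := e)
    have hi2 : (i : ℕ) < n - 1 := i.2
    rw [phi_inl, phi_inr]
    rcases h with ⟨rfl, hi⟩ | ⟨rfl, hi⟩
    · rcases eq_or_ne w (Quot.out e.1).1 with hw | hw
      · rw [if_pos hw, if_pos hw.symm]; omega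
      · rw [if_neg hw, if_neg (show ¬((Quot.out e.1).1 = w) from fun h => hw h.symm)]
        split_ifs <;> omega
    · rcases eq_or_ne w (Quot.out e.1).2 with hw | hw
      · rw [if_neg (fun h => hne (h.symm.trans hw)), if_pos hw, if_pos hw.symm]
        omega
      · rw [if_neg (show ¬((Quot.out e.1).2 = w) from fun h => hw h.symm)]
        split_ifs <;> omega
  · obtain ⟨rfl, hj⟩ := h
    rw [phi_inr, phi_inr]
    have hi2 : (i : ℕ) < n - 1 := i.2
    have hj2 : (j : ℕ) < n - 1 := j.2
    split_ifs <;> omega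

lemma phi_walk (hn : 3 ≤ n) {w : V} {x y : V ⊕ (G.edgeSet × Fin (n - 1))}
    (p : (G.subdivision n).Walk x y) : phi G n w x ≤ phi G n w y + p.length := by
  induction p with
  | nil => simp
  | cons h q ih =>
    have := phi_lip (w := w) hn h
    simp only [SimpleGraph.Walk.length_cons]
    omega

open Classical in
lemma phi_inr_fst (e : G.edgeSet) (i : Fin (n-1)) :
    phi G n (Quot.out e.1).1 (Sum.inr (e, i)) = (i : ℕ) + 1 := by
  rw [phi_inr, if_pos rfl]

open Classical in
lemma phi_inr_snd (e : G.edgeSet) (i : Fin (n-1)) :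
    phi G n (Quot.out e.1).2 (Sum.inr (e, i)) = n - 1 - (i : ℕ) := by
  rw [phi_inr, if_neg (Ne.symm (edge_ne (e := e))), if_pos rfl]

open Classical in
lemma phi_inr_notmem {w : V} {e : G.edgeSet} (hw : w ∉ e.1) (i : Fin (n-1)) :
    phi G n w (Sum.inr (e, i)) = n := by
  rw [mem_iff_out] at hw
  push_neg at hw
  rw [phi_inr, if_neg hw.1, if_neg hw.2]

lemma phi_inl_self (w : V) : phi G n w (Sum.inl w) = 0 := by
  rw [phi_inl, if_pos rfl]

lemma phi_inl_ne {u w : V} (h : u ≠ w) : phi G n w (Sum.inl u) = n := by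
  rw [phi_inl, if_neg h]

open Classical in
lemma phi_inr_pos (hn : 3 ≤ n) (w : V) (e : G.edgeSet) (i : Fin (n-1)) :
    1 ≤ phi G n w (Sum.inr (e, i)) := by
  have hi2 : (i : ℕ) < n - 1 := i.2
  rw [phi_inr]; split_ifs <;> omega

lemma phi_inr_inj (hn : 3 ≤ n) {w : V} {e : G.edgeSet} (hw : w ∈ e.1)
    {i j : Fin (n-1)}
    (h : phi G n w (Sum.inr (e, i)) = phi G n w (Sum.inr (e, j))) : i = j := by
  have hi2 : (i : ℕ) < n - 1 := i.2
  have hj2 : (j : ℕ) < n - 1 := j.2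
  rcases mem_iff_out.mp hw with rfl | rfl
  · rw [phi_inr_fst, phi_inr_fst] at h
    exact Fin.ext (by omega)
  · rw [phi_inr_snd, phi_inr_snd] at h
    exact Fin.ext (by omega)

lemma phi_endpoint_one (hn : 3 ≤ n) {u : V} {e : G.edgeSet} {i : Fin (n-1)}
    (h : (G.subdivision n).Adj (Sum.inr (e, i)) (Sum.inl u)) :
    u ∈ e.1 ∧ phi G n u (Sum.inr (e, i)) = 1 := by
  rcases h with ⟨rfl, hi⟩ | ⟨rfl, hi⟩
  · exact ⟨mem_iff_out.mpr (Or.inl rfl), by rw [phi_inr_fst]; omega⟩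
  · exact ⟨mem_iff_out.mpr (Or.inr rfl), by rw [phi_inr_snd]; omega⟩

lemma walk_decomp (hn : 3 ≤ n) {x y : V ⊕ (G.edgeSet × Fin (n - 1))}
    (p : (G.subdivision n).Walk x y) :
    ∀ {e f : G.edgeSet} {i j : Fin (n-1)}, e ≠ f →
    x = Sum.inr (e, i) → y = Sum.inr (f, j) →
    (∃ w, w ∈ e.1 ∧ w ∈ f.1 ∧
      phi G n w x + phi G n w y ≤ p.length) ∨ n + 1 ≤ p.length := by
  induction p with
  | nil =>
    rintro e f i j hef rfl hy
    obtain ⟨h1, -⟩ := Prod.mk.injEq .. ▸ (Sum.inr.injEq .. ▸ hy)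
    exact absurd (Subtype.ext (congrArg _ h1)) (by exact fun h => hef (by
      exact Subtype.ext (congrArg Subtype.val h1) ▸ rfl))
  | cons h q ih =>
    rintro e f i j hef rfl rfl
    rename_i z
    rcases z with u | ⟨e', i'⟩
    · -- step into an original vertex u
      obtain ⟨hu, hphi1⟩ := phi_endpoint_one hn h
      have hq : phi G n u (Sum.inr (f, j)) ≤ 0 + q.length := by
        have := phi_walk (w := u) hn q.reverse
        rw [SimpleGraph.Walk.length_reverse] at this
        rw [phi_inl_self] at this
        omega
      by_cases huf : u ∈ f.1
      · exact Or.inl ⟨u, hu, huf, by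
          rw [SimpleGraph.Walk.length_cons]; omega⟩
      · have : phi G n u (Sum.inr (f, j)) = n := phi_inr_notmem huf j
        rw [SimpleGraph.Walk.length_cons]
        omega
    · -- step stays internal: same edge
      obtain ⟨rfl, -⟩ := id h
      rcases ih hef rfl rfl with ⟨w, hw1, hw2, hsum⟩ | hlong
      · refine Or.inl ⟨w, hw1, hw2, ?_⟩
        have := phi_lip (w := w) hn h
        rw [SimpleGraph.Walk.length_cons]
        omega
      · rw [SimpleGraph.Walk.length_cons]; omega

lemma edges_eq_of_two_mem {e f : G.edgeSet} {w a : V} (hwa : w ≠ a)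
    (hw1 : w ∈ e.1) (ha1 : a ∈ e.1) (hw2 : w ∈ f.1) (ha2 : a ∈ f.1) : e = f :=
  Subtype.ext (((Sym2.mem_and_mem_iff hwa).mp ⟨hw1, ha1⟩).trans
    ((Sym2.mem_and_mem_iff hwa).mp ⟨hw2, ha2⟩).symm)

open Classical in
lemma phi_two_endpoints (hn : 3 ≤ n) {w a : V} {e : G.edgeSet}
    (he : e.1 = s(w, a)) (i : Fin (n-1)) :
    phi G n w (Sum.inr (e, i)) + phi G n a (Sum.inr (e, i)) = n := by
  have hi2 : (i : ℕ) < n - 1 := i.2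
  have hout : s((Quot.out e.1).1, (Quot.out e.1).2) = s(w, a) := by
    rw [← he]
    exact Quot.out_eq e.1
  rw [Sym2.eq_iff] at hout
  rcases hout with ⟨h1, h2⟩ | ⟨h1, h2⟩
  · rw [← h1, ← h2, phi_inr_fst, phi_inr_snd]; omega
  · rw [← h1, ← h2, phi_inr_fst, phi_inr_snd]; omega

lemma adj_out (e : G.edgeSet) : G.Adj (Quot.out e.1).1 (Quot.out e.1).2 := by
  have he : e.1 ∈ G.edgeSet := e.2
  conv at he => rw [← Quot.out_eq e.1]
  exact he

/-- walk from the first endpoint to internal vertex `t`, length `t+1`. -/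
lemma exists_walk_fst (hn : 3 ≤ n) (e : G.edgeSet) (t : ℕ) (ht : t < n - 1) :
    ∃ p : (G.subdivision n).Walk (Sum.inl (Quot.out e.1).1) (Sum.inr (e, ⟨t, ht⟩)),
      p.length = t + 1 := by
  induction t with
  | zero =>
    have hadj : (G.subdivision n).Adj (Sum.inl (Quot.out e.1).1)
        (Sum.inr (e, ⟨0, ht⟩)) := Or.inl ⟨rfl, rfl⟩
    exact ⟨SimpleGraph.Walk.cons hadj SimpleGraph.Walk.nil, by simp⟩
  | succ t ih =>
    obtain ⟨p, hp⟩ := ih (by omega)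
    refine ⟨p.concat ?_, ?_⟩
    · exact ⟨rfl, Or.inl rfl⟩
    · exact (SimpleGraph.Walk.length_concat _ _).trans (congrArg (· + 1) hp)

/-- walk from the second endpoint to internal vertex `t`, length `n-1-t`. -/
lemma exists_walk_snd (hn : 3 ≤ n) (e : G.edgeSet) (t : ℕ) (ht : t < n - 1) :
    ∃ p : (G.subdivision n).Walk (Sum.inl (Quot.out e.1).2) (Sum.inr (e, ⟨t, ht⟩)),
      p.length = n - 1 - t := by
  have key : ∀ s : ℕ, s < n - 1 → ∀ (h2 : n - 2 - s < n - 1),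
      ∃ p : (G.subdivision n).Walk (Sum.inl (Quot.out e.1).2)
        (Sum.inr (e, ⟨n - 2 - s, h2⟩)), p.length = s + 1 := by
    intro s hs
    induction s with
    | zero =>
      intro h2
      have hadj : (G.subdivision n).Adj (Sum.inl (Quot.out e.1).2)
          (Sum.inr (e, ⟨n - 2 - 0, h2⟩)) := Or.inr ⟨rfl, by simp⟩
      exact ⟨SimpleGraph.Walk.cons hadj SimpleGraph.Walk.nil, by simp⟩
    | succ s ih =>
      intro h2
      obtain ⟨p, hp⟩ := ih (by omega) (by omega)
      refine ⟨p.concat ?_, ?_⟩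
      · exact ⟨rfl, Or.inr (by simp; omega)⟩
      · exact (SimpleGraph.Walk.length_concat _ _).trans (congrArg (· + 1) hp)
  obtain ⟨p, hp⟩ := key (n - 2 - t) (by omega) (by omega)
  have he : (⟨n - 2 - (n - 2 - t), by omega⟩ : Fin (n-1)) = ⟨t, ht⟩ :=
    Fin.ext (by simp; omega)
  refine ⟨p.copy rfl (by rw [he]), ?_⟩
  rw [SimpleGraph.Walk.length_copy, hp]
  omega

open Classical in
noncomputable def pt (G : SimpleGraph V) (n : ℕ) (w : V) (e : G.edgeSet)
    (k : ℕ) (hk : k < n - 1) : V ⊕ (G.edgeSet × Fin (n - 1)) :=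
  if (Quot.out e.1).1 = w then Sum.inr (e, ⟨k, hk⟩)
  else Sum.inr (e, ⟨n - 2 - k, by omega⟩)

lemma pt_eq_inr (w : V) (e : G.edgeSet) (k : ℕ) (hk : k < n - 1) :
    ∃ i : Fin (n-1), pt G n w e k hk = Sum.inr (e, i) := by
  unfold pt; split_ifs <;> exact ⟨_, rfl⟩

lemma pt_phi (hn : 3 ≤ n) {w : V} {e : G.edgeSet} (hw : w ∈ e.1)
    (k : ℕ) (hk : k < n - 1) : phi G n w (pt G n w e k hk) = k + 1 := by
  unfold pt; split_ifs with h
  · rw [← h, phi_inr_fst]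
  · have hw2 : w = (Quot.out e.1).2 :=
      (mem_iff_out.mp hw).resolve_left (fun hh => h hh.symm)
    subst hw2
    rw [phi_inr_snd]
    simp only []
    omega

lemma pt_walk (hn : 3 ≤ n) {w : V} {e : G.edgeSet} (hw : w ∈ e.1)
    (k : ℕ) (hk : k < n - 1) :
    ∃ p : (G.subdivision n).Walk (Sum.inl w) (pt G n w e k hk),
      p.length = k + 1 := by
  by_cases h : (Quot.out e.1).1 = w
  · rw [pt, if_pos h]
    subst h; exact exists_walk_fst hn e k hk
  · rw [pt, if_neg h]
    have hw2 : w = (Quot.out e.1).2 :=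
      (mem_iff_out.mp hw).resolve_left (fun hh => h hh.symm)
    subst hw2
    obtain ⟨p, hp⟩ := exists_walk_snd hn e (n - 2 - k) (by omega)
    exact ⟨p, by omega⟩

lemma pt_inj (hn : 3 ≤ n) {w : V} {e : G.edgeSet} (hw : w ∈ e.1)
    {k k' : ℕ} {hk : k < n - 1} {hk' : k' < n - 1}
    (h : pt G n w e k hk = pt G n w e k' hk') : k = k' := by
  have := congrArg (phi G n w) h
  rw [pt_phi hn hw, pt_phi hn hw] at this
  omega

lemma power_adj {m : ℕ} {x y : V ⊕ (G.edgeSet × Fin (n-1))} :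
    ((G.subdivision n).power m).Adj x y ↔
      x ≠ y ∧ (G.subdivision n).Reachable x y ∧ (G.subdivision n).dist x y ≤ m :=
  Iff.rfl

lemma clique_lower [Fintype V] [DecidableRel G.Adj]
    (hG : 2 ≤ G.maxDegree) (m : ℕ) (hm : 0 < m) (hmn : m < n) (hme : Even m) :
    ∃ s : Finset (V ⊕ (G.edgeSet × Fin (n-1))),
      ((G.subdivision n).power m).IsNClique (m / 2 * G.maxDegree + 1) s := by
  classical
  have hmod : m % 2 = 0 := Nat.even_iff.mp hme
  have hm2 : 2 ≤ m := by omega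
  have hn : 3 ≤ n := by omega
  haveI : Nonempty V := by
    by_contra h
    rw [not_nonempty_iff] at h
    have : G.maxDegree = 0 := by
      apply Nat.le_antisymm _ (Nat.zero_le _)
      apply SimpleGraph.maxDegree_le_of_forall_degree_le
      intro v
      exact (h.false v).elim
    omega
  obtain ⟨v, hv⟩ := G.exists_maximal_degree_vertex
  -- the map from (neighbor, step) to internal vertices
  have hcond : ∀ u ∈ G.neighborFinset v, ∀ k ∈ Finset.range (m / 2),
      G.Adj v u ∧ k < n - 1 := by
    intro u hu k hk
    rw [SimpleGraph.mem_neighborFinset] at hu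
    rw [Finset.mem_range] at hk
    exact ⟨hu, by omega⟩
  set F : V × ℕ → V ⊕ (G.edgeSet × Fin (n-1)) := fun p =>
    if h : G.Adj v p.1 ∧ p.2 < n - 1 then
      pt G n v ⟨s(v, p.1), (G.mem_edgeSet).mpr h.1⟩ p.2 h.2
    else Sum.inl v with hF
  have hvmem : ∀ (u : V) (h : G.Adj v u), v ∈ (⟨s(v,u), (G.mem_edgeSet).mpr h⟩ : G.edgeSet).1 :=
    fun u h => Sym2.mem_mk_left v u
  have hFval : ∀ (u : V) (k : ℕ) (h : G.Adj v u) (hk : k < n - 1),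
      F (u, k) = pt G n v ⟨s(v, u), (G.mem_edgeSet).mpr h⟩ k hk := by
    intro u k h hk
    rw [hF]
    simp only [dif_pos (⟨h, hk⟩ : G.Adj v u ∧ k < n - 1)]
  set D := G.neighborFinset v ×ˢ Finset.range (m / 2) with hD
  set C := insert (Sum.inl v : V ⊕ (G.edgeSet × Fin (n-1))) (D.image F) with hC
  -- membership characterization
  have hmem : ∀ x ∈ D.image F, ∃ (u : V) (k : ℕ) (h : G.Adj v u) (hk : k < n - 1),
      k < m / 2 ∧ x = pt G n v ⟨s(v, u), (G.mem_edgeSet).mpr h⟩ k hk := by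
    intro x hx
    obtain ⟨⟨u, k⟩, hp, rfl⟩ := Finset.mem_image.mp hx
    obtain ⟨hu, hk⟩ := Finset.mem_product.mp hp
    obtain ⟨h1, h2⟩ := hcond u hu k hk
    exact ⟨u, k, h1, h2, Finset.mem_range.mp hk, hFval u k h1 h2⟩
  -- walks from v
  have hwalk : ∀ (u : V) (k : ℕ) (h : G.Adj v u) (hk : k < n - 1),
      ∃ p : (G.subdivision n).Walk (Sum.inl v)
        (pt G n v ⟨s(v, u), (G.mem_edgeSet).mpr h⟩ k hk), p.length = k + 1 :=
    fun u k h hk => pt_walk hn (hvmem u h) k hk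
  refine ⟨C, ?_, ?_⟩
  · -- clique
    rw [SimpleGraph.isClique_iff]
    intro x hx y hy hxy
    rw [Finset.coe_insert, Set.mem_insert_iff, Finset.mem_coe] at hx hy
    refine power_adj.mpr ⟨hxy, ?_⟩
    rcases hx with rfl | hx
    · rcases hy with rfl | hy
      · exact absurd rfl hxy
      · obtain ⟨u, k, h, hk, hkm, rfl⟩ := hmem _ hy
        obtain ⟨p, hp⟩ := hwalk u k h hk
        exact ⟨p.reachable, (SimpleGraph.dist_le p).trans (by omega)⟩
    · obtain ⟨u, k, h, hk, hkm, rfl⟩ := hmem _ hx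
      obtain ⟨p, hp⟩ := hwalk u k h hk
      rcases hy with rfl | hy
      · exact ⟨p.reverse.reachable, (SimpleGraph.dist_le p.reverse).trans
          (by rw [SimpleGraph.Walk.length_reverse]; omega)⟩
      · obtain ⟨u', k', h', hk', hkm', rfl⟩ := hmem _ hy
        obtain ⟨q, hq⟩ := hwalk u' k' h' hk'
        refine ⟨(p.reverse.append q).reachable,
          (SimpleGraph.dist_le (p.reverse.append q)).trans ?_⟩
        rw [SimpleGraph.Walk.length_append, SimpleGraph.Walk.length_reverse]
        omega
  · -- cardinality
    have hnotin : (Sum.inl v : V ⊕ (G.edgeSet × Fin (n-1))) ∉ D.image F := by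
      intro hx
      obtain ⟨u, k, h, hk, hkm, heq⟩ := hmem _ hx
      obtain ⟨i, hi⟩ := pt_eq_inr (G := G) (n := n) v ⟨s(v, u), (G.mem_edgeSet).mpr h⟩ k hk
      rw [hi] at heq
      exact Sum.inl_ne_inr heq
    rw [hC, Finset.card_insert_of_notMem hnotin]
    have hinj : Set.InjOn F D := by
      intro ⟨u, k⟩ hp ⟨u', k'⟩ hp' heq
      rw [Finset.mem_coe] at hp hp'
      obtain ⟨hu, hk⟩ := Finset.mem_product.mp hp
      obtain ⟨hu', hk'⟩ := Finset.mem_product.mp hp'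
      obtain ⟨h1, h2⟩ := hcond u hu k hk
      obtain ⟨h1', h2'⟩ := hcond u' hu' k' hk'
      rw [hFval u k h1 h2, hFval u' k' h1' h2'] at heq
      obtain ⟨i, hi⟩ := pt_eq_inr (G := G) (n := n) v ⟨s(v, u), (G.mem_edgeSet).mpr h1⟩ k h2
      obtain ⟨i', hi'⟩ := pt_eq_inr (G := G) (n := n) v ⟨s(v, u'), (G.mem_edgeSet).mpr h1'⟩ k' h2'
      have hedge : s(v, u) = s(v, u') := by
        rw [hi, hi'] at heq
        have := (Sum.inr.injEq .. ▸ heq : (_ , i) = (_, i'))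
        exact congrArg Subtype.val (Prod.mk.injEq .. ▸ this).1
      have huu : u = u' := Sym2.congr_right.mp hedge
      subst huu
      have hkk : k = k' := pt_inj hn (hvmem u h1) heq
      simp [hkk]
    rw [Finset.card_image_of_injOn hinj, hD, Finset.card_product,
      Finset.card_range, SimpleGraph.card_neighborFinset_eq_degree, hv]
    ring

lemma clique_upper [Fintype V] [DecidableRel G.Adj]
    (hG : 2 ≤ G.maxDegree) (m : ℕ) (hm : 0 < m) (hmn : m < n) (hme : Even m)
    {s : Finset (V ⊕ (G.edgeSet × Fin (n-1)))}
    (hs : ((G.subdivision n).power m).IsClique s) :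
    s.card ≤ m / 2 * G.maxDegree + 1 := by
  classical
  have hmod : m % 2 = 0 := Nat.even_iff.mp hme
  have hm2 : 2 ≤ m := by omega
  have hn : 3 ≤ n := by omega
  have hmgoal : m ≤ m / 2 * G.maxDegree := by
    calc m = m / 2 * 2 := by omega
    _ ≤ m / 2 * G.maxDegree := Nat.mul_le_mul_left _ hG
  -- pairwise walk fact
  have hwalk : ∀ x ∈ s, ∀ y ∈ s, x ≠ y →
      ∃ p : (G.subdivision n).Walk x y, p.length ≤ m := by
    intro x hx y hy hne
    obtain ⟨-, hr, hd⟩ := power_adj.mp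
      (hs (Finset.mem_coe.mpr hx) (Finset.mem_coe.mpr hy) hne)
    obtain ⟨p, hp⟩ := hr.exists_walk_length_eq_dist
    exact ⟨p, by omega⟩
  have hphi : ∀ x ∈ s, ∀ y ∈ s, ∀ w : V, phi G n w x ≤ phi G n w y + m := by
    intro x hx y hy w
    by_cases hne : x = y
    · subst hne; omega
    · obtain ⟨p, hp⟩ := hwalk x hx y hy hne
      have := phi_walk (w := w) hn p
      omega
  -- at most one inl
  have hL : s.toLeft.card ≤ 1 := by
    rw [Finset.card_le_one]
    intro u hu v hv
    rw [Finset.mem_toLeft] at hu hv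
    by_contra hne
    have h1 := hphi _ hv _ hu u
    rw [phi_inl_ne (fun h => hne (h.symm)), phi_inl_self] at h1
    omega
  set T := s.toRight with hT
  have hTmem : ∀ p : G.edgeSet × Fin (n-1), p ∈ T ↔ Sum.inr p ∈ s := by
    intro p; rw [hT, Finset.mem_toRight]
  set S := T.image Prod.fst with hSdef
  -- cross-edge fact
  have hcross : ∀ (e f : G.edgeSet) (i j : Fin (n-1)), (e, i) ∈ T → (f, j) ∈ T →
      e ≠ f → ∃ w, w ∈ e.1 ∧ w ∈ f.1 ∧
        phi G n w (Sum.inr (e, i)) + phi G n w (Sum.inr (f, j)) ≤ m := by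
    intro e f i j hi hj hef
    obtain ⟨p, hp⟩ := hwalk _ ((hTmem _).mp hi) _ ((hTmem _).mp hj)
      (by simp only [ne_eq, Sum.inr.injEq, Prod.mk.injEq, not_and]; exact fun h => absurd h hef)
    rcases walk_decomp hn p hef rfl rfl with ⟨w, h1, h2, h3⟩ | hl
    · exact ⟨w, h1, h2, by omega⟩
    · omega
  have hinc : ∀ (u : V) (e : G.edgeSet) (i : Fin (n-1)),
      Sum.inl u ∈ s → (e, i) ∈ T → u ∈ e.1 := by
    intro u e i hu hei
    by_contra hne
    have h1 := hphi _ ((hTmem _).mp hei) _ hu u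
    rw [phi_inr_notmem hne, phi_inl_self] at h1
    omega
  have hcard : s.toLeft.card + T.card = s.card := Finset.card_toLeft_add_card_toRight
  set K := m / 2 * G.maxDegree with hKdef
  by_cases hS2 : 2 ≤ S.card
  · -- big case: internal vertices on at least two edges
    have hwit : ∀ e ∈ S, ∃ i, (e, i) ∈ T := by
      intro e he
      rw [hSdef] at he
      obtain ⟨⟨e', i⟩, hp, h⟩ := Finset.mem_image.mp he
      simp only at h
      subst h
      exact ⟨i, hp⟩
    have hshare : ∀ e ∈ S, ∀ f ∈ S, e ≠ f → ∃ w, w ∈ e.1 ∧ w ∈ f.1 := by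
      intro e he f hf hef
      obtain ⟨i, hi⟩ := hwit e he
      obtain ⟨j, hj⟩ := hwit f hf
      obtain ⟨w, h1, h2, -⟩ := hcross e f i j hi hj hef
      exact ⟨w, h1, h2⟩
    obtain ⟨e0, he0, e1, he1, hne01⟩ := Finset.one_lt_card.mp hS2
    obtain ⟨w, hw0, hw1⟩ := hshare e0 he0 e1 he1 hne01
    have huniq : ∀ (e f : G.edgeSet), e ≠ f → ∀ a b, a ∈ e.1 → a ∈ f.1 →
        b ∈ e.1 → b ∈ f.1 → a = b := by
      intro e f hef a b ha1 ha2 hb1 hb2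
      by_contra hab
      exact hef (edges_eq_of_two_mem hab ha1 hb1 ha2 hb2)
    have hcommon : ∀ g ∈ S, w ∈ g.1 := by
      intro g hg
      by_cases hg0 : g = e0
      · subst hg0; exact hw0
      by_cases hg1 : g = e1
      · subst hg1; exact hw1
      by_contra hwg
      obtain ⟨i0, hi0⟩ := hwit e0 he0
      obtain ⟨i1, hi1⟩ := hwit e1 he1
      obtain ⟨ig, hig⟩ := hwit g hg
      obtain ⟨a, ha0, hag, hsum0⟩ := hcross e0 g i0 ig hi0 hig (fun h => hg0 h.symm)
      obtain ⟨b, hb1, hbg, hsum1⟩ := hcross e1 g i1 ig hi1 hig (fun h => hg1 h.symm)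
      obtain ⟨w', hw'0, hw'1, hsum01⟩ := hcross e0 e1 i0 i1 hi0 hi1 hne01
      have hww' : w' = w := huniq e0 e1 hne01 w' w hw'0 hw'1 hw0 hw1
      rw [hww'] at hsum01
      have haw : a ≠ w := fun h => hwg (h ▸ hag)
      have hbw : b ≠ w := fun h => hwg (h ▸ hbg)
      have hab : a ≠ b := by
        intro h
        subst h
        exact hne01 (edges_eq_of_two_mem haw ha0 hw0 hb1 hw1)
      have he0eq : e0.1 = s(w, a) :=
        (Sym2.mem_and_mem_iff (fun h => haw h.symm)).mp ⟨hw0, ha0⟩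
      have he1eq : e1.1 = s(w, b) :=
        (Sym2.mem_and_mem_iff (fun h => hbw h.symm)).mp ⟨hw1, hb1⟩
      have hgeq : g.1 = s(a, b) := (Sym2.mem_and_mem_iff hab).mp ⟨hag, hbg⟩
      have t0 := phi_two_endpoints hn he0eq i0
      have t1 := phi_two_endpoints hn he1eq i1
      have tg := phi_two_endpoints hn hgeq ig
      omega
    -- at most maxDegree edges through w
    have hScard : S.card ≤ G.maxDegree := by
      set o : G.edgeSet → V := fun e => if h : w ∈ e.1 then Sym2.Mem.other h else w
        with ho
      have hmapS : ∀ e ∈ S, o e ∈ G.neighborFinset w := by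
        intro e he
        have hwe := hcommon e he
        rw [ho]
        simp only [dif_pos hwe]
        rw [SimpleGraph.mem_neighborFinset, ← SimpleGraph.mem_edgeSet,
          Sym2.other_spec hwe]
        exact e.2
      have hoinj : Set.InjOn o S := by
        intro e he f hf hof
        have hwe := hcommon e (Finset.mem_coe.mp he)
        have hwf := hcommon f (Finset.mem_coe.mp hf)
        apply Subtype.ext
        rw [← Sym2.other_spec hwe, ← Sym2.other_spec hwf]
        rw [ho] at hof
        simp only [dif_pos hwe, dif_pos hwf] at hof
        rw [hof]
      calc S.card ≤ (G.neighborFinset w).card :=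
          Finset.card_le_card_of_injOn o hmapS hoinj
        _ = G.degree w := rfl
        _ ≤ G.maxDegree := G.degree_le_maxDegree w
    -- fibers of T over edges
    set gp : G.edgeSet × Fin (n-1) → ℕ := fun p => phi G n w (Sum.inr p) with hgpdef
    set fib : G.edgeSet → Finset (G.edgeSet × Fin (n-1)) :=
      fun e => T.filter (fun p => p.1 = e) with hfibdef
    set M : G.edgeSet → ℕ := fun e => (fib e).sup gp with hMdef
    have hfibcard : ∀ e ∈ S, (fib e).card ≤ M e := by
      intro e he
      have hwe := hcommon e he
      have hmap : ∀ p ∈ fib e, gp p ∈ Finset.Icc 1 (M e) := by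
        intro p hp
        rw [Finset.mem_Icc]
        refine ⟨?_, ?_⟩
        · rw [hgpdef]
          exact phi_inr_pos hn w p.1 p.2
        · rw [hMdef]
          exact Finset.le_sup hp
      have hinj : Set.InjOn gp (fib e) := by
        rintro ⟨p1, p2⟩ hp ⟨q1, q2⟩ hq hpq
        rw [Finset.mem_coe, hfibdef, Finset.mem_filter] at hp hq
        have hp1 : p1 = e := hp.2
        have hq1 : q1 = e := hq.2
        subst hp1; subst hq1
        rw [hgpdef] at hpq
        simp only at hpq
        rw [phi_inr_inj hn hwe hpq]
      calc (fib e).card ≤ (Finset.Icc 1 (M e)).card :=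
          Finset.card_le_card_of_injOn gp hmap hinj
        _ = M e := by rw [Nat.card_Icc]; omega
    have hMfib : ∀ e ∈ S, ∃ p ∈ fib e, gp p = M e := by
      intro e he
      obtain ⟨i, hi⟩ := hwit e he
      have hfne : (fib e).Nonempty := by
        refine ⟨(e, i), ?_⟩
        rw [hfibdef]
        exact Finset.mem_filter.mpr ⟨hi, rfl⟩
      obtain ⟨p, hp, hgp⟩ := Finset.exists_mem_eq_sup (fib e) hfne gp
      exact ⟨p, hp, by rw [hMdef]; exact hgp.symm⟩
    have hMM : ∀ e ∈ S, ∀ f ∈ S, e ≠ f → M e + M f ≤ m := by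
      intro e he f hf hef
      obtain ⟨⟨pe, pi⟩, hp, hgp⟩ := hMfib e he
      obtain ⟨⟨qe, qi⟩, hq, hgq⟩ := hMfib f hf
      rw [hfibdef] at hp hq
      obtain ⟨hpT, hp1⟩ := Finset.mem_filter.mp hp
      obtain ⟨hqT, hq1⟩ := Finset.mem_filter.mp hq
      simp only at hp1 hq1
      subst hp1; subst hq1
      obtain ⟨w', hw'e, hw'f, hsum⟩ := hcross pe qe pi qi hpT hqT hef
      have hww : w' = w := huniq pe qe hef w' w hw'e hw'f (hcommon _ he) (hcommon _ hf)
      subst hww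
      rw [hgpdef] at hgp hgq
      simp only at hgp hgq
      rw [hgp, hgq] at hsum
      exact hsum
    -- the sum bound
    have hSne : S.Nonempty := ⟨e0, he0⟩
    obtain ⟨a0, ha0, hmax⟩ := S.exists_max_image M hSne
    have hera : (S.erase a0).Nonempty := by
      rw [← Finset.card_pos, Finset.card_erase_of_mem ha0]
      omega
    obtain ⟨a1, ha1⟩ := hera
    have ha1S : a1 ∈ S := Finset.mem_of_mem_erase ha1
    have hne10 : a1 ≠ a0 := Finset.ne_of_mem_erase ha1
    have hhalf : ∀ e ∈ (S.erase a0).erase a1, M e ≤ m / 2 := by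
      intro e he'
      have heS : e ∈ S := Finset.mem_of_mem_erase (Finset.mem_of_mem_erase he')
      have hnea0 : e ≠ a0 := Finset.ne_of_mem_erase (Finset.mem_of_mem_erase he')
      have h1 := hMM e heS a0 ha0 hnea0
      have h2 := hmax e heS
      omega
    have hs3 := Finset.sum_le_card_nsmul ((S.erase a0).erase a1) M (m / 2) hhalf
    rw [smul_eq_mul] at hs3
    have hcards : ((S.erase a0).erase a1).card = S.card - 2 := by
      rw [Finset.card_erase_of_mem ha1, Finset.card_erase_of_mem ha0]
      omega
    have hsplit : ∑ e ∈ S, M e = M a0 + (M a1 + ∑ e ∈ (S.erase a0).erase a1, M e) := by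
      rw [Finset.add_sum_erase _ M ha1, Finset.add_sum_erase _ M ha0]
    have h01 := hMM a0 ha0 a1 ha1S (fun h => hne10 h.symm)
    have h2k : 2 * (m / 2) = m := by omega
    have hc : S.card - 2 + 2 = S.card := by omega
    have hsum : ∑ e ∈ S, M e ≤ S.card * (m / 2) := by
      rw [hcards] at hs3
      calc ∑ e ∈ S, M e = M a0 + (M a1 + ∑ e ∈ (S.erase a0).erase a1, M e) := hsplit
        _ ≤ M a0 + (M a1 + (S.card - 2) * (m / 2)) := by
            exact Nat.add_le_add_left (Nat.add_le_add_left hs3 _) _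
        _ = M a0 + M a1 + (S.card - 2) * (m / 2) := by rw [add_assoc]
        _ ≤ m + (S.card - 2) * (m / 2) := Nat.add_le_add_right h01 _
        _ = (S.card - 2) * (m / 2) + 2 * (m / 2) := by rw [h2k, add_comm]
        _ = (S.card - 2 + 2) * (m / 2) := by rw [add_mul]
        _ = S.card * (m / 2) := by rw [hc]
    have hTsum : T.card = ∑ e ∈ S, (fib e).card := by
      rw [hSdef, hfibdef]
      exact Finset.card_eq_sum_card_fiberwise
        (fun p hp => Finset.mem_image_of_mem Prod.fst hp)
    have hTle : T.card ≤ S.card * (m / 2) := by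
      rw [hTsum]
      exact (Finset.sum_le_sum hfibcard).trans hsum
    have hfin : S.card * (m / 2) ≤ K := by
      rw [hKdef, mul_comm]
      exact Nat.mul_le_mul_left _ hScard
    omega
  · -- small case : all internal vertices on at most one edge
    rcases T.eq_empty_or_nonempty with hTe | ⟨⟨e, i0⟩, hT0⟩
    · have hT0 : T.card = 0 := by rw [hTe]; rfl
      omega
    · have he : e ∈ S := Finset.mem_image_of_mem Prod.fst hT0
      have hone : ∀ p ∈ T, p.1 = e := fun p hp =>
        (Finset.card_le_one (s := S)).mp (by omega) _ (Finset.mem_image_of_mem Prod.fst hp) _ he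
      rcases s.toLeft.eq_empty_or_nonempty with hLe | ⟨u, hu⟩
      · -- no original vertex in the clique
        set w := (Quot.out e.1).1 with hwdef
        have hw : w ∈ e.1 := mem_iff_out.mpr (Or.inl rfl)
        set g : G.edgeSet × Fin (n-1) → ℕ := fun p => phi G n w (Sum.inr p) with hg
        have hginj : Set.InjOn g T := by
          rintro ⟨p1, p2⟩ hp ⟨q1, q2⟩ hq hgpq
          rw [Finset.mem_coe] at hp hq
          have hp1 := hone _ hp
          have hq1 := hone _ hq
          simp only at hp1 hq1
          subst hp1; subst hq1
          have := phi_inr_inj hn hw hgpq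
          rw [this]
        set I := T.image g with hI
        have hIne : I.Nonempty := ⟨g (e, i0), Finset.mem_image_of_mem g hT0⟩
        have hIsub : I ⊆ Finset.Icc (I.min' hIne) (I.min' hIne + m) := by
          intro b hb
          rw [Finset.mem_Icc]
          refine ⟨Finset.min'_le _ _ hb, ?_⟩
          obtain ⟨p, hp, rfl⟩ := Finset.mem_image.mp hb
          obtain ⟨q, hq, hqa⟩ := Finset.mem_image.mp (I.min'_mem hIne)
          rw [← hqa]
          exact hphi _ ((hTmem _).mp hp) _ ((hTmem _).mp hq) w
        have hTcard : T.card ≤ m + 1 := by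
          rw [← Finset.card_image_of_injOn hginj]
          exact (Finset.card_le_card hIsub).trans (by rw [Nat.card_Icc]; omega)
        have hL0 : s.toLeft.card = 0 := by rw [hLe]; rfl
        omega
      · -- with an original vertex u
        rw [Finset.mem_toLeft] at hu
        have hue : u ∈ e.1 := hinc u e i0 hu hT0
        set g : G.edgeSet × Fin (n-1) → ℕ := fun p => phi G n u (Sum.inr p) with hg
        have hginj : Set.InjOn g T := by
          rintro ⟨p1, p2⟩ hp ⟨q1, q2⟩ hq hgpq
          rw [Finset.mem_coe] at hp hq
          have hp1 := hone _ hp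
          have hq1 := hone _ hq
          simp only at hp1 hq1
          subst hp1; subst hq1
          have := phi_inr_inj hn hue hgpq
          rw [this]
        have hTcard : T.card ≤ m := by
          have hmap : ∀ p ∈ T, g p ∈ Finset.Icc 1 m := by
            intro p hp
            rw [Finset.mem_Icc]
            refine ⟨phi_inr_pos hn u p.1 p.2, ?_⟩
            have := hphi _ ((hTmem _).mp (by rwa [← Prod.mk.eta (p := p)] at hp))
              _ hu u
            rw [phi_inl_self] at this
            simpa using this
          calc T.card ≤ (Finset.Icc 1 m).card :=
            Finset.card_le_card_of_injOn g hmap hginj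
          _ = m := by rw [Nat.card_Icc]; omega
        omega

end FracPow

theorem cliqueNum_fractional_power_even {V : Type*} [Fintype V]
    (G : SimpleGraph V) [DecidableRel G.Adj] (hG : 2 ≤ G.maxDegree)
    (m n : ℕ) (hm : 0 < m) (hmn : m < n) (hme : Even m) :
    ((G.subdivision n).power m).cliqueNum = m / 2 * G.maxDegree + 1 := by
  classical
  haveI : Fintype ↑G.edgeSet := Fintype.ofFinite _
  apply le_antisymm
  · unfold SimpleGraph.cliqueNum
    apply csSup_le
    · exact ⟨0, ⟨∅, SimpleGraph.isNClique_empty.mpr rfl⟩⟩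
    · rintro k ⟨t, ht⟩
      have h1 := FracPow.clique_upper (G := G) (n := n) hG m hm hmn hme ht.1
      rw [ht.2] at h1
      exact h1
  · obtain ⟨t, ht⟩ := FracPow.clique_lower (G := G) (n := n) hG m hm hmn hme
    calc m / 2 * G.maxDegree + 1 = t.card := ht.2.symm
      _ ≤ _ := SimpleGraph.IsClique.card_le_cliqueNum (tc := ht.1)
end

section
/- Let G be a graph with maximum degree Δ ≥ 2 and let m < n be positive integers with m odd. Then the clique number of G^{m/n} equals ((m-1)/2)·Δ + 2. -/
open SimpleGraph

section Aux

variable {V : Type*} {G : SimpleGraph V} {n : ℕ}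

/-- first endpoint of the fixed orientation of an edge -/
noncomputable def eo1 (e : G.edgeSet) : V := (Quot.out (e : Sym2 V)).1
/-- second endpoint -/
noncomputable def eo2 (e : G.edgeSet) : V := (Quot.out (e : Sym2 V)).2

lemma eo_adj (e : G.edgeSet) : G.Adj (eo1 e) (eo2 e) := by
  have h := Quot.out_eq (e : Sym2 V)
  have h2 := e.2
  rw [← h] at h2
  exact h2

lemma eo_ne (e : G.edgeSet) : eo1 e ≠ eo2 e := (eo_adj e).ne

lemma eo_mk (e : G.edgeSet) : s(eo1 e, eo2 e) = (e : Sym2 V) := Quot.out_eq _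

lemma mem_edge_iff {e : G.edgeSet} {v : V} : v ∈ (e : Sym2 V) ↔ v = eo1 e ∨ v = eo2 e := by
  rw [← eo_mk e, Sym2.mem_iff]

lemma subdivision_adj_inl_inr {u : V} {e : G.edgeSet} {i : Fin (n-1)} :
    (G.subdivision n).Adj (Sum.inl u) (Sum.inr (e, i)) ↔
      (u = eo1 e ∧ (i : ℕ) = 0) ∨ (u = eo2 e ∧ (i : ℕ) = n - 2) := Iff.rfl

lemma subdivision_adj_inr_inr {e f : G.edgeSet} {i j : Fin (n-1)} :
    (G.subdivision n).Adj (Sum.inr (e, i)) (Sum.inr (f, j)) ↔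
      e = f ∧ ((i : ℕ) + 1 = (j : ℕ) ∨ (j : ℕ) + 1 = (i : ℕ)) := Iff.rfl

/-- Lipschitz functions give lower bounds on `edist`. -/
lemma edist_lipschitz {W : Type*} {H : SimpleGraph W} {f : W → ℕ∞}
    (hf : ∀ a b, H.Adj a b → f a ≤ f b + 1) (x y : W) :
    f x ≤ f y + H.edist x y := by
  rcases eq_or_ne (H.edist x y) ⊤ with h | h
  · simp [h]
  · obtain ⟨p, hp⟩ := exists_walk_of_edist_ne_top h
    rw [← hp]
    clear hp h
    induction p with
    | nil => simp
    | cons hadj p ih =>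
        calc f _ ≤ f _ + 1 := hf _ _ hadj
        _ ≤ (f _ + p.length) + 1 := by gcongr
        _ = _ := by simp [SimpleGraph.Walk.length_cons]; push_cast; ring

lemma edist_le_of_adj {W : Type*} {H : SimpleGraph W} {a b : W} (h : H.Adj a b) :
    H.edist a b ≤ 1 := (edist_eq_one_iff_adj.2 h).le

lemma edist_add_one {W : Type*} {H : SimpleGraph W} {u a b : W} (h : H.Adj a b) :
    H.edist u a ≤ H.edist u b + 1 :=
  le_trans (H.edist_triangle (v := b)) (by gcongr; exact edist_comm ▸ edist_le_of_adj h)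

end Aux

section Fu

variable {V : Type*} {G : SimpleGraph V} {n : ℕ}

/-- distance-from-branch-vertex potential -/
noncomputable def Fu (G : SimpleGraph V) (n : ℕ) (u : V) :
    (V ⊕ (G.edgeSet × Fin (n-1))) → ℕ∞
  | Sum.inl w => n * G.edist u w
  | Sum.inr (e, i) => min (n * G.edist u (eo1 e) + (((i : ℕ) + 1 : ℕ) : ℕ∞))
                          (n * G.edist u (eo2 e) + ((n - 1 - (i : ℕ) : ℕ) : ℕ∞))

lemma enat_add_cast_le {a : ℕ∞} {p q : ℕ} (h : p ≤ q + 1) :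
    a + (p : ℕ∞) ≤ a + (q : ℕ∞) + 1 := by
  rw [add_assoc]
  gcongr
  exact_mod_cast h

lemma enat_mul_le_succ {x y : ℕ∞} (h : x ≤ y + 1) (k : ℕ) : (k : ℕ∞) * x ≤ k * y + k := by
  calc (k : ℕ∞) * x ≤ k * (y + 1) := by gcongr
  _ = k * y + k := by ring

lemma Fu_lip (hn : 2 ≤ n) (u : V) :
    ∀ a b, (G.subdivision n).Adj a b → Fu G n u a ≤ Fu G n u b + 1 := by
  rintro (w | ⟨e, i⟩) (w' | ⟨f, j⟩) h
  · exact absurd h.1 (by omega)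
  · simp only [Fu]
    rcases h with ⟨rfl, hi⟩ | ⟨rfl, hi⟩
    · -- w = eo1 f, j = 0
      rw [← min_add_add_right]
      refine le_min (by rw [add_assoc]; exact le_self_add) ?_
      calc (n : ℕ∞) * G.edist u (eo1 f)
          ≤ n * G.edist u (eo2 f) + n := enat_mul_le_succ (edist_add_one (eo_adj f)) n
        _ ≤ _ := by
            rw [add_assoc]; gcongr
            exact_mod_cast (by omega : n ≤ n - 1 - (j:ℕ) + 1)
    · -- w = eo2 f, j = n - 2
      rw [← min_add_add_right]
      refine le_min ?_ (by rw [add_assoc]; exact le_self_add)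
      calc (n : ℕ∞) * G.edist u (eo2 f)
          ≤ n * G.edist u (eo1 f) + n := enat_mul_le_succ (edist_add_one ((eo_adj f).symm)) n
        _ ≤ _ := by
            rw [add_assoc]; gcongr
            exact_mod_cast (by omega : n ≤ (j:ℕ) + 1 + 1)
  · simp only [Fu]
    rcases h with ⟨rfl, hi⟩ | ⟨rfl, hi⟩
    · refine le_trans (min_le_left _ _) ?_
      exact add_le_add_right (by exact_mod_cast (by omega : (i:ℕ) + 1 ≤ 1)) _
    · refine le_trans (min_le_right _ _) ?_
      have hlt : (i : ℕ) < n - 1 := i.isLt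
      exact add_le_add_right (by exact_mod_cast (by omega : n - 1 - (i:ℕ) ≤ 1)) _
  · obtain ⟨rfl, hij⟩ := h
    simp only [Fu]
    have hi : (i : ℕ) < n - 1 := i.isLt
    have hj : (j : ℕ) < n - 1 := j.isLt
    rw [← min_add_add_right]
    refine le_min ?_ ?_
    · exact le_trans (min_le_left _ _) (enat_add_cast_le (by omega))
    · exact le_trans (min_le_right _ _) (enat_add_cast_le (by omega))

end Fu

section Extract

variable {V : Type*} {G : SimpleGraph V} {n : ℕ}

lemma Fu_inl_self (u : V) : Fu G n u (Sum.inl u) = 0 := by simp [Fu]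

lemma Fu_le_edist (hn : 2 ≤ n) (u : V) (x : V ⊕ (G.edgeSet × Fin (n-1))) :
    Fu G n u x ≤ (G.subdivision n).edist (Sum.inl u) x := by
  have h := edist_lipschitz (Fu_lip hn u) x (Sum.inl u)
  rwa [Fu_inl_self, zero_add, edist_comm] at h

lemma enat_nonzero_ge_one {d : ℕ∞} (h : d ≠ 0) : 1 ≤ d := by
  exact Order.one_le_iff_pos.mpr (pos_iff_ne_zero.mpr h)

lemma Fu_extract {m c : ℕ} (hmn : m < n) {u : V} {e : G.edgeSet} {i : Fin (n-1)}
    (h : (c : ℕ∞) + Fu G n u (Sum.inr (e, i)) ≤ (m : ℕ∞)) :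
    (u = eo1 e ∧ c + ((i:ℕ)+1) ≤ m) ∨ (u = eo2 e ∧ c + (n-1-(i:ℕ)) ≤ m) := by
  simp only [Fu] at h
  rw [← min_add_add_left] at h
  have key : ∀ (w : V) (k : ℕ), (c : ℕ∞) + ((n:ℕ∞) * G.edist u w + (k : ℕ∞)) ≤ (m:ℕ∞) →
      u = w ∧ c + k ≤ m := by
    intro w k hw
    have hd : G.edist u w = 0 := by
      by_contra hd
      have h1 : (n : ℕ∞) ≤ (n:ℕ∞) * G.edist u w := by
        nth_rewrite 1 [← mul_one (n : ℕ∞)]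
        exact mul_le_mul_right (enat_nonzero_ge_one hd) _
      have h2 : (n : ℕ∞) ≤ (m : ℕ∞) := by
        refine le_trans h1 (le_trans ?_ hw)
        exact le_trans le_self_add (le_add_self)
      exact absurd (by exact_mod_cast h2) (by omega)
    refine ⟨edist_eq_zero_iff.mp hd, ?_⟩
    rw [hd, mul_zero, zero_add] at hw
    exact_mod_cast hw
  rcases min_le_iff.mp h with h' | h'
  · exact Or.inl (key _ _ h')
  · exact Or.inr (key _ _ h')

lemma edist_inl_inl {m : ℕ} (hn : 2 ≤ n) (hmn : m < n) {u w : V}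
    (h : (G.subdivision n).edist (Sum.inl u) (Sum.inl w) ≤ (m : ℕ∞)) : u = w := by
  have h1 := le_trans (Fu_le_edist hn u (Sum.inl w)) h
  simp only [Fu] at h1
  by_contra hne
  have hd : G.edist u w ≠ 0 := fun hz => hne (edist_eq_zero_iff.mp hz)
  have h2 : (n : ℕ∞) ≤ (m : ℕ∞) := by
    refine le_trans ?_ h1
    nth_rewrite 1 [← mul_one (n : ℕ∞)]
    exact mul_le_mul_right (enat_nonzero_ge_one hd) _
  exact absurd (by exact_mod_cast h2) (by omega)

lemma edist_inl_inr {m : ℕ} (hn : 2 ≤ n) (hmn : m < n) {u : V} {e : G.edgeSet} {i : Fin (n-1)}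
    (h : (G.subdivision n).edist (Sum.inl u) (Sum.inr (e, i)) ≤ (m : ℕ∞)) :
    (u = eo1 e ∧ (i:ℕ)+1 ≤ m) ∨ (u = eo2 e ∧ n-1-(i:ℕ) ≤ m) := by
  have h1 := le_trans (Fu_le_edist hn u (Sum.inr (e, i))) h
  have h2 : ((0:ℕ) : ℕ∞) + Fu G n u (Sum.inr (e, i)) ≤ (m : ℕ∞) := by
    simpa using h1
  simpa using Fu_extract hmn h2

end Extract

section GxSec

variable {V : Type*} {G : SimpleGraph V} {n : ℕ}

open Classical in
noncomputable def tp (n : ℕ) (u : V) {G : SimpleGraph V} (e : G.edgeSet) (i : Fin (n-1)) : ℕ :=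
  if u = eo1 e then (i:ℕ)+1 else n-1-(i:ℕ)

open Classical in
noncomputable def Gx (G : SimpleGraph V) (n : ℕ) (e : G.edgeSet) (i : Fin (n-1)) :
    (V ⊕ (G.edgeSet × Fin (n-1))) → ℕ∞ :=
  fun z =>
    min (min ((((i:ℕ)+1 : ℕ) : ℕ∞) + Fu G n (eo1 e) z)
             (((n-1-(i:ℕ) : ℕ) : ℕ∞) + Fu G n (eo2 e) z))
      (match z with
        | Sum.inl _ => ⊤
        | Sum.inr (f, j) =>
            if f = e then ((max (i:ℕ) (j:ℕ) - min (i:ℕ) (j:ℕ) : ℕ) : ℕ∞) else ⊤)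

lemma lip_const_add {W : Type*} {H : SimpleGraph W} {f : W → ℕ∞}
    (hf : ∀ a b, H.Adj a b → f a ≤ f b + 1) (c : ℕ∞) :
    ∀ a b, H.Adj a b → c + f a ≤ (c + f b) + 1 := by
  intro a b h
  rw [add_assoc]
  exact add_le_add_right (hf a b h) c

lemma lip_min {W : Type*} {H : SimpleGraph W} {f g : W → ℕ∞}
    (hf : ∀ a b, H.Adj a b → f a ≤ f b + 1) (hg : ∀ a b, H.Adj a b → g a ≤ g b + 1) :
    ∀ a b, H.Adj a b → min (f a) (g a) ≤ min (f b) (g b) + 1 := by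
  intro a b h
  rw [← min_add_add_right]
  exact min_le_min (hf a b h) (hg a b h)

lemma Gx_m1_lip (hn : 2 ≤ n) (e : G.edgeSet) (i : Fin (n-1)) :
    ∀ a b, (G.subdivision n).Adj a b →
      min ((((i:ℕ)+1 : ℕ) : ℕ∞) + Fu G n (eo1 e) a) (((n-1-(i:ℕ) : ℕ) : ℕ∞) + Fu G n (eo2 e) a)
      ≤ min ((((i:ℕ)+1 : ℕ) : ℕ∞) + Fu G n (eo1 e) b) (((n-1-(i:ℕ) : ℕ) : ℕ∞) + Fu G n (eo2 e) b) + 1 :=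
  lip_min (lip_const_add (Fu_lip hn _) _) (lip_const_add (Fu_lip hn _) _)

lemma Gx_lip (hn : 2 ≤ n) (e : G.edgeSet) (i : Fin (n-1)) :
    ∀ a b, (G.subdivision n).Adj a b → Gx G n e i a ≤ Gx G n e i b + 1 := by
  intro a b hadj
  unfold Gx
  rw [← min_add_add_right]
  refine le_min (le_trans (min_le_left _ _) (Gx_m1_lip hn e i a b hadj)) ?_
  -- second goal : ≤ direct b + 1
  rcases b with w | ⟨f, j⟩
  · simp
  · by_cases hfe : f = e
    · subst hfe
      simp only [if_pos rfl]
      rcases a with w' | ⟨f', j'⟩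
      · -- junction case
        rcases hadj with ⟨hw, hj⟩ | ⟨hw, hj⟩
        · have h0 : Fu G n (eo1 f) (Sum.inl w') = 0 := by rw [hw]; exact Fu_inl_self _
          refine le_trans (min_le_left _ _) (le_trans (min_le_left _ _) ?_)
          rw [h0, add_zero]
          have hi : (i : ℕ) < n - 1 := i.isLt
          simp only [ite_true, eq_self_iff_true]
          exact_mod_cast (by omega : (i:ℕ)+1 ≤ (max (i:ℕ) (j:ℕ) - min (i:ℕ) (j:ℕ)) + 1)
        · have h0 : Fu G n (eo2 f) (Sum.inl w') = 0 := by rw [hw]; exact Fu_inl_self _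
          refine le_trans (min_le_left _ _) (le_trans (min_le_right _ _) ?_)
          rw [h0, add_zero]
          have hi : (i : ℕ) < n - 1 := i.isLt
          have hj' : (j : ℕ) < n - 1 := j.isLt
          simp only [ite_true, eq_self_iff_true]
          exact_mod_cast (by omega : n-1-(i:ℕ) ≤ (max (i:ℕ) (j:ℕ) - min (i:ℕ) (j:ℕ)) + 1)
      · obtain ⟨rfl, hjj⟩ := hadj
        refine le_trans (min_le_right _ _) ?_
        simp only [if_pos rfl]
        have hi : (i : ℕ) < n - 1 := i.isLt
        have hj' : (j : ℕ) < n - 1 := j.isLt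
        have hj'' : (j' : ℕ) < n - 1 := j'.isLt
        simp only [ite_true, eq_self_iff_true]
        exact_mod_cast (by omega :
          (max (i:ℕ) (j':ℕ) - min (i:ℕ) (j':ℕ)) ≤ (max (i:ℕ) (j:ℕ) - min (i:ℕ) (j:ℕ)) + 1)
    · simp [hfe]

lemma Gx_le_edist (hn : 2 ≤ n) (e : G.edgeSet) (i : Fin (n-1))
    (z : V ⊕ (G.edgeSet × Fin (n-1))) :
    Gx G n e i z ≤ (G.subdivision n).edist (Sum.inr (e, i)) z := by
  have h := edist_lipschitz (Gx_lip hn e i) z (Sum.inr (e, i))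
  have h0 : Gx G n e i (Sum.inr (e, i)) = 0 := by
    refine le_antisymm ?_ (zero_le)
    refine le_trans (min_le_right _ _) ?_
    simp
  rwa [h0, zero_add, SimpleGraph.edist_comm] at h

end GxSec

section Extract2

variable {V : Type*} {G : SimpleGraph V} {n : ℕ}

lemma tp_ge_one (hn : 2 ≤ n) (u : V) (e : G.edgeSet) (i : Fin (n-1)) : 1 ≤ tp n u e i := by
  have hi : (i : ℕ) < n - 1 := i.isLt
  unfold tp; split <;> omega

lemma tp_le (u : V) (e : G.edgeSet) (i : Fin (n-1)) : tp n u e i ≤ n - 1 := by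
  have hi : (i : ℕ) < n - 1 := i.isLt
  unfold tp; split <;> omega

lemma tp_inj {u : V} {e : G.edgeSet} {i j : Fin (n-1)} (h : tp n u e i = tp n u e j) :
    i = j := by
  have hi : (i : ℕ) < n - 1 := i.isLt
  have hj : (j : ℕ) < n - 1 := j.isLt
  unfold tp at h
  split at h <;> exact Fin.ext (by omega)

lemma tp_eo1 (e : G.edgeSet) (i : Fin (n-1)) : tp n (eo1 e) e i = (i:ℕ)+1 := if_pos rfl

lemma tp_eo2 (e : G.edgeSet) (i : Fin (n-1)) : tp n (eo2 e) e i = n-1-(i:ℕ) :=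
  if_neg (Ne.symm (eo_ne e))

lemma tp_add_tp (hn : 2 ≤ n) {u v : V} {e : G.edgeSet} (i : Fin (n-1)) (huv : u ≠ v)
    (hu : u ∈ (e : Sym2 V)) (hv : v ∈ (e : Sym2 V)) : tp n u e i + tp n v e i = n := by
  have hi : (i : ℕ) < n - 1 := i.isLt
  rcases mem_edge_iff.mp hu with rfl | rfl <;> rcases mem_edge_iff.mp hv with rfl | rfl
  · exact absurd rfl huv
  · rw [tp_eo1, tp_eo2]; omega
  · rw [tp_eo1, tp_eo2]; omega
  · exact absurd rfl huv

lemma common_vertex_unique {e f : G.edgeSet} (hef : e ≠ f) {u v : V}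
    (hu1 : u ∈ (e : Sym2 V)) (hu2 : u ∈ (f : Sym2 V))
    (hv1 : v ∈ (e : Sym2 V)) (hv2 : v ∈ (f : Sym2 V)) : u = v := by
  by_contra hne
  have h1 : (e : Sym2 V) = s(u, v) := (Sym2.mem_and_mem_iff hne).mp ⟨hu1, hv1⟩
  have h2 : (f : Sym2 V) = s(u, v) := (Sym2.mem_and_mem_iff hne).mp ⟨hu2, hv2⟩
  exact hef (Subtype.ext (h1.trans h2.symm))

lemma Fu_own1 (hn : 2 ≤ n) (e : G.edgeSet) (j : Fin (n-1)) :
    Fu G n (eo1 e) (Sum.inr (e, j)) = (((j:ℕ)+1 : ℕ) : ℕ∞) := by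
  have hj : (j : ℕ) < n - 1 := j.isLt
  simp only [Fu]
  rw [show G.edist (eo1 e) (eo1 e) = 0 from SimpleGraph.edist_self,
    show G.edist (eo1 e) (eo2 e) = 1 from edist_eq_one_iff_adj.mpr (eo_adj e)]
  rw [mul_zero, zero_add, mul_one]
  refine min_eq_left ?_
  calc (((j:ℕ)+1 : ℕ) : ℕ∞) ≤ ((n : ℕ) : ℕ∞) := by exact_mod_cast (by omega : (j:ℕ)+1 ≤ n)
  _ ≤ _ := le_self_add

lemma Fu_own2 (hn : 2 ≤ n) (e : G.edgeSet) (j : Fin (n-1)) :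
    Fu G n (eo2 e) (Sum.inr (e, j)) = ((n-1-(j:ℕ) : ℕ) : ℕ∞) := by
  have hj : (j : ℕ) < n - 1 := j.isLt
  simp only [Fu]
  rw [show G.edist (eo2 e) (eo2 e) = 0 from SimpleGraph.edist_self,
    show G.edist (eo2 e) (eo1 e) = 1 from edist_eq_one_iff_adj.mpr ((eo_adj e).symm)]
  rw [mul_zero, zero_add, mul_one]
  refine min_eq_right ?_
  calc ((n-1-(j:ℕ) : ℕ) : ℕ∞) ≤ ((n : ℕ) : ℕ∞) := by exact_mod_cast (by omega : n-1-(j:ℕ) ≤ n)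
  _ ≤ _ := le_self_add

lemma edist_inr_inr_ne {m : ℕ} (hn : 2 ≤ n) (hmn : m < n) {e f : G.edgeSet}
    {i j : Fin (n-1)} (hef : f ≠ e)
    (h : (G.subdivision n).edist (Sum.inr (e, i)) (Sum.inr (f, j)) ≤ (m : ℕ∞)) :
    ∃ u, u ∈ (e : Sym2 V) ∧ u ∈ (f : Sym2 V) ∧ tp n u e i + tp n u f j ≤ m := by
  have h0 := le_trans (Gx_le_edist hn e i (Sum.inr (f, j))) h
  simp only [Gx] at h0
  rw [if_neg hef, inf_top_eq] at h0
  rcases min_le_iff.mp h0 with h1 | h1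
  · rcases Fu_extract hmn h1 with ⟨heq, hle⟩ | ⟨heq, hle⟩
    · refine ⟨eo1 e, mem_edge_iff.mpr (Or.inl rfl), ?_, ?_⟩
      · rw [heq]; exact mem_edge_iff.mpr (Or.inl rfl)
      · rw [tp_eo1, heq, tp_eo1]; omega
    · refine ⟨eo1 e, mem_edge_iff.mpr (Or.inl rfl), ?_, ?_⟩
      · rw [heq]; exact mem_edge_iff.mpr (Or.inr rfl)
      · rw [tp_eo1, heq, tp_eo2]; omega
  · rcases Fu_extract hmn h1 with ⟨heq, hle⟩ | ⟨heq, hle⟩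
    · refine ⟨eo2 e, mem_edge_iff.mpr (Or.inr rfl), ?_, ?_⟩
      · rw [heq]; exact mem_edge_iff.mpr (Or.inl rfl)
      · rw [tp_eo2, heq, tp_eo1]; omega
    · refine ⟨eo2 e, mem_edge_iff.mpr (Or.inr rfl), ?_, ?_⟩
      · rw [heq]; exact mem_edge_iff.mpr (Or.inr rfl)
      · rw [tp_eo2, heq, tp_eo2]; omega

lemma edist_inr_inr_same {m : ℕ} (hn : 2 ≤ n) (hmn : m < n) {e : G.edgeSet}
    {i j : Fin (n-1)}
    (h : (G.subdivision n).edist (Sum.inr (e, i)) (Sum.inr (e, j)) ≤ (m : ℕ∞)) :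
    max (i:ℕ) (j:ℕ) - min (i:ℕ) (j:ℕ) ≤ m := by
  have hi : (i : ℕ) < n - 1 := i.isLt
  have hj : (j : ℕ) < n - 1 := j.isLt
  have h0 := le_trans (Gx_le_edist hn e i (Sum.inr (e, j))) h
  simp only [Gx] at h0
  rw [if_true, Fu_own1 hn, Fu_own2 hn] at h0
  rcases min_le_iff.mp h0 with h1 | h1
  · rcases min_le_iff.mp h1 with h2 | h2
    · have : (i:ℕ)+1 + ((j:ℕ)+1) ≤ m := by exact_mod_cast h2
      omega
    · have : (n-1-(i:ℕ)) + (n-1-(j:ℕ)) ≤ m := by exact_mod_cast h2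
      omega
  · exact_mod_cast h1

lemma power_adj_edist {W : Type*} {H : SimpleGraph W} {m : ℕ} {x y : W} :
    (H.power m).Adj x y ↔ x ≠ y ∧ H.edist x y ≤ (m : ℕ∞) := by
  constructor
  · rintro ⟨hne, hr, hd⟩
    refine ⟨hne, ?_⟩
    have ht : H.edist x y ≠ ⊤ := edist_ne_top_iff_reachable.mpr hr
    rw [← ENat.coe_toNat ht]
    exact_mod_cast hd
  · rintro ⟨hne, hd⟩
    have ht : H.edist x y ≠ ⊤ := ne_top_of_le_ne_top (ENat.coe_ne_top m) hd
    refine ⟨hne, reachable_of_edist_ne_top ht, ?_⟩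
    show (H.edist x y).toNat ≤ m
    rw [← ENat.toNat_coe m]
    exact ENat.toNat_le_toNat hd (ENat.coe_ne_top m)

end Extract2

section Walks

variable {V : Type*} {G : SimpleGraph V} {n : ℕ}

lemma edist_chain (e : G.edgeSet) :
    ∀ (d i j : ℕ) (hi : i < n-1) (hj : j < n-1), j = i + d →
      (G.subdivision n).edist (Sum.inr (e, ⟨i, hi⟩)) (Sum.inr (e, ⟨j, hj⟩)) ≤ (d : ℕ∞) := by
  intro d
  induction d with
  | zero =>
      intro i j hi hj hij
      have : i = j := by omega
      subst this
      simp [SimpleGraph.edist_self]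
  | succ d ih =>
      intro i j hi hj hij
      have hi1 : i + 1 < n - 1 := by omega
      have hadj : (G.subdivision n).Adj (Sum.inr (e, ⟨i, hi⟩)) (Sum.inr (e, ⟨i+1, hi1⟩)) :=
        ⟨rfl, Or.inl rfl⟩
      calc (G.subdivision n).edist (Sum.inr (e, ⟨i, hi⟩)) (Sum.inr (e, ⟨j, hj⟩))
          ≤ _ + _ := SimpleGraph.edist_triangle (v := Sum.inr (e, ⟨i+1, hi1⟩))
        _ ≤ 1 + (d : ℕ∞) := by
            gcongr
            · exact edist_le_of_adj hadj
            · exact ih (i+1) j hi1 hj (by omega)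
        _ = ((d+1 : ℕ) : ℕ∞) := by push_cast; ring

lemma edist_same_le (e : G.edgeSet) (i j : Fin (n-1)) :
    (G.subdivision n).edist (Sum.inr (e, i)) (Sum.inr (e, j)) ≤
      ((max (i:ℕ) (j:ℕ) - min (i:ℕ) (j:ℕ) : ℕ) : ℕ∞) := by
  rcases le_total (i:ℕ) (j:ℕ) with hle | hle
  · have := edist_chain e ((j:ℕ) - (i:ℕ)) i j i.isLt j.isLt (by omega)
    calc (G.subdivision n).edist (Sum.inr (e, i)) (Sum.inr (e, j))
        ≤ (((j:ℕ) - (i:ℕ) : ℕ) : ℕ∞) := by simpa using this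
      _ = _ := by congr 1; omega
  · have := edist_chain e ((i:ℕ) - (j:ℕ)) j i j.isLt i.isLt (by omega)
    calc (G.subdivision n).edist (Sum.inr (e, i)) (Sum.inr (e, j))
        = (G.subdivision n).edist (Sum.inr (e, j)) (Sum.inr (e, i)) := SimpleGraph.edist_comm
      _ ≤ (((i:ℕ) - (j:ℕ) : ℕ) : ℕ∞) := by simpa using this
      _ = _ := by congr 1; omega

lemma edist_inl1_le (hn : 2 ≤ n) (e : G.edgeSet) (i : Fin (n-1)) :
    (G.subdivision n).edist (Sum.inl (eo1 e)) (Sum.inr (e, i)) ≤ (((i:ℕ)+1 : ℕ) : ℕ∞) := by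
  have h0 : (0:ℕ) < n - 1 := by omega
  have hadj : (G.subdivision n).Adj (Sum.inl (eo1 e)) (Sum.inr (e, ⟨0, h0⟩)) :=
    Or.inl ⟨rfl, rfl⟩
  calc (G.subdivision n).edist (Sum.inl (eo1 e)) (Sum.inr (e, i))
      ≤ _ + _ := SimpleGraph.edist_triangle (v := Sum.inr (e, ⟨0, h0⟩))
    _ ≤ 1 + ((i:ℕ) : ℕ∞) := by
        gcongr
        · exact edist_le_of_adj hadj
        · have := edist_chain e (i:ℕ) 0 (i:ℕ) h0 i.isLt (by omega)
          simpa using this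
    _ = (((i:ℕ)+1 : ℕ) : ℕ∞) := by push_cast; ring

lemma edist_inl2_le (hn : 2 ≤ n) (e : G.edgeSet) (i : Fin (n-1)) :
    (G.subdivision n).edist (Sum.inl (eo2 e)) (Sum.inr (e, i)) ≤ ((n-1-(i:ℕ) : ℕ) : ℕ∞) := by
  have hi : (i : ℕ) < n - 1 := i.isLt
  have h0 : n - 2 < n - 1 := by omega
  have hadj : (G.subdivision n).Adj (Sum.inl (eo2 e)) (Sum.inr (e, ⟨n-2, h0⟩)) :=
    Or.inr ⟨rfl, rfl⟩
  calc (G.subdivision n).edist (Sum.inl (eo2 e)) (Sum.inr (e, i))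
      ≤ _ + _ := SimpleGraph.edist_triangle (v := Sum.inr (e, ⟨n-2, h0⟩))
    _ ≤ 1 + ((n-2-(i:ℕ) : ℕ) : ℕ∞) := by
        gcongr
        · exact edist_le_of_adj hadj
        · have := edist_chain e (n-2-(i:ℕ)) (i:ℕ) (n-2) i.isLt h0 (by omega)
          calc (G.subdivision n).edist (Sum.inr (e, ⟨n-2, h0⟩)) (Sum.inr (e, i))
              = (G.subdivision n).edist (Sum.inr (e, i)) (Sum.inr (e, ⟨n-2, h0⟩)) :=
                SimpleGraph.edist_comm
            _ ≤ _ := by simpa using this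
    _ = ((n-1-(i:ℕ) : ℕ) : ℕ∞) := by
        rw [show n-1-(i:ℕ) = (n-2-(i:ℕ)) + 1 by omega]
        push_cast; ring

lemma edist_tp_le (hn : 2 ≤ n) {u : V} {e : G.edgeSet} (hu : u ∈ (e : Sym2 V))
    (i : Fin (n-1)) :
    (G.subdivision n).edist (Sum.inl u) (Sum.inr (e, i)) ≤ ((tp n u e i : ℕ) : ℕ∞) := by
  rcases mem_edge_iff.mp hu with rfl | rfl
  · rw [tp_eo1]; exact edist_inl1_le hn e i
  · rw [tp_eo2]; exact edist_inl2_le hn e i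

end Walks

section Count

open Finset

lemma count_lemma {α : Type*} [DecidableEq α] {Δ r : ℕ} (hΔ : 2 ≤ Δ)
    (Q : Finset (α × ℕ)) (hcard : (Q.image Prod.fst).card ≤ Δ)
    (h1 : ∀ p ∈ Q, 1 ≤ p.2 ∧ p.2 ≤ 2*r+1)
    (h2 : ∀ p ∈ Q, ∀ q ∈ Q, p.1 ≠ q.1 → p.2 + q.2 ≤ 2*r+1) :
    Q.card ≤ Δ * r + 1 := by
  rcases Q.eq_empty_or_nonempty with rfl | hne
  · simp
  obtain ⟨p0, hp0, hmax⟩ := Q.exists_max_image Prod.snd hne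
  set M := p0.2 with hM
  by_cases hMr : M ≤ r
  · have hsub : Q ⊆ (Q.image Prod.fst) ×ˢ Finset.Icc 1 r := by
      intro p hp
      rw [Finset.mem_product]
      exact ⟨Finset.mem_image_of_mem _ hp,
        Finset.mem_Icc.mpr ⟨(h1 p hp).1, le_trans (hmax p hp) hMr⟩⟩
    calc Q.card ≤ _ := Finset.card_le_card hsub
      _ = (Q.image Prod.fst).card * (Finset.Icc 1 r).card := Finset.card_product _ _
      _ ≤ Δ * r := by
          rw [Nat.card_Icc]
          exact Nat.mul_le_mul hcard (by omega)
      _ ≤ Δ * r + 1 := le_self_add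
  · have hMle : M ≤ 2*r+1 := (h1 p0 hp0).2
    have hsplit := Finset.card_filter_add_card_filter_not
      (s := Q) (p := fun p => p.1 = p0.1)
    have hfib : (Q.filter (fun p => p.1 = p0.1)).card ≤ M := by
      have : (Q.filter (fun p => p.1 = p0.1)).card ≤ (Finset.Icc 1 M).card := by
        apply Finset.card_le_card_of_injOn Prod.snd
        · intro p hp
          rw [Finset.mem_coe, Finset.mem_filter] at hp
          exact Finset.mem_coe.mpr (Finset.mem_Icc.mpr ⟨(h1 p hp.1).1, hmax p hp.1⟩)
        · intro p hp q hq hpq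
          rw [Finset.mem_coe, Finset.mem_filter] at hp hq
          exact Prod.ext (hp.2.trans hq.2.symm) hpq
      rwa [Nat.card_Icc, Nat.add_sub_cancel] at this
    have hrest : (Q.filter (fun a => ¬(fun p => p.1 = p0.1) a)).card ≤ (Δ - 1) * (2*r+1-M) := by
      have hsub : Q.filter (fun a => ¬(fun p => p.1 = p0.1) a) ⊆
          ((Q.image Prod.fst).erase p0.1) ×ˢ Finset.Icc 1 (2*r+1-M) := by
        intro p hp
        rw [Finset.mem_filter] at hp
        rw [Finset.mem_product]
        refine ⟨Finset.mem_erase.mpr ⟨hp.2, Finset.mem_image_of_mem _ hp.1⟩, ?_⟩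
        refine Finset.mem_Icc.mpr ⟨(h1 p hp.1).1, ?_⟩
        have := h2 p hp.1 p0 hp0 hp.2
        omega
      calc _ ≤ _ := Finset.card_le_card hsub
        _ = ((Q.image Prod.fst).erase p0.1).card * (Finset.Icc 1 (2*r+1-M)).card :=
            Finset.card_product _ _
        _ ≤ (Δ - 1) * (2*r+1-M) := by
            rw [Nat.card_Icc]
            refine Nat.mul_le_mul ?_ (by omega)
            have := Finset.card_erase_le (s := Q.image Prod.fst) (a := p0.1)
            have hmem : p0.1 ∈ Q.image Prod.fst := Finset.mem_image_of_mem _ hp0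
            have := Finset.card_erase_of_mem hmem
            omega
    -- arithmetic
    obtain ⟨s, hs⟩ : ∃ s, M = r + 1 + s := ⟨M - (r+1), by omega⟩
    obtain ⟨t, ht⟩ : ∃ t, r = s + t := ⟨r - s, by omega⟩
    have h2rM : 2*r+1-M = t := by omega
    have e1 : Δ * r = Δ * s + Δ * t := by rw [ht, Nat.mul_add]
    have e2 : (Δ - 1) * t + t = Δ * t := by
      have : (Δ - 1) + 1 = Δ := by omega
      calc (Δ - 1) * t + t = ((Δ - 1) + 1) * t := by ring
        _ = Δ * t := by rw [this]
    have e3 : 2 * s ≤ Δ * s := Nat.mul_le_mul_right s hΔ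
    rw [h2rM] at hrest
    have hsplit' : (Q.filter (fun p => p.1 = p0.1)).card +
        (Q.filter (fun a => ¬(fun p => p.1 = p0.1) a)).card = Q.card := hsplit
    omega

end Count

section Upper

variable {V : Type*} {G : SimpleGraph V} {n : ℕ}

open Classical in
noncomputable def oth (u : V) {G : SimpleGraph V} (e : G.edgeSet) : V :=
  if u = eo1 e then eo2 e else eo1 e

lemma oth_adj {u : V} {e : G.edgeSet} (hu : u ∈ (e : Sym2 V)) : G.Adj u (oth u e) := by
  rcases mem_edge_iff.mp hu with rfl | rfl
  · rw [oth, if_pos rfl]; exact eo_adj e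
  · rw [oth, if_neg (Ne.symm (eo_ne e))]; exact (eo_adj e).symm

lemma oth_edge {u : V} {e : G.edgeSet} (hu : u ∈ (e : Sym2 V)) :
    (e : Sym2 V) = s(u, oth u e) := by
  rcases mem_edge_iff.mp hu with rfl | rfl
  · rw [oth, if_pos rfl]; exact (eo_mk e).symm
  · rw [oth, if_neg (Ne.symm (eo_ne e)), Sym2.eq_swap]; exact (eo_mk e).symm

lemma oth_inj {u : V} {e f : G.edgeSet} (hue : u ∈ (e : Sym2 V)) (huf : u ∈ (f : Sym2 V))
    (h : oth u e = oth u f) : e = f := by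
  apply Subtype.ext
  rw [oth_edge hue, oth_edge huf, h]

open Classical in
noncomputable def posfn (u : V) {G : SimpleGraph V} (n : ℕ) :
    (V ⊕ (G.edgeSet × Fin (n-1))) → V × ℕ := fun x => match x with
  | Sum.inl _ => (u, 0)
  | Sum.inr (e, i) => (oth u e, tp n u e i)

variable [Fintype V] [DecidableRel G.Adj]

/-- counting clique elements around a center vertex -/
lemma center_count {r : ℕ} (hG : 2 ≤ G.maxDegree) (hmn : 2*r+1 < n)
    {s t : Finset (V ⊕ (G.edgeSet × Fin (n-1)))} (ht : t ⊆ s)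
    (hed : ∀ x ∈ s, ∀ y ∈ s, x ≠ y → (G.subdivision n).edist x y ≤ ((2*r+1 : ℕ) : ℕ∞))
    (u : V)
    (hall : ∀ x ∈ t, ∃ e i, x = Sum.inr (e, i) ∧ u ∈ (e : Sym2 V) ∧ tp n u e i ≤ 2*r+1) :
    t.card ≤ G.maxDegree * r + 1 := by
  classical
  have hn : 2 ≤ n := by omega
  set Q := t.image (posfn u n) with hQ
  have hinj : Set.InjOn (posfn u n) (t : Set (V ⊕ (G.edgeSet × Fin (n-1)))) := by
    intro x hx y hy hpq
    obtain ⟨e, i, hxe, hue, -⟩ := hall x hx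
    obtain ⟨f, j, hye, huf, -⟩ := hall y hy
    rw [hxe, hye] at hpq ⊢
    simp only [posfn, Prod.mk.injEq] at hpq
    obtain ⟨h1, h2⟩ := hpq
    have hef : e = f := oth_inj hue huf h1
    subst hef
    rw [tp_inj h2]
  have hcardQ : Q.card = t.card := Finset.card_image_of_injOn hinj
  rw [← hcardQ]
  refine count_lemma hG Q ?_ ?_ ?_
  · -- image of fst within neighbors of u
    have hsub : Q.image Prod.fst ⊆ G.neighborFinset u := by
      intro w hw
      obtain ⟨p, hp, hpw⟩ := Finset.mem_image.mp hw
      obtain ⟨x, hx, hxp⟩ := Finset.mem_image.mp hp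
      obtain ⟨e, i, hxe, hue, -⟩ := hall x hx
      rw [hxe] at hxp
      simp only [posfn] at hxp
      rw [← hxp] at hpw
      simp only at hpw
      rw [← hpw]
      exact (G.mem_neighborFinset u _).mpr (oth_adj hue)
    calc (Q.image Prod.fst).card ≤ (G.neighborFinset u).card := Finset.card_le_card hsub
      _ = G.degree u := (G.card_neighborFinset_eq_degree u)
      _ ≤ G.maxDegree := G.degree_le_maxDegree u
  · intro p hp
    obtain ⟨x, hx, hxp⟩ := Finset.mem_image.mp hp
    obtain ⟨e, i, hxe, hue, htp⟩ := hall x hx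
    rw [hxe] at hxp
    simp only [posfn] at hxp
    rw [← hxp]
    exact ⟨tp_ge_one hn u e i, htp⟩
  · intro p hp q hq hpq
    obtain ⟨x, hx, hxp⟩ := Finset.mem_image.mp hp
    obtain ⟨y, hy, hyq⟩ := Finset.mem_image.mp hq
    obtain ⟨e, i, hxe, hue, -⟩ := hall x hx
    obtain ⟨f, j, hye, huf, -⟩ := hall y hy
    rw [hxe] at hxp; rw [hye] at hyq
    simp only [posfn] at hxp hyq
    rw [← hxp, ← hyq] at hpq ⊢
    simp only at hpq ⊢
    have hef : e ≠ f := fun hc => hpq (by rw [hc])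
    have hxy : x ≠ y := by
      rw [hxe, hye]
      intro hcon
      exact hef (congrArg Prod.fst (Sum.inr_injective hcon))
    have h := hed x (ht hx) y (ht hy) hxy
    rw [hxe, hye] at h
    obtain ⟨v, hv1, hv2, hvs⟩ := edist_inr_inr_ne hn hmn (Ne.symm hef) h
    have hvu : v = u := common_vertex_unique hef hv1 hv2 hue huf
    rw [hvu] at hvs
    exact hvs

lemma clique_card_le (hG : 2 ≤ G.maxDegree) {r : ℕ} (hmn : 2*r+1 < n)
    (s : Finset (V ⊕ (G.edgeSet × Fin (n-1))))
    (hs : ((G.subdivision n).power (2*r+1)).IsClique s) :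
    s.card ≤ G.maxDegree * r + 2 := by
  classical
  have hn : 2 ≤ n := by omega
  have hed : ∀ x ∈ s, ∀ y ∈ s, x ≠ y →
      (G.subdivision n).edist x y ≤ ((2*r+1 : ℕ) : ℕ∞) := by
    intro x hx y hy hne
    exact (power_adj_edist.mp (hs hx hy hne)).2
  by_cases hinl : ∃ u, Sum.inl u ∈ s
  · obtain ⟨u, hu⟩ := hinl
    have hall : ∀ x ∈ s.erase (Sum.inl u), ∃ e i, x = Sum.inr (e, i) ∧
        u ∈ (e : Sym2 V) ∧ tp n u e i ≤ 2*r+1 := by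
      intro x hx
      obtain ⟨hxne, hxs⟩ := Finset.mem_erase.mp hx
      have h := hed _ hu x hxs (Ne.symm hxne)
      rcases x with w | ⟨e, i⟩
      · exact absurd (edist_inl_inl hn hmn h) (fun hc => hxne (by rw [hc]))
      · refine ⟨e, i, rfl, ?_, ?_⟩
        · rcases edist_inl_inr hn hmn h with ⟨heq, -⟩ | ⟨heq, -⟩
          · rw [heq]; exact mem_edge_iff.mpr (Or.inl rfl)
          · rw [heq]; exact mem_edge_iff.mpr (Or.inr rfl)
        · rcases edist_inl_inr hn hmn h with ⟨heq, hle⟩ | ⟨heq, hle⟩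
          · rw [heq, tp_eo1]; exact hle
          · rw [heq, tp_eo2]; exact hle
    have hc := center_count hG hmn (Finset.erase_subset _ _) hed u hall
    have := Finset.card_erase_of_mem hu
    have hpos : 1 ≤ s.card := Finset.card_pos.mpr ⟨_, hu⟩
    omega
  · push_neg at hinl
    have hall0 : ∀ x ∈ s, ∃ e i, x = Sum.inr (e, i) := by
      intro x hx
      rcases x with w | ⟨e, i⟩
      · exact absurd hx (hinl w)
      · exact ⟨e, i, rfl⟩
    rcases s.eq_empty_or_nonempty with rfl | ⟨x0, hx0⟩
    · simp
    obtain ⟨e0, i0, hx0e⟩ := hall0 x0 hx0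
    by_cases hsame : ∀ x ∈ s, ∀ (f : G.edgeSet) (j : Fin (n-1)), x = Sum.inr (f, j) → f = e0
    · -- all on one edge
      set idx : (V ⊕ (G.edgeSet × Fin (n-1))) → ℕ := fun x => match x with
        | Sum.inl _ => 0
        | Sum.inr (_, i) => (i : ℕ) with hidx
      set T := s.image idx with hT
      have hinj : Set.InjOn idx (s : Set (V ⊕ (G.edgeSet × Fin (n-1)))) := by
        intro x hx y hy hxy
        obtain ⟨e, i, hxe⟩ := hall0 x hx
        obtain ⟨f, j, hye⟩ := hall0 y hy
        have he : e = e0 := hsame x hx e i hxe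
        have hf : f = e0 := hsame y hy f j hye
        subst he; subst hf
        rw [hxe, hye] at hxy ⊢
        simp only [idx] at hxy
        rw [Fin.ext hxy]
      have hcardT : T.card = s.card := Finset.card_image_of_injOn hinj
      obtain ⟨M, hM, hMmax⟩ := T.exists_max_image id ⟨_, Finset.mem_image_of_mem idx hx0⟩
      obtain ⟨xM, hxM, hxMe⟩ := Finset.mem_image.mp hM
      have hsub : T ⊆ Finset.Icc (M - (2*r+1)) M := by
        intro a ha
        obtain ⟨x, hx, hxa⟩ := Finset.mem_image.mp ha
        have hle : a ≤ M := hMmax a ha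
        rcases eq_or_ne x xM with rfl | hne
        · rw [hxa] at hxMe
          rw [hxMe] at hle ⊢
          exact Finset.mem_Icc.mpr ⟨by omega, le_refl _⟩
        · obtain ⟨e, i, hxe⟩ := hall0 x hx
          obtain ⟨f, j, hMe'⟩ := hall0 xM hxM
          have he : e = e0 := hsame x hx e i hxe
          have hf : f = e0 := hsame xM hxM f j hMe'
          subst he; subst hf
          have h := hed x hx xM hxM hne
          rw [hxe, hMe'] at h
          have hgap := edist_inr_inr_same hn hmn h
          have hia : (i : ℕ) = a := by rw [← hxa, hxe]
          have hjM : (j : ℕ) = M := by rw [← hxMe, hMe']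
          rw [hia, hjM] at hgap
          exact Finset.mem_Icc.mpr ⟨by omega, hle⟩
      have h2r : 2*r ≤ G.maxDegree * r := Nat.mul_le_mul_right r hG
      calc s.card = T.card := hcardT.symm
        _ ≤ (Finset.Icc (M - (2*r+1)) M).card := Finset.card_le_card hsub
        _ = M + 1 - (M - (2*r+1)) := Nat.card_Icc _ _
        _ ≤ G.maxDegree * r + 2 := by omega
    · -- at least two edges: find center
      push_neg at hsame
      obtain ⟨y0, hy0, f0, j0, hy0e, hf0⟩ := hsame
      have hxy0 : x0 ≠ y0 := by
        rw [hx0e, hy0e]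
        intro hcon
        exact hf0 (congrArg Prod.fst (Sum.inr_injective hcon)).symm
      have h00 := hed x0 hx0 y0 hy0 hxy0
      rw [hx0e, hy0e] at h00
      obtain ⟨u, hue0, huf0, hus⟩ := edist_inr_inr_ne hn hmn hf0 h00
      have hef0 : e0 ≠ f0 := fun hc => hf0 (hc.symm)
      -- u is a center
      have hcenter : ∀ x ∈ s, ∀ (g : G.edgeSet) (k : Fin (n-1)), x = Sum.inr (g, k) →
          u ∈ (g : Sym2 V) := by
        intro x hx g k hxe
        by_cases hge : g = e0
        · rw [hge]; exact hue0
        by_cases hgf : g = f0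
        · rw [hgf]; exact huf0
        have hxx0 : x ≠ x0 := by
          rw [hxe, hx0e]; intro hcon
          exact hge (congrArg Prod.fst (Sum.inr_injective hcon))
        have hxy0' : x ≠ y0 := by
          rw [hxe, hy0e]; intro hcon
          exact hgf (congrArg Prod.fst (Sum.inr_injective hcon))
        have h1 := hed x0 hx0 x hx hxx0.symm
        rw [hx0e, hxe] at h1
        obtain ⟨c3, hc3e0, hc3g, hc3s⟩ := edist_inr_inr_ne hn hmn (fun hc => hge hc) h1
        have h2 := hed y0 hy0 x hx hxy0'.symm
        rw [hy0e, hxe] at h2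
        obtain ⟨c2, hc2f0, hc2g, hc2s⟩ := edist_inr_inr_ne hn hmn (fun hc => hgf hc) h2
        by_cases hc3u : c3 = u
        · rw [← hc3u]; exact hc3g
        by_cases hc2u : c2 = u
        · rw [← hc2u]; exact hc2g
        exfalso
        have hc23 : c3 ≠ c2 := by
          intro hc
          exact hc3u (common_vertex_unique hef0 hc3e0 (hc ▸ hc2f0) hue0 huf0)
        have S1 : tp n u e0 i0 + tp n c3 e0 i0 = n :=
          tp_add_tp hn i0 (fun hc => hc3u hc.symm) hue0 hc3e0
        have S2 : tp n u f0 j0 + tp n c2 f0 j0 = n :=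
          tp_add_tp hn j0 (fun hc => hc2u hc.symm) huf0 hc2f0
        have S3 : tp n c3 g k + tp n c2 g k = n := tp_add_tp hn k hc23 hc3g hc2g
        omega
      -- positions bounded
      have hall : ∀ x ∈ s, ∃ e i, x = Sum.inr (e, i) ∧
          u ∈ (e : Sym2 V) ∧ tp n u e i ≤ 2*r+1 := by
        intro x hx
        obtain ⟨g, k, hxe⟩ := hall0 x hx
        refine ⟨g, k, hxe, hcenter x hx g k hxe, ?_⟩
        by_cases hge : g = e0
        · subst hge
          have hxy0' : x ≠ y0 := by
            rw [hxe, hy0e]; intro hcon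
            exact hf0 (congrArg Prod.fst (Sum.inr_injective hcon)).symm
          have h1 := hed x hx y0 hy0 hxy0'
          rw [hxe, hy0e] at h1
          obtain ⟨v, hv1, hv2, hvs⟩ := edist_inr_inr_ne hn hmn hf0 h1
          have hvu : v = u := common_vertex_unique hef0 hv1 hv2 hue0 huf0
          rw [hvu] at hvs
          have := tp_ge_one hn u f0 j0
          omega
        · have hxx0 : x ≠ x0 := by
            rw [hxe, hx0e]; intro hcon
            exact hge (congrArg Prod.fst (Sum.inr_injective hcon))
          have h1 := hed x hx x0 hx0 hxx0
          rw [hxe, hx0e] at h1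
          obtain ⟨v, hv1, hv2, hvs⟩ := edist_inr_inr_ne hn hmn (fun hc => hge hc.symm) h1
          have hgu : u ∈ (g : Sym2 V) := hcenter x hx g k hxe
          have hvu : v = u := common_vertex_unique (fun hc => hge hc) hv1 hv2 hgu hue0
          rw [hvu] at hvs
          have := tp_ge_one hn u e0 i0
          omega
      have hc := center_count hG hmn (subset_refl s) hed u hall
      omega

end Upper

section Lower

variable {V : Type*} {G : SimpleGraph V} {n : ℕ}

open Classical in
noncomputable def phi (G : SimpleGraph V) (n : ℕ) (v : V) (p : V × ℕ) :
    V ⊕ (G.edgeSet × Fin (n-1)) :=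
  if h : G.Adj v p.1 ∧ 1 ≤ p.2 ∧ p.2 ≤ n - 1 then
    Sum.inr (⟨s(v, p.1), G.mem_edgeSet.mpr h.1⟩,
      if v = eo1 (⟨s(v, p.1), G.mem_edgeSet.mpr h.1⟩ : G.edgeSet) then
        ⟨p.2 - 1, by obtain ⟨-, h1, h2⟩ := h; omega⟩
      else ⟨n - 1 - p.2, by obtain ⟨-, h1, h2⟩ := h; omega⟩)
  else Sum.inl v

lemma phi_spec {v : V} {p : V × ℕ} (hp : G.Adj v p.1 ∧ 1 ≤ p.2 ∧ p.2 ≤ n - 1) :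
    ∃ (e : G.edgeSet) (i : Fin (n-1)), phi G n v p = Sum.inr (e, i) ∧
      (e : Sym2 V) = s(v, p.1) ∧ tp n v e i = p.2 := by
  rw [phi, dif_pos hp]
  refine ⟨_, _, rfl, rfl, ?_⟩
  obtain ⟨-, h1, h2⟩ := hp
  unfold tp
  split
  · show p.2 - 1 + 1 = p.2
    omega
  · show n - 1 - (n - 1 - p.2) = p.2
    omega

lemma tp_gap {u : V} {e : G.edgeSet} {i j : Fin (n-1)} :
    max (i:ℕ) (j:ℕ) - min (i:ℕ) (j:ℕ) = max (tp n u e i) (tp n u e j) - min (tp n u e i) (tp n u e j) := by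
  have hi : (i : ℕ) < n - 1 := i.isLt
  have hj : (j : ℕ) < n - 1 := j.isLt
  unfold tp
  split <;> omega

lemma sym2_vadj_inj {v a b : V} (ha : G.Adj v a) (h : s(v, a) = s(v, b)) : a = b := by
  rcases Sym2.eq_iff.mp h with ⟨-, h2⟩ | ⟨h1, h2⟩
  · exact h2
  · exact absurd (h2 ▸ ha) (G.irrefl)

variable [Fintype V] [DecidableRel G.Adj]

lemma exists_big_clique (hG : 2 ≤ G.maxDegree) {r : ℕ} (hmn : 2*r+1 < n) :
    ∃ s : Finset (V ⊕ (G.edgeSet × Fin (n-1))),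
      ((G.subdivision n).power (2*r+1)).IsNClique (G.maxDegree * r + 2) s := by
  classical
  have hn : 2 ≤ n := by omega
  have hr1 : r + 1 ≤ n - 1 := by omega
  have hV : Nonempty V := by
    by_contra h
    have h0 : G.maxDegree ≤ 0 :=
      G.maxDegree_le_of_forall_degree_le 0 (fun v => absurd (Nonempty.intro v) h)
    omega
  obtain ⟨v, hv⟩ := G.exists_maximal_degree_vertex
  have hdeg : 2 ≤ G.degree v := hv ▸ hG
  obtain ⟨w0, hw0⟩ := Finset.card_pos.mp
    (by rw [G.card_neighborFinset_eq_degree]; omega : 0 < (G.neighborFinset v).card)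
  have hw0adj : G.Adj v w0 := (G.mem_neighborFinset v w0).mp hw0
  set T : Finset (V × ℕ) :=
    (G.neighborFinset v ×ˢ Finset.Icc 1 r) ∪ {(w0, r+1)} with hT
  have hTmem : ∀ p ∈ T, G.Adj v p.1 ∧ 1 ≤ p.2 ∧ p.2 ≤ r + 1 := by
    intro p hp
    rcases Finset.mem_union.mp hp with hp | hp
    · rw [Finset.mem_product] at hp
      obtain ⟨h1, h2⟩ := hp
      rw [Finset.mem_Icc] at h2
      exact ⟨(G.mem_neighborFinset v _).mp h1, h2.1, by omega⟩
    · rw [Finset.mem_singleton] at hp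
      rw [hp]
      exact ⟨hw0adj, by omega, le_refl _⟩
  have hTvalid : ∀ p ∈ T, G.Adj v p.1 ∧ 1 ≤ p.2 ∧ p.2 ≤ n - 1 := by
    intro p hp
    obtain ⟨h1, h2, h3⟩ := hTmem p hp
    exact ⟨h1, h2, by omega⟩
  have hTcard : T.card = G.maxDegree * r + 1 := by
    rw [hT, Finset.card_union_of_disjoint, Finset.card_product, Nat.card_Icc,
      Finset.card_singleton, G.card_neighborFinset_eq_degree, ← hv]
    · have hrr : r + 1 - 1 = r := by omega
      rw [hrr]
    · rw [Finset.disjoint_singleton_right]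
      intro hmem
      rw [Finset.mem_product, Finset.mem_Icc] at hmem
      omega
  -- injectivity
  have hinj : Set.InjOn (phi G n v) (T : Set (V × ℕ)) := by
    intro p hp q hq hpq
    obtain ⟨e, i, he1, he2, he3⟩ := phi_spec (hTvalid p hp)
    obtain ⟨f, j, hf1, hf2, hf3⟩ := phi_spec (hTvalid q hq)
    rw [he1, hf1] at hpq
    obtain ⟨h1, h2⟩ := Prod.mk.injEq _ _ _ _ ▸ Sum.inr_injective hpq
    have hef : e = f := h1
    subst hef
    have hp1 : p.1 = q.1 := sym2_vadj_inj (hTvalid p hp).1 (he2.symm.trans hf2)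
    have hp2 : p.2 = q.2 := by
      rw [← he3, ← hf3, h2]
    exact Prod.ext hp1 hp2
  -- distances to the center
  have hdc : ∀ p ∈ T, (G.subdivision n).edist (Sum.inl v) (phi G n v p) ≤ ((p.2 : ℕ) : ℕ∞) := by
    intro p hp
    obtain ⟨e, i, he1, he2, he3⟩ := phi_spec (hTvalid p hp)
    rw [he1, ← he3]
    exact edist_tp_le hn (by rw [he2]; exact Sym2.mem_mk_left _ _) i
  set S := insert (Sum.inl v) (T.image (phi G n v)) with hS
  have hnotin : (Sum.inl v : V ⊕ (G.edgeSet × Fin (n-1))) ∉ T.image (phi G n v) := by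
    intro hmem
    obtain ⟨p, hp, hpe⟩ := Finset.mem_image.mp hmem
    obtain ⟨e, i, he1, -, -⟩ := phi_spec (hTvalid p hp)
    rw [he1] at hpe
    exact Sum.inr_ne_inl hpe
  refine ⟨S, ?_, ?_⟩
  · -- clique
    intro x hx y hy hxy
    rw [Finset.coe_insert, Set.mem_insert_iff] at hx hy
    rw [power_adj_edist]
    refine ⟨hxy, ?_⟩
    rcases hx with rfl | hx <;> rcases hy with rfl | hy
    · exact absurd rfl hxy
    · obtain ⟨p, hp, hpe⟩ := Finset.mem_image.mp hy
      rw [← hpe]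
      refine le_trans (hdc p hp) ?_
      exact_mod_cast (by obtain ⟨-, -, h3⟩ := hTmem p hp; omega : p.2 ≤ 2*r+1)
    · obtain ⟨p, hp, hpe⟩ := Finset.mem_image.mp hx
      rw [← hpe, SimpleGraph.edist_comm]
      refine le_trans (hdc p hp) ?_
      exact_mod_cast (by obtain ⟨-, -, h3⟩ := hTmem p hp; omega : p.2 ≤ 2*r+1)
    · obtain ⟨p, hp, hpe⟩ := Finset.mem_image.mp hx
      obtain ⟨q, hq, hqe⟩ := Finset.mem_image.mp hy
      have hpq : p ≠ q := by
        intro h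
        exact hxy (by rw [← hpe, ← hqe, h])
      by_cases h11 : p.1 = q.1
      · -- same edge
        obtain ⟨e, i, he1, he2, he3⟩ := phi_spec (hTvalid p hp)
        obtain ⟨f, j, hf1, hf2, hf3⟩ := phi_spec (hTvalid q hq)
        have hef : e = f := Subtype.ext (by rw [he2, hf2, h11])
        subst hef
        rw [← hpe, ← hqe, he1, hf1]
        refine le_trans (edist_same_le e i j) ?_
        have hgap := tp_gap (u := v) (e := e) (i := i) (j := j)
        rw [he3, hf3] at hgap
        obtain ⟨-, hp2, hp3⟩ := hTmem p hp
        obtain ⟨-, hq2, hq3⟩ := hTmem q hq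
        exact_mod_cast (by omega :
          max (i:ℕ) (j:ℕ) - min (i:ℕ) (j:ℕ) ≤ 2*r+1)
      · -- different edges : go through the center
        have hsum : p.2 + q.2 ≤ 2*r+1 := by
          obtain ⟨-, hp2, hp3⟩ := hTmem p hp
          obtain ⟨-, hq2, hq3⟩ := hTmem q hq
          rcases Finset.mem_union.mp hp with hp' | hp'
          · rw [Finset.mem_product, Finset.mem_Icc] at hp'
            omega
          · rcases Finset.mem_union.mp hq with hq' | hq'
            · rw [Finset.mem_product, Finset.mem_Icc] at hq'
              omega
            · rw [Finset.mem_singleton] at hp' hq'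
              exact absurd (hp'.trans hq'.symm) hpq
        rw [← hpe, ← hqe]
        calc (G.subdivision n).edist (phi G n v p) (phi G n v q)
            ≤ (G.subdivision n).edist (phi G n v p) (Sum.inl v) +
              (G.subdivision n).edist (Sum.inl v) (phi G n v q) :=
              SimpleGraph.edist_triangle
          _ ≤ ((p.2 : ℕ) : ℕ∞) + ((q.2 : ℕ) : ℕ∞) := by
              gcongr
              · rw [SimpleGraph.edist_comm]; exact hdc p hp
              · exact hdc q hq
          _ ≤ _ := by exact_mod_cast hsum
  · -- cardinality
    rw [hS, Finset.card_insert_of_notMem hnotin, Finset.card_image_of_injOn hinj, hTcard]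

end Lower

theorem cliqueNum_fractional_power_odd {V : Type*} [Fintype V]
    (G : SimpleGraph V) [DecidableRel G.Adj] (hG : 2 ≤ G.maxDegree)
    (m n : ℕ) (hm : 0 < m) (hmn : m < n) (hmo : Odd m) :
    ((G.subdivision n).power m).cliqueNum = (m - 1) / 2 * G.maxDegree + 2 := by
  classical
  obtain ⟨r, hr⟩ := hmo
  have hm' : m = 2*r+1 := by omega
  subst hm'
  have hrw : (2*r+1-1)/2 = r := by omega
  rw [hrw]
  have hmn' : 2*r+1 < n := hmn
  apply le_antisymm
  · obtain ⟨s, hsnc⟩ := ((G.subdivision n).power (2*r+1)).exists_isNClique_cliqueNum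
    have hle := clique_card_le hG hmn' s hsnc.isClique
    rw [hsnc.card_eq] at hle
    rw [mul_comm r G.maxDegree]
    exact hle
  · obtain ⟨s, hs⟩ := exists_big_clique hG hmn'
    have hle := IsClique.card_le_cliqueNum (tc := hs.isClique)
    rw [hs.card_eq] at hle
    rw [mul_comm r G.maxDegree]
    exact hle
end

section
/- Let G be a graph and m < n positive integers. If the chromatic number of G^{m/n} equals its clique number, then the chromatic number of G^{m/(n+m+1)} equals its clique number. -/
open SimpleGraph

namespace SubdivAux

open Sum

variable {V : Type*} {G : SimpleGraph V} {N : ℕ}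

/-- First endpoint of an edge. -/
noncomputable def eu (e : G.edgeSet) : V := (Quot.out e.1).1
/-- Second endpoint of an edge. -/
noncomputable def ev (e : G.edgeSet) : V := (Quot.out e.1).2

lemma sym2_eq (e : G.edgeSet) : s(eu e, ev e) = e.1 := by
  show Quot.mk (Sym2.Rel V) ((Quot.out e.1).1, (Quot.out e.1).2) = e.1
  rw [Prod.mk.eta]
  exact Quot.out_eq e.1

lemma adj_eu_ev (e : G.edgeSet) : G.Adj (eu e) (ev e) := by
  rw [← G.mem_edgeSet, sym2_eq]; exact e.2

lemma eu_ne_ev (e : G.edgeSet) : eu e ≠ ev e := (adj_eu_ev e).ne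

/-- Two distinct edges share at most one endpoint. -/
lemma edge_eq_of_two_shared {e f : G.edgeSet} {t t' : V} (htt' : t ≠ t')
    (h1 : t = eu e ∨ t = ev e) (h2 : t' = eu e ∨ t' = ev e)
    (h3 : t = eu f ∨ t = ev f) (h4 : t' = eu f ∨ t' = ev f) : e = f := by
  have m1 : t ∈ e.1 := by rw [← sym2_eq e, Sym2.mem_iff]; tauto
  have m2 : t' ∈ e.1 := by rw [← sym2_eq e, Sym2.mem_iff]; tauto
  have m3 : t ∈ f.1 := by rw [← sym2_eq f, Sym2.mem_iff]; tauto
  have m4 : t' ∈ f.1 := by rw [← sym2_eq f, Sym2.mem_iff]; tauto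
  exact Subtype.ext (Sym2.eq_of_ne_mem htt' m1 m2 m3 m4)

section AdjLemmas

lemma adj_inl_inr {u : V} {e : G.edgeSet} {i : Fin (N-1)} :
    (G.subdivision N).Adj (inl u) (inr (e, i)) ↔
      ((u = eu e ∧ (i : ℕ) = 0) ∨ (u = ev e ∧ (i : ℕ) = N - 2)) := Iff.rfl

lemma adj_inr_inr {e f : G.edgeSet} {i j : Fin (N-1)} :
    (G.subdivision N).Adj (inr (e, i)) (inr (f, j)) ↔
      (e = f ∧ ((i : ℕ) + 1 = (j : ℕ) ∨ (j : ℕ) + 1 = (i : ℕ))) := Iff.rfl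

lemma adj_inl_inl {u v : V} :
    (G.subdivision N).Adj (inl u) (inl v) ↔ (N = 1 ∧ G.Adj u v) := Iff.rfl

lemma adj_inr_inl {u : V} {e : G.edgeSet} {i : Fin (N-1)} :
    (G.subdivision N).Adj (inr (e, i)) (inl u) ↔
      ((u = eu e ∧ (i : ℕ) = 0) ∨ (u = ev e ∧ (i : ℕ) = N - 2)) := Iff.rfl

end AdjLemmas

/-- `Att N x t k` : vertex `x` of the `N`-subdivision is attached to the
original vertex `t`, at distance `k` along its own edge. -/
def Att (N : ℕ) {V : Type*} {G : SimpleGraph V}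
    (x : V ⊕ (G.edgeSet × Fin (N-1))) (t : V) (k : ℕ) : Prop :=
  match x with
  | inl s => s = t ∧ k = 0
  | inr (e, i) => (t = eu e ∧ k = (i:ℕ)+1) ∨ (t = ev e ∧ k = N-1-(i:ℕ))

lemma att_inl {t s : V} {k : ℕ} :
    Att N (inl (s : V) : V ⊕ (G.edgeSet × Fin (N-1))) t k ↔ (s = t ∧ k = 0) := Iff.rfl

lemma att_inr {t : V} {e : G.edgeSet} {i : Fin (N-1)} {k : ℕ} :
    Att N (inr (e, i) : V ⊕ (G.edgeSet × Fin (N-1))) t k ↔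
      ((t = eu e ∧ k = (i:ℕ)+1) ∨ (t = ev e ∧ k = N-1-(i:ℕ))) := Iff.rfl

lemma exists_walk_seg (e : G.edgeSet) : ∀ (d : ℕ) (i j : Fin (N-1)), (j:ℕ) = (i:ℕ) + d →
    ∃ W : (G.subdivision N).Walk (inr (e,i)) (inr (e,j)), W.length = d := by
  intro d
  induction d with
  | zero =>
    intro i j hj
    have : i = j := Fin.ext (by omega)
    subst this
    exact ⟨.nil, rfl⟩
  | succ d ih =>
    intro i j hj
    have hlt := j.isLt
    have hd : (i:ℕ)+d < N-1 := by omega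
    obtain ⟨W, hW⟩ := ih i ⟨(i:ℕ)+d, hd⟩ rfl
    have hadj : (G.subdivision N).Adj (inr (e, ⟨(i:ℕ)+d, hd⟩)) (inr (e,j)) :=
      adj_inr_inr.mpr ⟨rfl, Or.inl (by simp; omega)⟩
    exact ⟨W.concat hadj, by rw [SimpleGraph.Walk.length_concat, hW]⟩

lemma exists_walk_att {x : V ⊕ (G.edgeSet × Fin (N-1))} {t : V} {k : ℕ}
    (h : Att N x t k) : ∃ W : (G.subdivision N).Walk (inl t) x, W.length = k := by
  rcases x with s | ⟨e, i⟩
  · obtain ⟨rfl, rfl⟩ := h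
    exact ⟨.nil, rfl⟩
  · have hlt := i.isLt
    rcases h with ⟨rfl, rfl⟩ | ⟨rfl, rfl⟩
    · have h0 : (0:ℕ) < N-1 := by omega
      obtain ⟨W, hW⟩ := exists_walk_seg e (i:ℕ) ⟨0, h0⟩ i (by simp)
      have hadj : (G.subdivision N).Adj (inl (eu e)) (inr (e, ⟨0, h0⟩)) :=
        adj_inl_inr.mpr (Or.inl ⟨rfl, rfl⟩)
      exact ⟨.cons hadj W, by simp [hW]⟩
    · have hl : N-2 < N-1 := by omega
      obtain ⟨W, hW⟩ := exists_walk_seg e (N-2-(i:ℕ)) i ⟨N-2, hl⟩ (by simp; omega)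
      have hadj : (G.subdivision N).Adj (inr (e, ⟨N-2, hl⟩)) (inl (ev e)) :=
        adj_inr_inl.mpr (Or.inr ⟨rfl, rfl⟩)
      exact ⟨(W.concat hadj).reverse,
        by rw [SimpleGraph.Walk.length_reverse, SimpleGraph.Walk.length_concat, hW]; omega⟩

lemma power_adj_of_walk {m : ℕ} {x y : V ⊕ (G.edgeSet × Fin (N-1))} (hxy : x ≠ y)
    (W : (G.subdivision N).Walk x y) (hW : W.length ≤ m) :
    ((G.subdivision N).power m).Adj x y :=
  ⟨hxy, ⟨W⟩, le_trans (SimpleGraph.dist_le W) hW⟩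

/-- Locality relation: `x` and `y` are close (within `L`) in a "local" way. -/
def Loc (N : ℕ) {V : Type*} {G : SimpleGraph V} (L : ℕ)
    (x y : V ⊕ (G.edgeSet × Fin (N-1))) : Prop :=
  x = y ∨
  (∃ (e : G.edgeSet) (i j : Fin (N-1)), x = inr (e,i) ∧ y = inr (e,j) ∧
      (i:ℕ) ≤ (j:ℕ) + L ∧ (j:ℕ) ≤ (i:ℕ) + L) ∨
  (∃ t k l, Att N x t k ∧ Att N y t l ∧ k + l ≤ L)

lemma loc_mono {L L' : ℕ} (h : L ≤ L') {x y : V ⊕ (G.edgeSet × Fin (N-1))} :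
    Loc N L x y → Loc N L' x y := by
  rintro (rfl | ⟨e,i,j,rfl,rfl,h1,h2⟩ | ⟨t,k,l,h1,h2,h3⟩)
  · exact Or.inl rfl
  · exact Or.inr (Or.inl ⟨e,i,j,rfl,rfl, by omega, by omega⟩)
  · exact Or.inr (Or.inr ⟨t,k,l,h1,h2, by omega⟩)

lemma att_of_adj_inl {u : V} {f : G.edgeSet} {j : Fin (N-1)}
    (h : (G.subdivision N).Adj (inl u) (inr (f,j))) :
    Att N (inr (f,j) : V ⊕ (G.edgeSet × Fin (N-1))) u 1 := by
  have hlt := j.isLt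
  rcases adj_inl_inr.mp h with ⟨rfl, hj⟩ | ⟨rfl, hj⟩
  · exact Or.inl ⟨rfl, by omega⟩
  · exact Or.inr ⟨rfl, by omega⟩

lemma loc_step {L : ℕ} {x z y : V ⊕ (G.edgeSet × Fin (N-1))} (hL : L + 1 ≤ N - 1)
    (hadj : (G.subdivision N).Adj x z) (hloc : Loc N L z y) : Loc N (L+1) x y := by
  rcases x with u | ⟨f, i⟩ <;> rcases z with w | ⟨f', j⟩
  · -- inl-inl adjacency impossible
    rcases adj_inl_inl.mp hadj with ⟨h1, -⟩
    omega
  · -- x = inl u, z = inr (f', j)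
    have hA : Att N (inr (f',j) : V ⊕ (G.edgeSet × Fin (N-1))) u 1 := att_of_adj_inl hadj
    rcases hloc with rfl | ⟨e,i₁,j₁,hz,hy,b1,b2⟩ | ⟨t,k,l,hzt,hyt,hsum⟩
    · exact Or.inr (Or.inr ⟨u, 0, 1, ⟨rfl, rfl⟩, hA, by omega⟩)
    · obtain ⟨he, hi⟩ : f' = e ∧ (j:ℕ) = (i₁:ℕ) := by
        simp only [inr.injEq, Prod.mk.injEq] at hz
        exact ⟨hz.1, congrArg Fin.val hz.2⟩
      subst he
      subst hy
      have hlt := j.isLt; have hlt1 := j₁.isLt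
      rcases hA with ⟨hu, hk⟩ | ⟨hu, hk⟩
      · exact Or.inr (Or.inr ⟨u, 0, (j₁:ℕ)+1, ⟨rfl, rfl⟩, Or.inl ⟨hu, rfl⟩, by omega⟩)
      · exact Or.inr (Or.inr ⟨u, 0, N-1-(j₁:ℕ), ⟨rfl, rfl⟩, Or.inr ⟨hu, rfl⟩, by omega⟩)
    · by_cases htu : t = u
      · subst htu
        exact Or.inr (Or.inr ⟨t, 0, l, ⟨rfl, rfl⟩, hyt, by omega⟩)
      · exfalso
        have hlt := j.isLt
        rcases hA with ⟨hu, hk⟩ | ⟨hu, hk⟩ <;>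
          rcases hzt with ⟨ht, hk'⟩ | ⟨ht, hk'⟩
        · exact htu (ht.trans hu.symm)
        · omega
        · omega
        · exact htu (ht.trans hu.symm)
  · -- x = inr (f,i), z = inl w
    have hA : Att N (inr (f,i) : V ⊕ (G.edgeSet × Fin (N-1))) w 1 :=
      att_of_adj_inl hadj.symm
    rcases hloc with rfl | ⟨e,i₁,j₁,hz,hy,b1,b2⟩ | ⟨t,k,l,hzt,hyt,hsum⟩
    · exact Or.inr (Or.inr ⟨w, 1, 0, hA, ⟨rfl, rfl⟩, by omega⟩)
    · exact absurd hz (by simp)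
    · obtain ⟨rfl, rfl⟩ := att_inl.mp hzt
      exact Or.inr (Or.inr ⟨w, 1, l, hA, hyt, by omega⟩)
  · -- x = inr (f,i), z = inr (f, j)
    obtain ⟨heq, hij⟩ := adj_inr_inr.mp hadj
    subst heq
    have hlti := i.isLt; have hltj := j.isLt
    rcases hloc with rfl | ⟨e,i₁,j₁,hz,hy,b1,b2⟩ | ⟨t,k,l,hzt,hyt,hsum⟩
    · exact Or.inr (Or.inl ⟨f, i, j, rfl, rfl, by omega, by omega⟩)
    · obtain ⟨he, hi⟩ : f = e ∧ (j:ℕ) = (i₁:ℕ) := by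
        simp only [inr.injEq, Prod.mk.injEq] at hz
        exact ⟨hz.1, congrArg Fin.val hz.2⟩
      subst he
      subst hy
      have hlt1 := j₁.isLt
      exact Or.inr (Or.inl ⟨f, i, j₁, rfl, rfl, by omega, by omega⟩)
    · rcases hzt with ⟨rfl, rfl⟩ | ⟨rfl, rfl⟩
      · exact Or.inr (Or.inr ⟨eu f, (i:ℕ)+1, l, Or.inl ⟨rfl, rfl⟩, hyt, by omega⟩)
      · exact Or.inr (Or.inr ⟨ev f, N-1-(i:ℕ), l, Or.inr ⟨rfl, rfl⟩, hyt, by omega⟩)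

lemma loc_of_walk {x y : V ⊕ (G.edgeSet × Fin (N-1))} (W : (G.subdivision N).Walk x y) :
    W.length ≤ N - 1 → Loc N W.length x y := by
  induction W with
  | nil => intro _; exact Or.inl rfl
  | cons hadj W ih =>
    intro hlen
    rw [SimpleGraph.Walk.length_cons] at hlen ⊢
    exact loc_step hlen hadj (ih (by omega))

lemma loc_of_power_adj {m : ℕ} (hmN : m ≤ N - 1) {x y : V ⊕ (G.edgeSet × Fin (N-1))}
    (h : ((G.subdivision N).power m).Adj x y) : x ≠ y ∧ Loc N m x y := by
  obtain ⟨hne, hreach, hdist⟩ := h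
  obtain ⟨W, hW⟩ := hreach.exists_walk_length_eq_dist
  refine ⟨hne, loc_mono (by omega) (loc_of_walk W (by omega))⟩
lemma power_adj_of_att {m : ℕ} {x y : V ⊕ (G.edgeSet × Fin (N-1))} {t : V} {k l : ℕ}
    (hne : x ≠ y) (hx : Att N x t k) (hy : Att N y t l) (h : k + l ≤ m) :
    ((G.subdivision N).power m).Adj x y := by
  obtain ⟨W1, h1⟩ := exists_walk_att hx
  obtain ⟨W2, h2⟩ := exists_walk_att hy
  exact power_adj_of_walk hne (W1.reverse.append W2)
    (by rw [SimpleGraph.Walk.length_append, SimpleGraph.Walk.length_reverse]; omega)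

lemma power_adj_seg {m : ℕ} (e : G.edgeSet) {i j : Fin (N-1)} (hne : (i:ℕ) ≠ (j:ℕ))
    (h1 : (i:ℕ) ≤ (j:ℕ) + m) (h2 : (j:ℕ) ≤ (i:ℕ) + m) :
    ((G.subdivision N).power m).Adj (inr (e,i)) (inr (e,j)) := by
  have hne' : (inr (e,i) : V ⊕ (G.edgeSet × Fin (N-1))) ≠ inr (e,j) := by
    simp only [ne_eq, inr.injEq, Prod.mk.injEq, true_and]
    exact fun hc => hne (congrArg Fin.val hc)
  rcases le_total (i:ℕ) (j:ℕ) with hle | hle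
  · obtain ⟨W, hW⟩ := exists_walk_seg e ((j:ℕ)-(i:ℕ)) i j (by omega)
    exact power_adj_of_walk hne' W (by omega)
  · obtain ⟨W, hW⟩ := exists_walk_seg e ((i:ℕ)-(j:ℕ)) j i (by omega)
    exact (power_adj_of_walk hne'.symm W (by omega)).symm

section HomDef

variable {m n : ℕ}

/-- The vertex map from the `(n+m+1)`-subdivision to the `n`-subdivision. -/
noncomputable def Fmap (hm : 0 < m) (hmn : m < n) :
    (V ⊕ (G.edgeSet × Fin ((n+m+1)-1))) → (V ⊕ (G.edgeSet × Fin (n-1)))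
  | inl u => inl u
  | inr (e, i) =>
    if _h1 : (i:ℕ) < n-1 then inr (e, ⟨(i:ℕ), by omega⟩)
    else if _h2 : (i:ℕ) = n-1 then inl (ev e)
    else inr (e, ⟨(i:ℕ) - (m+1), by have := i.isLt; omega⟩)

variable (hm : 0 < m) (hmn : m < n)

lemma Fmap_br1 {e : G.edgeSet} {i : Fin ((n+m+1)-1)} (h : (i:ℕ) < n-1) :
    Fmap (G := G) hm hmn (inr (e, i)) = inr (e, ⟨(i:ℕ), by omega⟩) := by
  simp only [Fmap, h, dif_pos]

lemma Fmap_br2 {e : G.edgeSet} {i : Fin ((n+m+1)-1)} (h : (i:ℕ) = n-1) :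
    Fmap (G := G) hm hmn (inr (e, i)) = inl (ev e) := by
  simp only [Fmap]
  rw [dif_neg (by omega), dif_pos h]

lemma Fmap_br3 {e : G.edgeSet} {i : Fin ((n+m+1)-1)} (h : n-1 < (i:ℕ)) :
    Fmap (G := G) hm hmn (inr (e, i)) =
      inr (e, ⟨(i:ℕ) - (m+1), by have := i.isLt; omega⟩) := by
  simp only [Fmap]
  rw [dif_neg (by omega), dif_neg (by omega)]

lemma att_F {x : V ⊕ (G.edgeSet × Fin ((n+m+1)-1))} {t : V} {k : ℕ}
    (hk : k ≤ m) (hx : Att (n+m+1) x t k) : Att n (Fmap (G := G) hm hmn x) t k := by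
  rcases x with s | ⟨e, i⟩
  · obtain ⟨rfl, rfl⟩ := hx
    exact ⟨rfl, rfl⟩
  · have hlt := i.isLt
    rcases hx with ⟨rfl, rfl⟩ | ⟨rfl, rfl⟩
    · rw [Fmap_br1 hm hmn (by omega)]
      exact Or.inl ⟨rfl, by simp⟩
    · rw [Fmap_br3 hm hmn (by omega)]
      exact Or.inr ⟨rfl, by simp; omega⟩

/-- `Fmap` is injective on pairs attached closely to a common vertex. -/
lemma Fmap_ne {x y : V ⊕ (G.edgeSet × Fin ((n+m+1)-1))} {t : V} {k l : ℕ}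
    (hxt : Att (n+m+1) x t k) (hyt : Att (n+m+1) y t l) (hsum : k + l ≤ m)
    (hne : x ≠ y) : Fmap (G := G) hm hmn x ≠ Fmap (G := G) hm hmn y := by
  have hinr : ∀ (e : G.edgeSet) (i : Fin ((n+m+1)-1)) (s : V) (c : ℕ), c ≤ m →
      Att (n+m+1) (inr (e,i) : V ⊕ (G.edgeSet × Fin ((n+m+1)-1))) s c →
      ∃ ii : Fin (n-1), Fmap (G := G) hm hmn (inr (e,i)) = inr (e, ii) ∧
        (((ii:ℕ) = (i:ℕ) ∧ s = eu e ∧ (i:ℕ) < n-1) ∨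
         ((ii:ℕ) = (i:ℕ)-(m+1) ∧ s = ev e ∧ n-1 < (i:ℕ))) := by
    intro e i s c hc hatt
    have hlt := i.isLt
    rcases hatt with ⟨rfl, rfl⟩ | ⟨rfl, rfl⟩
    · exact ⟨⟨(i:ℕ), by omega⟩, Fmap_br1 hm hmn (by omega), Or.inl ⟨rfl, rfl, by omega⟩⟩
    · exact ⟨⟨(i:ℕ)-(m+1), by omega⟩, Fmap_br3 hm hmn (by omega), Or.inr ⟨rfl, rfl, by omega⟩⟩
  intro hFeq
  rcases x with s | ⟨e, i⟩ <;> rcases y with s' | ⟨e', j⟩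
  · obtain ⟨rfl, -⟩ := hxt; obtain ⟨rfl, -⟩ := hyt
    exact hne rfl
  · obtain ⟨jj, hF, -⟩ := hinr e' j t l (by omega) hyt
    rw [hF] at hFeq; obtain ⟨rfl, -⟩ := hxt; simp [Fmap] at hFeq
  · obtain ⟨ii, hF, -⟩ := hinr e i t k (by omega) hxt
    rw [hF] at hFeq; obtain ⟨rfl, -⟩ := hyt; simp [Fmap] at hFeq
  · have hlti := i.isLt; have hltj := j.isLt
    obtain ⟨ii, hF, hcx⟩ := hinr e i t k (by omega) hxt
    obtain ⟨jj, hF', hcy⟩ := hinr e' j t l (by omega) hyt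
    rw [hF, hF'] at hFeq
    simp only [inr.injEq, Prod.mk.injEq] at hFeq
    obtain ⟨rfl, hidx⟩ := hFeq
    have hidx' : (ii:ℕ) = (jj:ℕ) := congrArg Fin.val hidx
    rcases hcx with ⟨hix, hsx, hrx⟩ | ⟨hix, hsx, hrx⟩ <;>
      rcases hcy with ⟨hiy, hsy, hry⟩ | ⟨hiy, hsy, hry⟩
    · exact hne (by simp only [inr.injEq, Prod.mk.injEq, true_and]; exact Fin.ext (by omega))
    · exact (eu_ne_ev e) (hsx.symm.trans hsy)
    · exact (eu_ne_ev e) (hsy.symm.trans hsx)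
    · exact hne (by simp only [inr.injEq, Prod.mk.injEq, true_and]; exact Fin.ext (by omega))

lemma same_edge_case (e : G.edgeSet) (i j : Fin ((n+m+1)-1))
    (hlt : (i:ℕ) < (j:ℕ)) (hb : (j:ℕ) ≤ (i:ℕ) + m) :
    ((G.subdivision n).power m).Adj (Fmap (G := G) hm hmn (inr (e,i)))
      (Fmap (G := G) hm hmn (inr (e,j))) := by
  have hlti := i.isLt; have hltj := j.isLt
  by_cases hj1 : (j:ℕ) < n-1
  · rw [Fmap_br1 hm hmn (by omega), Fmap_br1 hm hmn hj1]
    exact power_adj_seg e (by simp; omega) (by simp; omega) (by simp; omega)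
  · by_cases hj2 : (j:ℕ) = n-1
    · -- y is the special vertex, x is to its left
      rw [Fmap_br1 hm hmn (by omega), Fmap_br2 hm hmn hj2]
      exact power_adj_of_att (t := ev e) (k := n-1-(i:ℕ)) (l := 0) (by simp)
        (Or.inr ⟨rfl, rfl⟩) ⟨rfl, rfl⟩ (by omega)
    · -- j > n-1
      have hj3 : n-1 < (j:ℕ) := by omega
      by_cases hi1 : (i:ℕ) < n-1
      · rw [Fmap_br1 hm hmn hi1, Fmap_br3 hm hmn hj3]
        exact power_adj_seg e (by simp; omega) (by simp; omega) (by simp; omega)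
      · by_cases hi2 : (i:ℕ) = n-1
        · rw [Fmap_br2 hm hmn hi2, Fmap_br3 hm hmn hj3]
          exact power_adj_of_att (t := ev e) (k := 0) (l := n-1-((j:ℕ)-(m+1))) (by simp)
            ⟨rfl, rfl⟩ (Or.inr ⟨rfl, rfl⟩) (by omega)
        · rw [Fmap_br3 hm hmn (by omega), Fmap_br3 hm hmn hj3]
          exact power_adj_seg e (by simp; omega) (by simp; omega) (by simp; omega)

lemma Fmap_hom {x y : V ⊕ (G.edgeSet × Fin ((n+m+1)-1))}
    (h : ((G.subdivision (n+m+1)).power m).Adj x y) :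
    ((G.subdivision n).power m).Adj (Fmap (G := G) hm hmn x) (Fmap (G := G) hm hmn y) := by
  obtain ⟨hne, hloc⟩ := loc_of_power_adj (by omega) h
  rcases hloc with rfl | ⟨e, i, j, rfl, rfl, b1, b2⟩ | ⟨t, k, l, hxt, hyt, hsum⟩
  · exact absurd rfl hne
  · have hij : (i:ℕ) ≠ (j:ℕ) := by
      intro hc
      exact hne (by simp only [inr.injEq, Prod.mk.injEq, true_and]; exact Fin.ext hc)
    rcases Nat.lt_or_ge (i:ℕ) (j:ℕ) with hlt | hge
    · exact same_edge_case hm hmn e i j hlt (by omega)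
    · exact (same_edge_case hm hmn e j i (by omega) (by omega)).symm
  · exact power_adj_of_att (Fmap_ne hm hmn hxt hyt hsum hne)
      (att_F hm hmn (by omega) hxt) (att_F hm hmn (by omega) hyt) hsum

end HomDef
section CliqueT

variable {m n : ℕ}

lemma att_endpoint {e : G.edgeSet} {i : Fin (n-1)} {t : V} {k : ℕ}
    (h : Att n (inr (e,i) : V ⊕ (G.edgeSet × Fin (n-1))) t k) : t = eu e ∨ t = ev e := by
  rcases h with ⟨h, -⟩ | ⟨h, -⟩
  · exact Or.inl h
  · exact Or.inr h

lemma att_opp {x : V ⊕ (G.edgeSet × Fin (n-1))} {t t' : V} {k k' : ℕ}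
    (h : Att n x t k) (h' : Att n x t' k') (htt' : t ≠ t') : k + k' = n := by
  rcases x with s | ⟨e, i⟩
  · obtain ⟨rfl, -⟩ := h; obtain ⟨rfl, -⟩ := h'
    exact absurd rfl htt'
  · have hlt := i.isLt
    rcases h with ⟨rfl, rfl⟩ | ⟨rfl, rfl⟩ <;> rcases h' with ⟨h2, rfl⟩ | ⟨h2, rfl⟩
    · exact absurd h2.symm htt'
    · omega
    · omega
    · exact absurd h2.symm htt'

lemma loc_seg_bound (hmn : m < n) {e : G.edgeSet} {i j : Fin (n-1)}
    (hloc : Loc n m (inr (e,i) : V ⊕ (G.edgeSet × Fin (n-1))) (inr (e,j))) :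
    (i:ℕ) ≤ (j:ℕ) + m ∧ (j:ℕ) ≤ (i:ℕ) + m := by
  have hlti := i.isLt; have hltj := j.isLt
  rcases hloc with heq | ⟨e',i',j',hx,hy,b1,b2⟩ | ⟨t,k,l,hxt,hyt,hsum⟩
  · simp only [inr.injEq, Prod.mk.injEq] at heq
    have := congrArg Fin.val heq.2; omega
  · simp only [inr.injEq, Prod.mk.injEq] at hx hy
    have h1 := congrArg Fin.val hx.2; have h2 := congrArg Fin.val hy.2
    omega
  · rcases hxt with ⟨rfl, rfl⟩ | ⟨rfl, rfl⟩ <;> rcases hyt with ⟨h2, rfl⟩ | ⟨h2, rfl⟩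
    · omega
    · exact absurd h2 (eu_ne_ev e)
    · exact absurd h2.symm (eu_ne_ev e)
    · omega

/-- Shape of a vertex in a "star" clique around `t`. -/
def Shape (t : V) (x : V ⊕ (G.edgeSet × Fin (n-1))) : Prop :=
  x = inl t ∨ ∃ (e : G.edgeSet) (i : Fin (n-1)), x = inr (e,i) ∧ (t = eu e ∨ t = ev e)

lemma clique_structure (hm : 0 < m) (hmn : m < n)
    {s : Finset (V ⊕ (G.edgeSet × Fin (n-1)))}
    (hs : ((G.subdivision n).power m).IsClique s) :
    (∀ x ∈ s, ∀ y ∈ s, x = y) ∨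
    (∃ (e₀ : G.edgeSet) (i₀ : Fin (n-1)), inr (e₀, i₀) ∈ s ∧
        ∀ x ∈ s, ∃ i, x = inr (e₀, i)) ∨
    (∃ t, ∀ x ∈ s, Shape t x) := by
  classical
  have hpair : ∀ a ∈ s, ∀ b ∈ s, a ≠ b → Loc n m a b := by
    intro a ha b hb hne
    exact (loc_of_power_adj (by omega) (hs ha hb hne)).2
  by_cases htriv : ∀ x ∈ s, ∀ y ∈ s, x = y
  · exact Or.inl htriv
  push_neg at htriv
  obtain ⟨x, hxs, y, hys, hxy⟩ := htriv
  by_cases hinl : ∃ u, inl u ∈ s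
  · obtain ⟨u, hu⟩ := hinl
    refine Or.inr (Or.inr ⟨u, ?_⟩)
    intro z hz
    by_cases hz' : z = inl u
    · exact Or.inl hz'
    have hloc := hpair _ hu _ hz (fun hc => hz' hc.symm)
    rcases hloc with heq | ⟨e',i',j',hx',hy',-,-⟩ | ⟨t',k,l,hut,hzt,-⟩
    · exact absurd heq.symm hz'
    · exact absurd hx' (by simp)
    · obtain ⟨rfl, -⟩ := hut
      rcases z with w | ⟨g, jz⟩
      · obtain ⟨rfl, -⟩ := hzt
        exact absurd rfl hz'
      · exact Or.inr ⟨g, jz, rfl, att_endpoint hzt⟩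
  · push_neg at hinl
    have getInr : ∀ z ∈ s, ∃ (g : G.edgeSet) (iz : Fin (n-1)), z = inr (g, iz) := by
      intro z hz
      rcases z with w | ⟨g, iz⟩
      · exact absurd hz (hinl w)
      · exact ⟨g, iz, rfl⟩
    obtain ⟨e, i, rfl⟩ := getInr x hxs
    by_cases hone : ∀ z ∈ s, ∃ iz, z = inr (e, iz)
    · exact Or.inr (Or.inl ⟨e, i, hxs, hone⟩)
    push_neg at hone
    obtain ⟨w, hws, hwne⟩ := hone
    obtain ⟨e'', j'', rfl⟩ := getInr w hws
    have hee : e'' ≠ e := by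
      intro hc; subst hc; exact hwne j'' rfl
    have hxw : (inr (e,i) : V ⊕ (G.edgeSet × Fin (n-1))) ≠ inr (e'', j'') := by
      simp only [ne_eq, inr.injEq, Prod.mk.injEq, not_and]
      exact fun hc => absurd hc.symm hee
    obtain ⟨t, k, l, hxt, hwt, hsum⟩ :
        ∃ t k l, Att n (inr (e,i) : V ⊕ (G.edgeSet × Fin (n-1))) t k ∧
          Att n (inr (e'', j'') : V ⊕ (G.edgeSet × Fin (n-1))) t l ∧ k + l ≤ m := by
      rcases hpair _ hxs _ hws hxw with heq | ⟨e1,i1,j1,hx',hw',-,-⟩ | h3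
      · exact absurd heq hxw
      · simp only [inr.injEq, Prod.mk.injEq] at hx' hw'
        exact absurd (hw'.1.trans hx'.1.symm) hee
      · exact h3
    refine Or.inr (Or.inr ⟨t, ?_⟩)
    intro z hz
    obtain ⟨g, jz, rfl⟩ := getInr z hz
    refine Or.inr ⟨g, jz, rfl, ?_⟩
    by_cases hge : g = e
    · subst hge; exact att_endpoint hxt
    by_cases hge'' : g = e''
    · subst hge''; exact att_endpoint hwt
    -- z is on a third edge
    have hzx : (inr (g,jz) : V ⊕ (G.edgeSet × Fin (n-1))) ≠ inr (e, i) := by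
      simp only [ne_eq, inr.injEq, Prod.mk.injEq, not_and]; exact fun hc => absurd hc hge
    have hzw : (inr (g,jz) : V ⊕ (G.edgeSet × Fin (n-1))) ≠ inr (e'', j'') := by
      simp only [ne_eq, inr.injEq, Prod.mk.injEq, not_and]; exact fun hc => absurd hc hge''
    obtain ⟨t₁, k₁, l₁, hxt₁, hzt₁, hs₁⟩ :
        ∃ t₁ k₁ l₁, Att n (inr (e,i) : V ⊕ (G.edgeSet × Fin (n-1))) t₁ k₁ ∧
          Att n (inr (g, jz) : V ⊕ (G.edgeSet × Fin (n-1))) t₁ l₁ ∧ k₁ + l₁ ≤ m := by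
      rcases hpair _ hxs _ hz hzx.symm with heq | ⟨e1,i1,j1,hx',hz',-,-⟩ | h3
      · exact absurd heq hzx.symm
      · simp only [inr.injEq, Prod.mk.injEq] at hx' hz'
        exact absurd (hz'.1.trans hx'.1.symm) hge
      · exact h3
    obtain ⟨t₂, k₂, l₂, hwt₂, hzt₂, hs₂⟩ :
        ∃ t₂ k₂ l₂, Att n (inr (e'',j'') : V ⊕ (G.edgeSet × Fin (n-1))) t₂ k₂ ∧
          Att n (inr (g, jz) : V ⊕ (G.edgeSet × Fin (n-1))) t₂ l₂ ∧ k₂ + l₂ ≤ m := by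
      rcases hpair _ hws _ hz hzw.symm with heq | ⟨e1,i1,j1,hw',hz',-,-⟩ | h3
      · exact absurd heq hzw.symm
      · simp only [inr.injEq, Prod.mk.injEq] at hw' hz'
        exact absurd (hz'.1.trans hw'.1.symm) hge''
      · exact h3
    by_cases h₁ : t₁ = t
    · subst h₁; exact (att_endpoint hzt₁).imp id id
    by_cases h₂ : t₂ = t
    · subst h₂; exact (att_endpoint hzt₂).imp id id
    exfalso
    have e₁ : k + k₁ = n := att_opp hxt hxt₁ (fun hc => h₁ hc.symm)
    have e₂ : l + k₂ = n := att_opp hwt hwt₂ (fun hc => h₂ hc.symm)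
    have ht₁t₂ : t₁ ≠ t₂ := by
      intro hc
      subst hc
      exact hee (edge_eq_of_two_shared h₁ (att_endpoint hxt₁) (att_endpoint hxt)
        (att_endpoint hwt₂) (att_endpoint hwt)).symm
    have e₃ : l₁ + l₂ = n := att_opp hzt₁ hzt₂ ht₁t₂
    omega

end CliqueT
section Transfer

variable {m n : ℕ}

open Classical in
/-- Transfer map for star cliques. -/
noncomputable def Tstar (m n : ℕ) (t : V) :
    (V ⊕ (G.edgeSet × Fin (n-1))) → (V ⊕ (G.edgeSet × Fin ((n+m+1)-1)))
  | inl u => inl u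
  | inr (e, i) =>
    if t = eu e then inr (e, ⟨(i:ℕ), by have := i.isLt; omega⟩)
    else inr (e, ⟨(i:ℕ)+m+1, by have := i.isLt; omega⟩)

/-- Transfer map for single-edge cliques, with base index `i₀`. -/
noncomputable def Tedge (m n : ℕ) (i₀ : ℕ) :
    (V ⊕ (G.edgeSet × Fin (n-1))) → (V ⊕ (G.edgeSet × Fin ((n+m+1)-1)))
  | inl u => inl u
  | inr (e, i) => inr (e, ⟨(m+(i:ℕ))-i₀, by have := i.isLt; omega⟩)

lemma Tstar_inj (t : V) : Function.Injective (Tstar (G := G) m n t) := by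
  classical
  intro x y hxy
  rcases x with u | ⟨e, i⟩ <;> rcases y with u' | ⟨e', j⟩ <;>
    simp only [Tstar] at hxy
  · simp only [inl.injEq] at hxy
    rw [hxy]
  · split at hxy <;> exact absurd hxy (by simp)
  · split at hxy <;> exact absurd hxy (by simp)
  · by_cases he : e = e'
    · subst he
      by_cases ht : t = eu e <;>
        simp only [ht, if_pos, if_neg, ite_true, ite_false] at hxy <;>
          · simp only [inr.injEq, Prod.mk.injEq, Fin.mk.injEq, true_and] at hxy
            simp only [inr.injEq, Prod.mk.injEq, true_and]
            exact Fin.ext (by omega)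
    · exfalso
      split at hxy <;> split at hxy <;>
        · simp only [inr.injEq, Prod.mk.injEq] at hxy
          exact he hxy.1

lemma att_Tstar (hmn : m < n) {t : V} {x : V ⊕ (G.edgeSet × Fin (n-1))} {k : ℕ}
    (h : Att n x t k) : Att (n+m+1) (Tstar (G := G) m n t x) t k := by
  classical
  rcases x with u | ⟨e, i⟩
  · obtain ⟨rfl, rfl⟩ := h
    exact ⟨rfl, rfl⟩
  · have hlt := i.isLt
    rcases h with ⟨rfl, rfl⟩ | ⟨ht, rfl⟩
    · simp only [Tstar, if_pos rfl]
      exact Or.inl ⟨rfl, rfl⟩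
    · have hne : t ≠ eu e := by
        rw [ht]; exact (eu_ne_ev e).symm
      simp only [Tstar, if_neg hne]
      exact Or.inr ⟨ht, by simp; omega⟩

lemma Tstar_seg (hm : 0 < m) (hmn : m < n) (t : V) (e : G.edgeSet) {i j : Fin (n-1)}
    (hne : (i:ℕ) ≠ (j:ℕ)) (b1 : (i:ℕ) ≤ (j:ℕ) + m) (b2 : (j:ℕ) ≤ (i:ℕ) + m) :
    ((G.subdivision (n+m+1)).power m).Adj (Tstar (G := G) m n t (inr (e,i)))
      (Tstar (G := G) m n t (inr (e,j))) := by
  classical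
  by_cases ht : t = eu e <;>
    simp only [Tstar, ht, ite_true, ite_false, if_pos, if_neg] <;>
      exact power_adj_seg e (by simp; omega) (by simp; omega) (by simp; omega)

lemma Tstar_adj (hm : 0 < m) (hmn : m < n) (t : V) {x y : V ⊕ (G.edgeSet × Fin (n-1))}
    (hx : Shape (n := n) t x) (hy : Shape (n := n) t y) (hne : x ≠ y)
    (hadj : ((G.subdivision n).power m).Adj x y) :
    ((G.subdivision (n+m+1)).power m).Adj (Tstar (G := G) m n t x)
      (Tstar (G := G) m n t y) := by
  classical
  have hloc := (loc_of_power_adj (by omega) hadj).2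
  rcases hloc with heq | ⟨e,i,j,rfl,rfl,b1,b2⟩ | ⟨t',k,l,hxt,hyt,hsum⟩
  · exact absurd heq hne
  · refine Tstar_seg hm hmn t e ?_ b1 b2
    intro hc
    exact hne (by simp only [inr.injEq, Prod.mk.injEq, true_and]; exact Fin.ext hc)
  · by_cases htt : t' = t
    · subst htt
      exact power_adj_of_att (fun hc => hne (Tstar_inj t' hc))
        (att_Tstar hmn hxt) (att_Tstar hmn hyt) hsum
    · -- t' ≠ t : both ends on the same edge, or contradiction
      obtain ⟨e, i, rfl, hte⟩ : ∃ (e : G.edgeSet) (i : Fin (n-1)),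
          x = inr (e,i) ∧ (t = eu e ∨ t = ev e) := by
        rcases hx with rfl | ⟨e, i, rfl, hte⟩
        · obtain ⟨rfl, -⟩ := hxt
          exact absurd rfl htt
        · exact ⟨e, i, rfl, hte⟩
      obtain ⟨e', j, rfl, hte'⟩ : ∃ (e' : G.edgeSet) (j : Fin (n-1)),
          y = inr (e',j) ∧ (t = eu e' ∨ t = ev e') := by
        rcases hy with rfl | ⟨e', j, rfl, hte'⟩
        · obtain ⟨rfl, -⟩ := hyt
          exact absurd rfl htt
        · exact ⟨e', j, rfl, hte'⟩
      by_cases hee : e = e'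
      · subst hee
        obtain ⟨b1, b2⟩ := loc_seg_bound hmn
          (Or.inr (Or.inr ⟨t', k, l, hxt, hyt, hsum⟩))
        refine Tstar_seg hm hmn t e ?_ b1 b2
        intro hc
        exact hne (by simp only [inr.injEq, Prod.mk.injEq, true_and]; exact Fin.ext hc)
      · exact absurd (edge_eq_of_two_shared htt (att_endpoint hxt) hte
          (att_endpoint hyt) hte') hee

lemma Tedge_adj (hm : 0 < m) (hmn : m < n) (e₀ : G.edgeSet) (i₀ : Fin (n-1))
    {i j : Fin (n-1)} (hne : (i:ℕ) ≠ (j:ℕ))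
    (bi1 : (i:ℕ) ≤ (i₀:ℕ) + m) (bi2 : (i₀:ℕ) ≤ (i:ℕ) + m)
    (bj1 : (j:ℕ) ≤ (i₀:ℕ) + m) (bj2 : (i₀:ℕ) ≤ (j:ℕ) + m)
    (bij1 : (i:ℕ) ≤ (j:ℕ) + m) (bij2 : (j:ℕ) ≤ (i:ℕ) + m) :
    ((G.subdivision (n+m+1)).power m).Adj (Tedge (G := G) m n (i₀:ℕ) (inr (e₀,i)))
      (Tedge (G := G) m n (i₀:ℕ) (inr (e₀,j))) := by
  simp only [Tedge]
  exact power_adj_seg e₀ (by simp; omega) (by simp; omega) (by simp; omega)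

lemma clique_transfer (hm : 0 < m) (hmn : m < n) {k : ℕ}
    {s : Finset (V ⊕ (G.edgeSet × Fin (n-1)))}
    (hc : ((G.subdivision n).power m).IsNClique k s) :
    ∃ s', ((G.subdivision (n+m+1)).power m).IsNClique k s' := by
  classical
  obtain ⟨hcl, hcard⟩ := hc
  rcases clique_structure hm hmn hcl with htriv | ⟨e₀, i₀, hi₀, hone⟩ | ⟨t, hstar⟩
  · -- at most one element
    refine ⟨s.image (Tedge (G := G) m n 0), ⟨?_, ?_⟩⟩
    · intro a ha b hb hab
      exfalso
      simp only [Finset.coe_image, Set.mem_image, Finset.mem_coe] at ha hb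
      obtain ⟨xa, hxa, rfl⟩ := ha
      obtain ⟨xb, hxb, rfl⟩ := hb
      exact hab (by rw [htriv xa hxa xb hxb])
    · rw [← hcard]
      apply Finset.card_image_of_injOn
      intro a ha b hb _
      exact htriv a ha b hb
  · -- single edge
    have hbounds : ∀ x ∈ s, ∃ i : Fin (n-1), x = inr (e₀, i) ∧
        (i:ℕ) ≤ (i₀:ℕ) + m ∧ (i₀:ℕ) ≤ (i:ℕ) + m := by
      intro x hx
      obtain ⟨i, rfl⟩ := hone x hx
      refine ⟨i, rfl, ?_, ?_⟩ <;>
        · by_cases hii : (i:ℕ) = (i₀:ℕ)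
          · omega
          · have hxne : (inr (e₀,i) : V ⊕ (G.edgeSet × Fin (n-1))) ≠ inr (e₀,i₀) := by
              simp only [ne_eq, inr.injEq, Prod.mk.injEq, true_and]
              exact fun hc' => hii (congrArg Fin.val hc')
            have hloc := (loc_of_power_adj (m := m) (by omega) (hcl hx hi₀ hxne)).2
            have := loc_seg_bound hmn hloc
            omega
    refine ⟨s.image (Tedge (G := G) m n (i₀:ℕ)), ⟨?_, ?_⟩⟩
    · intro a ha b hb hab
      simp only [Finset.coe_image, Set.mem_image, Finset.mem_coe] at ha hb
      obtain ⟨xa, hxa, rfl⟩ := ha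
      obtain ⟨xb, hxb, rfl⟩ := hb
      obtain ⟨i, rfl, b1, b2⟩ := hbounds xa hxa
      obtain ⟨j, rfl, b3, b4⟩ := hbounds xb hxb
      have hij : (i:ℕ) ≠ (j:ℕ) := by
        intro hc'
        apply hab
        have hij' : i = j := Fin.ext hc'
        rw [hij']
      have hxyne : (inr (e₀,i) : V ⊕ (G.edgeSet × Fin (n-1))) ≠ inr (e₀,j) := by
        simp only [ne_eq, inr.injEq, Prod.mk.injEq, true_and]
        exact fun hc' => hij (congrArg Fin.val hc')
      have hloc := (loc_of_power_adj (m := m) (by omega) (hcl hxa hxb hxyne)).2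
      obtain ⟨b5, b6⟩ := loc_seg_bound hmn hloc
      exact Tedge_adj hm hmn e₀ i₀ hij b1 b2 b3 b4 b5 b6
    · rw [← hcard]
      apply Finset.card_image_of_injOn
      intro a ha b hb hab
      obtain ⟨i, rfl, b1, b2⟩ := hbounds a ha
      obtain ⟨j, rfl, b3, b4⟩ := hbounds b hb
      simp only [Tedge, inr.injEq, Prod.mk.injEq, Fin.mk.injEq, true_and] at hab
      simp only [inr.injEq, Prod.mk.injEq, true_and]
      exact Fin.ext (by omega)
  · -- star
    refine ⟨s.image (Tstar (G := G) m n t), ⟨?_, ?_⟩⟩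
    · intro a ha b hb hab
      simp only [Finset.coe_image, Set.mem_image, Finset.mem_coe] at ha hb
      obtain ⟨xa, hxa, rfl⟩ := ha
      obtain ⟨xb, hxb, rfl⟩ := hb
      have hne : xa ≠ xb := fun hc' => hab (by rw [hc'])
      exact Tstar_adj hm hmn t (hstar xa hxa) (hstar xb hxb) hne (hcl hxa hxb hne)
    · rw [← hcard]
      apply Finset.card_image_of_injOn
      exact fun a _ b _ hab => Tstar_inj t hab

end Transfer
end SubdivAux
theorem chromatic_eq_clique_step {V : Type*} (G : SimpleGraph V)
    (m n : ℕ) (hm : 0 < m) (hmn : m < n)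
    (h : ((G.subdivision n).power m).chromaticNumber
        = (((G.subdivision n).power m).cliqueNum : ℕ∞)) :
    ((G.subdivision (n + m + 1)).power m).chromaticNumber
        = (((G.subdivision (n + m + 1)).power m).cliqueNum : ℕ∞) := by
  classical
  set PA := (G.subdivision n).power m with hPA
  set PB := (G.subdivision (n+m+1)).power m with hPB
  set wA := PA.cliqueNum with hwA
  have hcolA : PA.Colorable wA := SimpleGraph.chromaticNumber_le_iff_colorable.mp (le_of_eq h)
  have hom : PB →g PA :=
    ⟨SubdivAux.Fmap hm hmn, fun hadj => SubdivAux.Fmap_hom hm hmn hadj⟩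
  have hcolB : PB.Colorable wA := ⟨(hcolA.some).comp hom⟩
  have hchB_le : PB.chromaticNumber ≤ (wA : ℕ∞) := hcolB.chromaticNumber_le
  have hboundA : ∀ k ∈ {k | ∃ t, PA.IsNClique k t}, k ≤ wA := by
    rintro k ⟨t, ht⟩
    rw [← ht.card_eq]
    exact ht.isClique.card_le_of_colorable hcolA
  have hboundB : ∀ k ∈ {k | ∃ t, PB.IsNClique k t}, k ≤ wA := by
    rintro k ⟨t, ht⟩
    rw [← ht.card_eq]
    exact ht.isClique.card_le_of_colorable hcolB
  have hbddA : BddAbove {k | ∃ t, PA.IsNClique k t} := ⟨wA, hboundA⟩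
  have hbddB : BddAbove {k | ∃ t, PB.IsNClique k t} := ⟨wA, hboundB⟩
  have hA0 : (0:ℕ) ∈ {k | ∃ t, PA.IsNClique k t} := ⟨∅, by simp⟩
  have hB0 : (0:ℕ) ∈ {k | ∃ t, PB.IsNClique k t} := ⟨∅, by simp⟩
  obtain ⟨tA, htA⟩ : ∃ t, PA.IsNClique wA t := Nat.sSup_mem ⟨0, hA0⟩ hbddA
  obtain ⟨tB, htB⟩ := SubdivAux.clique_transfer hm hmn htA
  have hge : wA ≤ PB.cliqueNum := le_csSup hbddB ⟨tB, htB⟩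
  have hle : PB.cliqueNum ≤ wA := csSup_le ⟨0, hB0⟩ hboundB
  have hBA : PB.cliqueNum = wA := le_antisymm hle hge
  obtain ⟨tB', htB'⟩ : ∃ t, PB.IsNClique PB.cliqueNum t := Nat.sSup_mem ⟨0, hB0⟩ hbddB
  have h1 : (PB.cliqueNum : ℕ∞) ≤ PB.chromaticNumber := by
    rw [← htB'.card_eq]
    exact htB'.isClique.card_le_chromaticNumber
  refine le_antisymm ?_ h1
  rw [hBA]
  exact hchB_le
end

section
/- Let G be a connected graph with maximum degree Δ ≥ 3. Then the chromatic number of G^{2/4} (the square of the 4-subdivision of G) equals Δ + 1. -/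
open SimpleGraph

-- ============ helpers ============
namespace ChromAux
variable {V : Type*} {H : SimpleGraph V}

lemma walk_le_two {x y : V} (hxy : x ≠ y) (p : H.Walk x y) (hp : p.length ≤ 2) :
    H.Adj x y ∨ ∃ z, H.Adj x z ∧ H.Adj z y := by
  cases p with
  | nil => exact absurd rfl hxy
  | cons h q =>
    cases q with
    | nil => exact Or.inl h
    | cons h' q' =>
      cases q' with
      | nil => exact Or.inr ⟨_, h, h'⟩
      | cons h'' q'' => simp [Walk.length_cons] at hp

lemma power_two_adj {x y : V} :
    (H.power 2).Adj x y ↔ x ≠ y ∧ (H.Adj x y ∨ ∃ z, H.Adj x z ∧ H.Adj z y) := by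
  constructor
  · rintro ⟨hne, hr, hd⟩
    obtain ⟨p, hp⟩ := hr.exists_walk_length_eq_dist
    exact ⟨hne, walk_le_two hne p (hp ▸ hd)⟩
  · rintro ⟨hne, h | ⟨z, h1, h2⟩⟩
    · exact ⟨hne, h.reachable, le_trans (H.dist_le (Walk.cons h Walk.nil)) (by simp)⟩
    · exact ⟨hne, ⟨Walk.cons h1 (Walk.cons h2 Walk.nil)⟩,
        le_trans (H.dist_le (Walk.cons h1 (Walk.cons h2 Walk.nil))) (by simp)⟩

variable (G : SimpleGraph V)

noncomputable def eA (e : G.edgeSet) : V := (Quot.out e.1).1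
noncomputable def eB (e : G.edgeSet) : V := (Quot.out e.1).2

lemma mk_eA_eB (e : G.edgeSet) : s(eA G e, eB G e) = e.1 := by
  show s((Quot.out e.1).1, (Quot.out e.1).2) = e.1
  exact Quot.out_eq e.1

lemma adj_eA_eB (e : G.edgeSet) : G.Adj (eA G e) (eB G e) := by
  rw [← mem_edgeSet, mk_eA_eB]; exact e.2

lemma eA_ne_eB (e : G.edgeSet) : eA G e ≠ eB G e := (adj_eA_eB G e).ne

lemma eq_eA_or_eB (e : G.edgeSet) {v : V} (hv : v ∈ e.1) : v = eA G e ∨ v = eB G e := by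
  rw [← mk_eA_eB G e, Sym2.mem_iff] at hv; exact hv



variable {W : Type*}

/-- flip between two colors -/
def altflip (α β s : ℕ) : ℕ := if s = α then β else α

/-- list alternates starting with expected color `s` -/
def AltList (α β : ℕ) : ℕ → List ℕ → Prop
  | _, [] => True
  | s, x :: t => x = s ∧ AltList α β (altflip α β s) t

lemma altflip_mem {α β s : ℕ} : altflip α β s = α ∨ altflip α β s = β := by
  unfold altflip; split <;> simp

lemma altflip_altflip {α β s : ℕ} (hαβ : α ≠ β) (hs : s = α ∨ s = β) :
    altflip α β (altflip α β s) = s := by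
  rcases hs with rfl | rfl <;> simp [altflip, hαβ, Ne.symm hαβ]

lemma AltList_getLast {α β : ℕ} (hαβ : α ≠ β) :
    ∀ (l : List ℕ) (s : ℕ), (s = α ∨ s = β) → AltList α β s l → ∀ t, l.getLast? = some t →
      ((Odd l.length → t = s) ∧ (Even l.length → t = altflip α β s)) := by
  intro l
  induction l with
  | nil => intro s _ _ t ht; simp at ht
  | cons x l ih =>
    intro s hs hal t ht
    obtain ⟨hx, hal'⟩ := hal
    cases l with
    | nil =>
      simp only [List.getLast?_singleton, Option.some.injEq] at ht
      subst ht
      exact ⟨fun _ => hx, fun h => by simp [Nat.even_iff] at h⟩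
    | cons y l' =>
      rw [List.getLast?_cons_cons] at ht
      have H := ih (altflip α β s) altflip_mem hal' t ht
      constructor
      · intro hodd
        have : Even (y :: l').length := by
          rcases Nat.even_or_odd (y :: l').length with h | h
          · exact h
          · exfalso; rw [List.length_cons] at hodd
            rcases hodd with ⟨m, hm⟩; rcases h with ⟨m', hm'⟩; omega
        rw [← altflip_altflip hαβ hs]
        exact H.2 this
      · intro heven
        have : Odd (y :: l').length := by
          rcases Nat.even_or_odd (y :: l').length with h | h
          · exfalso; rw [List.length_cons] at heven
            rcases heven with ⟨m, hm⟩; rcases h with ⟨m', hm'⟩; omega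
          · exact h
        exact H.1 this

variable {W : Type*}

lemma walk_parity {K : SimpleGraph W} (side : W → Bool)
    (h : ∀ {x y}, K.Adj x y → side x ≠ side y) :
    ∀ {x y} (p : K.Walk x y), (side x = side y ↔ Even p.length) := by
  intro x y p
  induction p with
  | nil => simp
  | @cons x w y hxw q ih =>
    have h1 := h hxw
    rw [Walk.length_cons, Nat.even_add_one, ← ih]
    cases hx : side x <;> cases hw : side w <;> cases hy : side y <;> simp_all

lemma last_edge {K : SimpleGraph W} :
    ∀ {x y} (p : K.Walk x y), ¬ p.Nil →
      ∃ w, ∃ _ : K.Adj w y, p.edges.getLast? = some s(w, y) := by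
  intro x y p
  induction p with
  | nil => intro h; simp at h
  | @cons x w y h q ih =>
    intro _
    cases q with
    | nil => exact ⟨x, h, by simp⟩
    | @cons _ w2 _ h' q' =>
      obtain ⟨w3, hadj, hl⟩ := ih Walk.not_nil_cons
      refine ⟨w3, hadj, ?_⟩
      rw [Walk.edges_cons, Walk.edges_cons, List.getLast?_cons_cons]
      rw [Walk.edges_cons] at hl
      exact hl

lemma alt_of_walk {K : SimpleGraph W} {α β : ℕ} (c : Sym2 W → ℕ)
    (hK : ∀ {x y}, K.Adj x y → (c s(x, y) = α ∨ c s(x, y) = β))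
    (hprop : ∀ {a b b'}, K.Adj a b → K.Adj a b' → b ≠ b' → c s(a, b) ≠ c s(a, b'))
    (hαβ : α ≠ β) :
    ∀ {x y} (p : K.Walk x y), p.IsPath → ∀ γ, (γ = α ∨ γ = β) →
      (∀ e ∈ p.edges.head?, c e = γ) → AltList α β γ (p.edges.map c) := by
  intro x y p
  induction p with
  | nil => intro _ γ _ _; trivial
  | @cons x w y h q ih =>
    intro hp γ hγ hhead
    have h1 : c s(x, w) = γ := hhead _ (by rw [Walk.edges_cons]; rfl)
    rw [Walk.edges_cons, List.map_cons]
    refine ⟨h1, ?_⟩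
    apply ih hp.of_cons (altflip α β γ) altflip_mem
    intro e he
    cases q with
    | nil => simp at he
    | @cons _ w2 _ h' q' =>
      rw [Walk.edges_cons] at he
      simp only [List.head?_cons, Option.mem_def, Option.some.injEq] at he
      subst he
      have hcol := hK h'
      have hxw2 : x ≠ w2 := by
        rw [Walk.cons_isPath_iff] at hp
        intro hx
        exact hp.2 (by rw [hx]; exact Walk.support_cons _ _ ▸ List.mem_cons_of_mem _ q'.start_mem_support)
      have hdiff : c s(w, x) ≠ c s(w, w2) := hprop h.symm h' hxw2
      have h1' : c s(w, x) = γ := by rw [Sym2.eq_swap]; exact h1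
      have hne2 : c s(w, w2) ≠ γ := fun hh => hdiff (h1'.trans hh.symm)
      rcases hγ with rfl | rfl
      · rcases hcol with h2 | h2
        · exact absurd h2 hne2
        · rw [altflip, if_pos rfl]; exact h2
      · rcases hcol with h2 | h2
        · rw [altflip, if_neg (Ne.symm hαβ)]; exact h2
        · exact absurd h2 hne2


lemma exists_missing (B' : SimpleGraph W) (c : Sym2 W → ℕ) (k : ℕ) (u : W)
    (hfin : (B'.neighborSet u).Finite) (hcard : (B'.neighborSet u).ncard < k) :
    ∃ α, α < k ∧ ∀ b, B'.Adj u b → c s(u, b) ≠ α := by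
  by_contra hcon
  push_neg at hcon
  have hsub : (↑(Finset.range k) : Set ℕ) ⊆ (fun b => c s(u, b)) '' (B'.neighborSet u) := by
    intro α hα
    simp only [Finset.coe_range, Set.mem_Iio] at hα
    obtain ⟨b, hb, hcb⟩ := hcon α hα
    exact ⟨b, hb, hcb⟩
  have h0 : ((Finset.range k : Finset ℕ) : Set ℕ).ncard = k := by
    rw [Set.ncard_coe_finset, Finset.card_range]
  have h1 : k ≤ ((fun b => c s(u, b)) '' (B'.neighborSet u)).ncard :=
    h0 ▸ Set.ncard_le_ncard hsub (hfin.image _)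
  have h2 := Set.ncard_image_le (f := fun b => c s(u, b)) hfin
  omega

lemma extend_coloring {B : SimpleGraph W} {u v : W} (huv : B.Adj u v)
    (c : Sym2 W → ℕ) (k δ : ℕ) (hδ : δ < k)
    (hlt : ∀ {x y}, (B.deleteEdges {s(u, v)}).Adj x y → c s(x, y) < k)
    (hprop : ∀ {a b b'}, (B.deleteEdges {s(u, v)}).Adj a b →
      (B.deleteEdges {s(u, v)}).Adj a b' → b ≠ b' → c s(a, b) ≠ c s(a, b'))
    (hu : ∀ b, (B.deleteEdges {s(u, v)}).Adj u b → c s(u, b) ≠ δ)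
    (hv : ∀ b, (B.deleteEdges {s(u, v)}).Adj v b → c s(v, b) ≠ δ) :
    ∃ c' : Sym2 W → ℕ, (∀ {x y}, B.Adj x y → c' s(x, y) < k) ∧
      (∀ {a b b'}, B.Adj a b → B.Adj a b' → b ≠ b' → c' s(a, b) ≠ c' s(a, b')) := by
  classical
  set B' := B.deleteEdges {s(u, v)} with hB'
  have hB'adj : ∀ {x y}, B'.Adj x y ↔ B.Adj x y ∧ s(x, y) ≠ s(u, v) := by
    intro x y; rw [hB', deleteEdges_adj]; simp
  refine ⟨fun e => if e = s(u, v) then δ else c e, ?_, ?_⟩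
  · intro x y hxy
    show (if s(x, y) = s(u, v) then δ else c s(x, y)) < k
    by_cases he : s(x, y) = s(u, v)
    · rw [if_pos he]; exact hδ
    · rw [if_neg he]; exact hlt (hB'adj.2 ⟨hxy, he⟩)
  · intro a b b' hab hab' hbb
    show (if s(a, b) = s(u, v) then δ else c s(a, b)) ≠ (if s(a, b') = s(u, v) then δ else c s(a, b'))
    by_cases he : s(a, b) = s(u, v) <;> by_cases he' : s(a, b') = s(u, v)
    · exact absurd (Sym2.congr_right.mp (he.trans he'.symm)) hbb
    · rw [if_pos he, if_neg he']
      have hB' : B'.Adj a b' := hB'adj.2 ⟨hab', he'⟩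
      have ha : a = u ∨ a = v := by
        have : a ∈ s(u, v) := he ▸ Sym2.mem_mk_left a b
        rwa [Sym2.mem_iff] at this
      rcases ha with rfl | rfl
      · exact fun hh => hu b' hB' hh.symm
      · exact fun hh => hv b' hB' hh.symm
    · rw [if_neg he, if_pos he']
      have hB' : B'.Adj a b := hB'adj.2 ⟨hab, he⟩
      have ha : a = u ∨ a = v := by
        have : a ∈ s(u, v) := he' ▸ Sym2.mem_mk_left a b'
        rwa [Sym2.mem_iff] at this
      rcases ha with rfl | rfl
      · exact hu b hB'
      · exact hv b hB'
    · rw [if_neg he, if_neg he']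
      exact hprop (hB'adj.2 ⟨hab, he⟩) (hB'adj.2 ⟨hab', he'⟩) hbb


theorem bip_edge_coloring [Finite W] (k : ℕ) (side : W → Bool) :
    ∀ (B : SimpleGraph W), (∀ {x y}, B.Adj x y → side x ≠ side y) →
    (∀ w, (B.neighborSet w).ncard ≤ k) →
    ∃ c : Sym2 W → ℕ, (∀ {x y}, B.Adj x y → c s(x, y) < k) ∧
      (∀ {a b b'}, B.Adj a b → B.Adj a b' → b ≠ b' → c s(a, b) ≠ c s(a, b')) := by
  classical
  suffices H : ∀ n (B : SimpleGraph W), B.edgeSet.ncard = n →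
      (∀ {x y}, B.Adj x y → side x ≠ side y) →
      (∀ w, (B.neighborSet w).ncard ≤ k) →
      ∃ c : Sym2 W → ℕ, (∀ {x y}, B.Adj x y → c s(x, y) < k) ∧
        (∀ {a b b'}, B.Adj a b → B.Adj a b' → b ≠ b' → c s(a, b) ≠ c s(a, b')) by
    exact fun B hs hd => H _ B rfl hs hd
  intro n
  induction n using Nat.strong_induction_on with
  | _ n ih =>
    intro B hn hside hdeg
    by_cases hE : B.edgeSet.Nonempty
    swap
    · refine ⟨fun _ => 0, ?_, ?_⟩
      · intro x y hxy; exact absurd ⟨s(x, y), hxy⟩ hE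
      · intro a b b' hab _ _; exact absurd ⟨s(a, b), hab⟩ hE
    obtain ⟨u, v, huv⟩ : ∃ u v, B.Adj u v := by
      obtain ⟨ε, hε⟩ := hE
      induction ε using Sym2.ind with
      | _ u v => exact ⟨u, v, hε⟩
    set B' := B.deleteEdges {s(u, v)} with hB'def
    have hB'le : B' ≤ B := deleteEdges_le _
    have hB'adj : ∀ {x y}, B'.Adj x y ↔ B.Adj x y ∧ s(x, y) ≠ s(u, v) := by
      intro x y; rw [hB'def, deleteEdges_adj]; simp
    have hed : B'.edgeSet.ncard < n := by
      rw [← hn, hB'def, edgeSet_deleteEdges]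
      exact Set.ncard_diff_singleton_lt_of_mem huv (Set.toFinite _)
    obtain ⟨c, hck, hcp⟩ := ih _ hed B' rfl
      (fun hxy => hside (hB'le hxy))
      (fun w => le_trans (Set.ncard_le_ncard (fun b hb => hB'le hb) (Set.toFinite _)) (hdeg w))
    have hnu : (B'.neighborSet u).ncard < k := by
      have h1 : B'.neighborSet u ⊆ B.neighborSet u \ {v} := by
        intro b hb
        refine ⟨hB'le hb, ?_⟩
        intro hbv
        rcases hbv with rfl
        exact (hB'adj.mp hb).2 rfl
      calc (B'.neighborSet u).ncard ≤ (B.neighborSet u \ {v}).ncard :=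
            Set.ncard_le_ncard h1 (Set.toFinite _)
        _ < (B.neighborSet u).ncard := Set.ncard_diff_singleton_lt_of_mem huv (Set.toFinite _)
        _ ≤ k := hdeg u
    have hnv : (B'.neighborSet v).ncard < k := by
      have h1 : B'.neighborSet v ⊆ B.neighborSet v \ {u} := by
        intro b hb
        refine ⟨hB'le hb, ?_⟩
        intro hbu
        rcases hbu with rfl
        exact (hB'adj.mp hb).2 (Sym2.eq_swap)
      calc (B'.neighborSet v).ncard ≤ (B.neighborSet v \ {u}).ncard :=
            Set.ncard_le_ncard h1 (Set.toFinite _)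
        _ < (B.neighborSet v).ncard := Set.ncard_diff_singleton_lt_of_mem huv.symm (Set.toFinite _)
        _ ≤ k := hdeg v
    obtain ⟨α, hαk, hαu⟩ := exists_missing B' c k u (Set.toFinite _) hnu
    obtain ⟨β, hβk, hβv⟩ := exists_missing B' c k v (Set.toFinite _) hnv
    by_cases hαv : ∀ b, B'.Adj v b → c s(v, b) ≠ α
    · exact extend_coloring huv c k α hαk hck hcp hαu hαv
    push_neg at hαv
    obtain ⟨b0, hb0, hcb0⟩ := hαv
    have hαβ : α ≠ β := by
      intro h
      exact hβv b0 hb0 (h ▸ hcb0)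
    set K : SimpleGraph W := {
      Adj := fun x y => B'.Adj x y ∧ (c s(x, y) = α ∨ c s(x, y) = β),
      symm := ⟨by
        intro x y hxy
        refine ⟨hxy.1.symm, ?_⟩
        rw [Sym2.eq_swap]
        exact hxy.2⟩,
      loopless := ⟨fun x h => B'.loopless.irrefl x h.1⟩ } with hKdef
    have hKadj : ∀ {x y}, K.Adj x y ↔ B'.Adj x y ∧ (c s(x, y) = α ∨ c s(x, y) = β) := by
      intro x y; rw [hKdef]
    -- key: u and v are not K-reachable
    have hkey : ¬ K.Reachable u v := by
      intro hr
      obtain ⟨p, hp⟩ : ∃ p : K.Walk u v, p.IsPath := by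
        obtain ⟨p0⟩ := hr
        exact ⟨p0.toPath.1, p0.toPath.2⟩
      cases p with
      | nil => exact huv.ne rfl
      | @cons _ w _ h q =>
        have hc1 : c s(u, w) = β := by
          rcases (hKadj.mp h).2 with h2 | h2
          · exact absurd h2 (hαu w (hKadj.mp h).1)
          · exact h2
        have halt : AltList α β β ((Walk.cons h q).edges.map c) := by
          apply alt_of_walk c (fun hxy => (hKadj.mp hxy).2)
            (fun ha hb hne => hcp (hKadj.mp ha).1 (hKadj.mp hb).1 hne) hαβ _ hp β (Or.inr rfl)
          intro e he
          rw [Walk.edges_cons] at he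
          simp only [List.head?_cons, Option.mem_def, Option.some.injEq] at he
          rw [← he]
          exact hc1
        obtain ⟨w', hadj', hgl⟩ := last_edge (Walk.cons h q) Walk.not_nil_cons
        have hcl : c s(w', v) = α := by
          rcases (hKadj.mp hadj').2 with h2 | h2
          · exact h2
          · exfalso
            apply hβv w' (hKadj.mp hadj').1.symm
            rw [Sym2.eq_swap]
            exact h2
        have hglc : (((Walk.cons h q).edges.map c)).getLast? = some (c s(w', v)) := by
          rw [List.getLast?_map, hgl]
          rfl
        have HAL := AltList_getLast hαβ _ β (Or.inr rfl) halt _ hglc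
        have hlen : ((Walk.cons h q).edges.map c).length = (Walk.cons h q).length := by
          rw [List.length_map, Walk.length_edges]
        have hpar := walk_parity side (fun hxy => hside (hB'le (hKadj.mp hxy).1)) (Walk.cons h q)
        rcases Nat.even_or_odd ((Walk.cons h q).edges.map c).length with hev | hod
        · have : side u = side v := hpar.mpr (hlen ▸ hev)
          exact hside huv this
        · have : c s(w', v) = β := HAL.1 hod
          rw [hcl] at this
          exact hαβ this
    -- the swap function
    set sw : ℕ → ℕ := fun m => if m = α then β else if m = β then α else m with hswdef
    have hswsw : ∀ m, sw (sw m) = m := by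
      intro m
      by_cases h1 : m = α
      · simp [hswdef, h1, Ne.symm hαβ, hαβ]
      · by_cases h2 : m = β
        · simp [hswdef, h1, h2, hαβ]
        · simp [hswdef, h1, h2]
    have hswinj : Function.Injective sw := Function.Involutive.injective hswsw
    have hswlt : ∀ m, m < k → sw m < k := by
      intro m hm
      rw [hswdef]
      simp only
      split
      · exact hβk
      · split
        · exact hαk
        · exact hm
    have hswβ : ∀ m, sw m = β → m = α := by
      intro m hm
      rw [hswdef] at hm
      simp only at hm
      split at hm
      · assumption
      · split at hm
        · exact absurd hm hαβ
        · exact absurd hm (by assumption)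
    -- the swapped coloring
    set c2 : Sym2 W → ℕ := Sym2.lift ⟨fun x y =>
        if K.Reachable u x ∧ K.Reachable u y then sw (c s(x, y)) else c s(x, y), by
      intro x y
      dsimp only
      have h1 : c s(x, y) = c s(y, x) := by rw [Sym2.eq_swap]
      rw [h1]
      by_cases hc : K.Reachable u x ∧ K.Reachable u y
      · rw [if_pos hc, if_pos (and_comm.mp hc)]
      · rw [if_neg hc, if_neg (fun hh => hc (and_comm.mp hh))]⟩ with hc2def
    have hc2 : ∀ x y, c2 s(x, y) =
        if K.Reachable u x ∧ K.Reachable u y then sw (c s(x, y)) else c s(x, y) := by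
      intro x y
      rw [hc2def]
      rfl
    have hc2lt : ∀ {x y}, B'.Adj x y → c2 s(x, y) < k := by
      intro x y hxy
      rw [hc2]
      split
      · exact hswlt _ (hck hxy)
      · exact hck hxy
    have key : ∀ a b b', B'.Adj a b → B'.Adj a b' → b ≠ b' →
        (K.Reachable u a ∧ K.Reachable u b) → ¬(K.Reachable u a ∧ K.Reachable u b') →
        sw (c s(a, b)) ≠ c s(a, b') := by
      intro a b b' h1 h2 hbb hcond1 hcond2 heq
      have hnb' : ¬ K.Reachable u b' := fun hr => hcond2 ⟨hcond1.1, hr⟩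
      by_cases hα : c s(a, b) = α
      · rw [hα, hswdef] at heq
        simp only [if_pos rfl] at heq
        have hKab' : K.Adj a b' := hKadj.mpr ⟨h2, Or.inr heq.symm⟩
        exact hnb' (hcond1.1.trans hKab'.reachable)
      · by_cases hβ : c s(a, b) = β
        · rw [hβ, hswdef] at heq
          simp only [if_neg (Ne.symm hαβ), if_pos rfl] at heq
          have hKab' : K.Adj a b' := hKadj.mpr ⟨h2, Or.inl heq.symm⟩
          exact hnb' (hcond1.1.trans hKab'.reachable)
        · rw [hswdef] at heq
          simp only [if_neg hα, if_neg hβ] at heq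
          exact hcp h1 h2 hbb heq
    have hc2p : ∀ {a b b'}, B'.Adj a b → B'.Adj a b' → b ≠ b' → c2 s(a, b) ≠ c2 s(a, b') := by
      intro a b b' h1 h2 hbb
      rw [hc2, hc2]
      by_cases k1 : K.Reachable u a ∧ K.Reachable u b <;>
        by_cases k2 : K.Reachable u a ∧ K.Reachable u b'
      · rw [if_pos k1, if_pos k2]
        exact fun heq => hcp h1 h2 hbb (hswinj heq)
      · rw [if_pos k1, if_neg k2]
        exact key a b b' h1 h2 hbb k1 k2
      · rw [if_neg k1, if_pos k2]
        exact fun heq => key a b' b h2 h1 (Ne.symm hbb) k2 k1 heq.symm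
      · rw [if_neg k1, if_neg k2]
        exact hcp h1 h2 hbb
    have hc2u : ∀ b, B'.Adj u b → c2 s(u, b) ≠ β := by
      intro b hb
      rw [hc2]
      by_cases hrb : K.Reachable u b
      · rw [if_pos ⟨Reachable.refl u, hrb⟩]
        intro heq
        exact hαu b hb (hswβ _ heq)
      · rw [if_neg (fun hh => hrb hh.2)]
        intro heq
        exact hrb (Adj.reachable (hKadj.mpr ⟨hb, Or.inr heq⟩))
    have hc2v : ∀ b, B'.Adj v b → c2 s(v, b) ≠ β := by
      intro b hb
      rw [hc2]
      rw [if_neg (fun hh => hkey hh.1)]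
      exact hβv b hb
    exact extend_coloring huv c2 k β hβk hc2lt hc2p hc2u hc2v



section Incidence
variable {V : Type*} [Fintype V] (G : SimpleGraph V) [DecidableRel G.Adj]

lemma sub2_side : ∀ {x y}, (G.subdivision 2).Adj x y → Sum.isLeft x ≠ Sum.isLeft y := by
  intro x y h
  rcases x with u | ⟨e, i⟩ <;> rcases y with v | ⟨f, j⟩
  · exact absurd h.1 (by norm_num)
  · simp
  · simp
  · exfalso
    have h2 := h.2
    have hi := i.isLt
    have hj := j.isLt
    omega

lemma vert_spec (e : G.edgeSet) (s : Bool) :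
    (G.subdivision 2).Adj (Sum.inl (if s then eB G e else eA G e)) (Sum.inr (e, ⟨0, by norm_num⟩)) := by
  cases s
  · exact Or.inl ⟨rfl, rfl⟩
  · exact Or.inr ⟨rfl, rfl⟩

lemma sub2_deg (w : V ⊕ (G.edgeSet × Fin (2 - 1))) (hΔ2 : 2 ≤ G.maxDegree) :
    ((G.subdivision 2).neighborSet w).ncard ≤ G.maxDegree := by
  classical
  rcases w with v | ⟨e, i⟩
  · -- terminal vertex: inject into neighbors of v in G
    set φ : (V ⊕ (G.edgeSet × Fin (2 - 1))) → V := fun x =>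
      match x with
      | Sum.inl _ => v
      | Sum.inr (e, _) => if eA G e = v then eB G e else eA G e with hφ
    have hedge : ∀ (f : G.edgeSet) (j : Fin (2 - 1)),
        Sum.inr (f, j) ∈ (G.subdivision 2).neighborSet (Sum.inl v) →
        f.1 = s(v, φ (Sum.inr (f, j))) := by
      intro f j hf
      rcases hf with ⟨hv1, -⟩ | ⟨hv1, -⟩
      · have hv1' : v = eA G f := hv1
        rw [hφ]
        simp only
        rw [if_pos hv1'.symm, hv1']
        exact (mk_eA_eB G f).symm
      · have hv1' : v = eB G f := hv1
        rw [hφ]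
        simp only
        rw [if_neg (fun hc => eA_ne_eB G f (hc.trans hv1')), hv1', Sym2.eq_swap]
        exact (mk_eA_eB G f).symm
    have hmaps : Set.MapsTo φ ((G.subdivision 2).neighborSet (Sum.inl v)) (G.neighborSet v) := by
      intro x hx
      rcases x with u | ⟨f, j⟩
      · exact absurd hx.1 (by norm_num)
      · have := hedge f j hx
        show G.Adj v (φ (Sum.inr (f, j)))
        rw [← mem_edgeSet, ← this]
        exact f.2
    have hinj : Set.InjOn φ ((G.subdivision 2).neighborSet (Sum.inl v)) := by
      intro x hx y hy hxy
      rcases x with u | ⟨f, j⟩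
      · exact absurd hx.1 (by norm_num)
      rcases y with u' | ⟨f', j'⟩
      · exact absurd hy.1 (by norm_num)
      have h1 := hedge f j hx
      have h2 := hedge f' j' hy
      have hff : f = f' := Subtype.ext (by rw [h1, h2, hxy])
      subst hff
      have hjj : j = j' := Fin.ext (by have := j.isLt; have := j'.isLt; omega)
      rw [hjj]
    calc ((G.subdivision 2).neighborSet (Sum.inl v)).ncard
        ≤ (G.neighborSet v).ncard := Set.ncard_le_ncard_of_injOn φ hmaps hinj (Set.toFinite _)
      _ = G.degree v := by
          rw [Set.ncard_eq_toFinset_card', ← neighborFinset_def]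
          rfl
      _ ≤ G.maxDegree := G.degree_le_maxDegree v
  · -- internal vertex: at most the two endpoints
    have hsub : (G.subdivision 2).neighborSet (Sum.inr (e, i)) ⊆
        {Sum.inl (eA G e), Sum.inl (eB G e)} := by
      intro x hx
      rcases x with u | ⟨f, j⟩
      · rcases hx with ⟨h1, -⟩ | ⟨h1, -⟩
        · exact Or.inl (by rw [h1]; rfl)
        · exact Or.inr (by rw [h1]; rfl)
      · exfalso
        have h2 := hx.2
        have hi := i.isLt
        have hj := j.isLt
        omega
    calc ((G.subdivision 2).neighborSet (Sum.inr (e, i))).ncard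
        ≤ ({Sum.inl (eA G e), Sum.inl (eB G e)} :
            Set (V ⊕ (G.edgeSet × Fin (2 - 1)))).ncard :=
          Set.ncard_le_ncard hsub (Set.toFinite _)
      _ ≤ 2 := by
          apply le_trans (Set.ncard_insert_le _ _)
          simp
      _ ≤ G.maxDegree := hΔ2

lemma exists_incidence_coloring (hΔ2 : 2 ≤ G.maxDegree) :
    ∃ nn : G.edgeSet → Bool → ℕ,
      (∀ e s, nn e s < G.maxDegree) ∧
      (∀ e, nn e false ≠ nn e true) ∧
      (∀ e f s t, e ≠ f →
        (if s then eB G e else eA G e) = (if t then eB G f else eA G f) →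
        nn e s ≠ nn f t) := by
  classical
  obtain ⟨c, hlt, hprop⟩ := bip_edge_coloring G.maxDegree Sum.isLeft (G.subdivision 2)
    (sub2_side G) (fun w => sub2_deg G w hΔ2)
  have hprop2 : ∀ {a b b'}, (G.subdivision 2).Adj a b → (G.subdivision 2).Adj a b' → b ≠ b' →
      c s(b, a) ≠ c s(b', a) := by
    intro a b b' h1 h2 hne
    have honest := hprop h1 h2 hne
    have e1 : s(b, a) = s(a, b) := Sym2.eq_swap
    have e2 : s(b', a) = s(a, b') := Sym2.eq_swap
    rw [e1, e2]
    exact honest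
  refine ⟨fun e s => c s(Sum.inl (if s then eB G e else eA G e), Sum.inr (e, ⟨0, by norm_num⟩)),
    ?_, ?_, ?_⟩
  · intro e s
    exact hlt (vert_spec G e s)
  · intro e
    dsimp only
    have h1 := (vert_spec G e false).symm
    have h2 := (vert_spec G e true).symm
    exact hprop2 h1 h2 (fun hc => eA_ne_eB G e (by injection hc))
  · intro e f s t hef hvert
    dsimp only
    rw [← hvert]
    have h1 := vert_spec G e s
    have h2 := vert_spec G f t
    rw [← hvert] at h2
    apply hprop h1 h2
    intro hc
    apply hef
    have h3 := Sum.inr.inj hc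
    exact (Prod.ext_iff.mp h3).1

end Incidence

end ChromAux


open ChromAux in
theorem chromatic_two_fourths {V : Type*} [Fintype V] (G : SimpleGraph V)
    [DecidableRel G.Adj] (hG : G.Connected) (hΔ : 3 ≤ G.maxDegree) :
    ((G.subdivision 4).power 2).chromaticNumber = ((G.maxDegree + 1 : ℕ) : ℕ∞) := by
  classical
  obtain ⟨nn, hnlt, hnab, hninj⟩ := exists_incidence_coloring G (by omega)
  -- middle colors avoiding the three forbidden values
  have hmidex : ∀ e : G.edgeSet,
      ∃ γ, γ < G.maxDegree + 1 ∧ γ ≠ 0 ∧ γ ≠ nn e false + 1 ∧ γ ≠ nn e true + 1 := by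
    intro e
    have h1 := hnab e
    refine ⟨if 1 ≠ nn e false + 1 ∧ 1 ≠ nn e true + 1 then 1
      else if 2 ≠ nn e false + 1 ∧ 2 ≠ nn e true + 1 then 2 else 3, ?_⟩
    split_ifs with ha hb
    · exact ⟨by omega, by norm_num, ha.1, ha.2⟩
    · exact ⟨by omega, by norm_num, hb.1, hb.2⟩
    · rw [not_and_or, not_ne_iff, not_ne_iff] at ha hb
      refine ⟨by omega, by norm_num, by omega, by omega⟩
  choose mid hmid1 hmid2 hmid3 hmid4 using hmidex
  -- the coloring
  set C : (V ⊕ (G.edgeSet × Fin (4 - 1))) → ℕ := fun x =>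
    Sum.elim (fun _ => 0)
      (fun p => if (p.2 : ℕ) = 0 then nn p.1 false + 1
        else if (p.2 : ℕ) = 2 then nn p.1 true + 1 else mid p.1) x with hC
  have hCinl : ∀ u : V, C (Sum.inl u) = 0 := fun _ => rfl
  have hCinr : ∀ (e : G.edgeSet) (i : Fin (4 - 1)), C (Sum.inr (e, i)) =
      if (i : ℕ) = 0 then nn e false + 1
      else if (i : ℕ) = 2 then nn e true + 1 else mid e := fun _ _ => rfl
  have hCbound : ∀ x, C x < G.maxDegree + 1 := by
    intro x
    rcases x with u | ⟨e, i⟩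
    · rw [hCinl]; omega
    · rw [hCinr]; split_ifs
      · have := hnlt e false; omega
      · have := hnlt e true; omega
      · exact hmid1 e
  have hC0 : ∀ e i, C (Sum.inr (e, i)) ≠ 0 := by
    intro e i
    rw [hCinr]; split_ifs
    · omega
    · omega
    · exact hmid2 e
  -- properness of C on the square of the 4-subdivision
  have hCprop : ∀ x y, ((G.subdivision 4).power 2).Adj x y → C x ≠ C y := by
    intro x y hxy
    rw [power_two_adj] at hxy
    obtain ⟨hne, hcase⟩ := hxy
    rcases x with u | ⟨e, i⟩ <;> rcases y with v | ⟨f, j⟩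
    · -- two terminal vertices are never adjacent in the square
      exfalso
      rcases hcase with h | ⟨z, h1, h2⟩
      · exact absurd h.1 (by norm_num)
      · rcases z with w | ⟨g, l⟩
        · exact absurd h1.1 (by norm_num)
        · have hne' : u ≠ v := fun h => hne (by rw [h])
          rcases h1 with ⟨hu1, hl1⟩ | ⟨hu1, hl1⟩ <;> rcases h2 with ⟨hv1, hl2⟩ | ⟨hv1, hl2⟩
          · exact hne' (hu1.trans hv1.symm)
          · omega
          · omega
          · exact hne' (hu1.trans hv1.symm)
    · rw [hCinl]; exact fun h => hC0 f j h.symm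
    · rw [hCinl]; exact hC0 e i
    · by_cases hef : e = f
      · subst hef
        have hij : (i : ℕ) ≠ (j : ℕ) := fun h => hne (by rw [show i = j from Fin.ext h])
        rw [hCinr, hCinr]
        have hi := i.isLt
        have hj := j.isLt
        have hA := hnab e
        have h2 := hmid2 e
        have h3 := hmid3 e
        have h4 := hmid4 e
        split_ifs <;> omega
      · -- different edges: the common neighbour must be a terminal vertex
        have key : ∃ st : Bool × Bool,
            (if st.1 then eB G e else eA G e) = (if st.2 then eB G f else eA G f) ∧
            C (Sum.inr (e, i)) = nn e st.1 + 1 ∧ C (Sum.inr (f, j)) = nn f st.2 + 1 := by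
          rcases hcase with h | ⟨z, h1, h2⟩
          · exact absurd h.1 hef
          · rcases z with w | ⟨g, l⟩
            swap
            · exact absurd (h1.1.trans h2.1) hef
            · rcases h1 with ⟨hw1, hi1⟩ | ⟨hw1, hi1⟩ <;>
                rcases h2 with ⟨hw2, hj1⟩ | ⟨hw2, hj1⟩
              · refine ⟨(false, false), ?_, ?_, ?_⟩
                · show eA G e = eA G f
                  have hw1' : w = eA G e := hw1
                  have hw2' : w = eA G f := hw2
                  rw [← hw1', ← hw2']
                · rw [hCinr, if_pos hi1]
                · rw [hCinr, if_pos hj1]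
              · refine ⟨(false, true), ?_, ?_, ?_⟩
                · show eA G e = eB G f
                  have hw1' : w = eA G e := hw1
                  have hw2' : w = eB G f := hw2
                  rw [← hw1', ← hw2']
                · rw [hCinr, if_pos hi1]
                · rw [hCinr, if_neg (by omega), if_pos hj1]
              · refine ⟨(true, false), ?_, ?_, ?_⟩
                · show eB G e = eA G f
                  have hw1' : w = eB G e := hw1
                  have hw2' : w = eA G f := hw2
                  rw [← hw1', ← hw2']
                · rw [hCinr, if_neg (by omega), if_pos hi1]
                · rw [hCinr, if_pos hj1]
              · refine ⟨(true, true), ?_, ?_, ?_⟩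
                · show eB G e = eB G f
                  have hw1' : w = eB G e := hw1
                  have hw2' : w = eB G f := hw2
                  rw [← hw1', ← hw2']
                · rw [hCinr, if_neg (by omega), if_pos hi1]
                · rw [hCinr, if_neg (by omega), if_pos hj1]
        obtain ⟨st, hvert, hCx, hCy⟩ := key
        rw [hCx, hCy]
        have := hninj e f st.1 st.2 hef hvert
        omega
  -- upper bound: colorable with Δ+1 colors
  have hcol : ((G.subdivision 4).power 2).Colorable (G.maxDegree + 1) :=
    ⟨Coloring.mk (fun x => (⟨C x, hCbound x⟩ : Fin (G.maxDegree + 1)))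
      (fun {a b} hab hcc => hCprop a b hab (congrArg Fin.val hcc))⟩
  -- lower bound: not colorable with Δ colors
  have hnonempty : Nonempty V := hG.nonempty
  obtain ⟨v, hv⟩ := G.exists_maximal_degree_vertex
  have hnotcol : ¬ ((G.subdivision 4).power 2).Colorable G.maxDegree := by
    rintro ⟨D⟩
    set ν : V → (V ⊕ (G.edgeSet × Fin (4 - 1))) := fun w =>
      if h : G.Adj v w then
        Sum.inr (⟨s(v, w), h⟩,
          if eA G ⟨s(v, w), h⟩ = v then (⟨0, by norm_num⟩ : Fin (4 - 1))
          else ⟨2, by norm_num⟩)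
      else Sum.inl v with hν
    have hν1 : ∀ w (h : G.Adj v w), (G.subdivision 4).Adj (Sum.inl v) (ν w) := by
      intro w h
      rw [hν]
      simp only [dif_pos h]
      by_cases he : eA G ⟨s(v, w), h⟩ = v
      · rw [if_pos he]
        exact Or.inl ⟨he.symm, rfl⟩
      · rw [if_neg he]
        refine Or.inr ⟨?_, rfl⟩
        rcases eq_eA_or_eB G ⟨s(v, w), h⟩ (Sym2.mem_mk_left v w) with h1 | h1
        · exact absurd h1.symm he
        · exact h1
    have hν2 : ∀ w, G.Adj v w → ∃ (e : G.edgeSet) (i : Fin (4 - 1)),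
        ν w = Sum.inr (e, i) ∧ e.1 = s(v, w) := by
      intro w h
      rw [hν]
      simp only [dif_pos h]
      exact ⟨_, _, rfl, rfl⟩
    have hinj : Set.InjOn (fun w => D (ν w)) ↑(G.neighborFinset v) := by
      intro w1 hw1 w2 hw2 heq
      rw [Finset.mem_coe, mem_neighborFinset] at hw1 hw2
      by_contra hww
      obtain ⟨e1, i1, hv1, he1⟩ := hν2 w1 hw1
      obtain ⟨e2, i2, hv2, he2⟩ := hν2 w2 hw2
      have hνne : ν w1 ≠ ν w2 := by
        rw [hv1, hv2]
        intro hc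
        have h3 := Sum.inr.inj hc
        have he12 : e1 = e2 := (Prod.ext_iff.mp h3).1
        apply hww
        have h4 : s(v, w1) = s(v, w2) := by rw [← he1, ← he2, he12]
        exact Sym2.congr_right.mp h4
      have hPadj : ((G.subdivision 4).power 2).Adj (ν w1) (ν w2) := by
        rw [power_two_adj]
        exact ⟨hνne, Or.inr ⟨Sum.inl v, (hν1 w1 hw1).symm, hν1 w2 hw2⟩⟩
      exact D.valid hPadj heq
    have hnotin : ∀ w ∈ G.neighborFinset v, D (ν w) ≠ D (Sum.inl v) := by
      intro w hw
      rw [mem_neighborFinset] at hw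
      have hPadj : ((G.subdivision 4).power 2).Adj (Sum.inl v) (ν w) := by
        rw [power_two_adj]
        refine ⟨?_, Or.inl (hν1 w hw)⟩
        obtain ⟨e1, i1, hv1, -⟩ := hν2 w hw
        rw [hv1]
        exact fun hc => by simp at hc
      exact fun hc => D.valid hPadj hc.symm
    have hcard : ((G.neighborFinset v).image (fun w => D (ν w))).card = G.maxDegree := by
      rw [Finset.card_image_of_injOn hinj]
      exact hv.symm
    have hnot2 : D (Sum.inl v) ∉ (G.neighborFinset v).image (fun w => D (ν w)) := by
      rw [Finset.mem_image]
      rintro ⟨w, hw, hc⟩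
      exact hnotin w hw hc
    have hins := Finset.card_insert_of_notMem hnot2
    have hle := Finset.card_le_univ
      (insert (D (Sum.inl v)) ((G.neighborFinset v).image (fun w => D (ν w))))
    rw [hins, hcard] at hle
    simp only [Finset.card_univ, Fintype.card_fin] at hle
    omega
  -- conclusion
  have h1 : ((G.subdivision 4).power 2).chromaticNumber ≤ ((G.maxDegree + 1 : ℕ) : ℕ∞) :=
    hcol.chromaticNumber_le
  have h2 : ¬ (((G.subdivision 4).power 2).chromaticNumber ≤ ((G.maxDegree : ℕ) : ℕ∞)) :=
    fun h => hnotcol (chromaticNumber_le_iff_colorable.mp h)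
  refine le_antisymm h1 ?_
  have h3 : ((G.maxDegree : ℕ) : ℕ∞) < ((G.subdivision 4).power 2).chromaticNumber :=
    not_le.mp h2
  have h4 : ((G.maxDegree : ℕ) : ℕ∞) + 1 ≤ ((G.subdivision 4).power 2).chromaticNumber :=
    Order.add_one_le_of_lt h3
  calc ((G.maxDegree + 1 : ℕ) : ℕ∞) = ((G.maxDegree : ℕ) : ℕ∞) + 1 := by push_cast; rfl
    _ ≤ _ := h4
end
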